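/- arXiv:1705.04422 — 10 statements merged into one kernel-verified Lean document; each statement's English description precedes it below -/
import Mathlib

section
/- Let κ be a regular uncountable cardinal, let γ ≤ κ be an ordinal, and let ⟨μ_α : α < γ⟩ be a sequence of pairwise distinct normal measures on κ. Then there is a sequence ⟨X_α : α < γ⟩ of pairwise disjoint subsets of κ such that for all α, β < γ one has X_α ∈ μ_β if and only if α = β. -/
/-- A *normal measure* on (the set of ordinals below) `κ`: an ultrafilter on `κ`
that is proper, uniform (contains all final segments of `κ`) and normal
(closed under diagonal intersections). -/
structure NormalMeasure (κ : Ordinal) where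
  sets : Set (Set Ordinal)
  sets_subset : ∀ X ∈ sets, X ⊆ Set.Iio κ
  univ_mem : Set.Iio κ ∈ sets
  empty_not_mem : ∅ ∉ sets
  superset_mem : ∀ X ∈ sets, ∀ Y, X ⊆ Y → Y ⊆ Set.Iio κ → Y ∈ sets
  inter_mem : ∀ X ∈ sets, ∀ Y ∈ sets, X ∩ Y ∈ sets
  ultra : ∀ X, X ⊆ Set.Iio κ → X ∈ sets ∨ Set.Iio κ \ X ∈ sets
  uniform : ∀ α < κ, {ξ : Ordinal | α ≤ ξ ∧ ξ < κ} ∈ sets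
  normal : ∀ f : Ordinal → Set Ordinal, (∀ α < κ, f α ∈ sets) →
      {ξ : Ordinal | ξ < κ ∧ ∀ α < ξ, ξ ∈ f α} ∈ sets

lemma NormalMeasure.ext' {κ : Ordinal} {m n : NormalMeasure κ}
    (h : m.sets = n.sets) : m = n := by
  cases m; cases n; simp only at h; subst h; rfl

/-- If `κ` is a regular uncountable cardinal, `γ ≤ κ` an ordinal and
`⟨μ_α : α < γ⟩` a sequence of pairwise distinct normal measures on `κ`, then there
is a sequence `⟨X_α : α < γ⟩` of pairwise disjoint subsets of `κ` such that
`X_α ∈ μ_β` if and only if `α = β`. -/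
theorem stmt0 (c : Cardinal) (hreg : c.IsRegular) (hunc : Cardinal.aleph0 < c)
    (γ : Ordinal) (hγ : γ ≤ c.ord)
    (μ : Ordinal → NormalMeasure c.ord)
    (hdist : ∀ α < γ, ∀ β < γ, α ≠ β → μ α ≠ μ β) :
    ∃ X : Ordinal → Set Ordinal,
      (∀ α < γ, X α ⊆ Set.Iio c.ord) ∧
      (∀ α < γ, ∀ β < γ, α ≠ β → X α ∩ X β = ∅) ∧
      (∀ α < γ, ∀ β < γ, (X α ∈ (μ β).sets ↔ α = β)) := by
  have hlim : Order.IsSuccLimit (Cardinal.ord c) := Cardinal.isSuccLimit_ord hunc.le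
  -- separation of two distinct measures
  have sep : ∀ α < γ, ∀ β < γ, α ≠ β → ∃ Z : Set Ordinal,
      Z ⊆ Set.Iio c.ord ∧ Z ∈ (μ α).sets ∧ (Set.Iio c.ord \ Z) ∈ (μ β).sets := by
    intro α hα β hβ hne
    have hμ : (μ α).sets ≠ (μ β).sets := fun h => hdist α hα β hβ hne (NormalMeasure.ext' h)
    obtain ⟨Z, hZ⟩ : ∃ Z : Set Ordinal, ¬ (Z ∈ (μ α).sets ↔ Z ∈ (μ β).sets) := by
      by_contra h
      push_neg at h
      exact hμ (Set.ext h)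
    by_cases h1 : Z ∈ (μ α).sets
    · have h2 : Z ∉ (μ β).sets := fun h2 => hZ ⟨fun _ => h2, fun _ => h1⟩
      have hsub : Z ⊆ Set.Iio c.ord := (μ α).sets_subset Z h1
      rcases (μ β).ultra Z hsub with h | h
      · exact absurd h h2
      · exact ⟨Z, hsub, h1, h⟩
    · have h2 : Z ∈ (μ β).sets := by
        by_contra h2
        exact hZ ⟨fun h => absurd h h1, fun h => absurd h h2⟩
      rename_i _
      have h1' := h1
      have h1 := h2
      have h2 := h1'
      have hsub : Z ⊆ Set.Iio c.ord := (μ β).sets_subset Z h1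
      have hW : (Set.Iio c.ord \ Z) ∈ (μ α).sets := by
        rcases (μ α).ultra Z hsub with h | h
        · exact absurd h h2
        · exact h
      refine ⟨Set.Iio c.ord \ Z, Set.diff_subset, hW, ?_⟩
      refine (μ β).superset_mem Z h1 _ ?_ Set.diff_subset
      intro x hx
      exact ⟨hsub hx, fun hx' => hx'.2 hx⟩
  have key : ∀ α β : Ordinal, ∃ Z : Set Ordinal, α < γ → β < γ → α < β →
      Z ⊆ Set.Iio c.ord ∧ Z ∈ (μ α).sets ∧ (Set.Iio c.ord \ Z) ∈ (μ β).sets := by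
    intro α β
    by_cases h : α < γ ∧ β < γ ∧ α < β
    · obtain ⟨Z, hZ⟩ := sep α h.1 β h.2.1 (ne_of_lt h.2.2)
      exact ⟨Z, fun _ _ _ => hZ⟩
    · exact ⟨∅, fun h1 h2 h3 => absurd ⟨h1, h2, h3⟩ h⟩
  choose S hS using key
  set A : Ordinal → Ordinal → Set Ordinal :=
    fun α β => if α < β then S α β else Set.Iio c.ord \ S β α with hAdef
  -- membership property
  have hA1 : ∀ α < γ, ∀ β < γ, α ≠ β → A α β ∈ (μ α).sets := by
    intro α hα β hβ hne
    rcases lt_or_gt_of_ne hne with h | h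
    · simpa [hAdef, h] using (hS α β hα hβ h).2.1
    · simpa [hAdef, not_lt_of_gt h] using (hS β α hβ hα h).2.2
  -- disjointness property
  have hA2 : ∀ α β : Ordinal, α ≠ β → ∀ ξ, ξ ∈ A α β → ξ ∈ A β α → False := by
    intro α β hne ξ h1 h2
    rcases lt_or_gt_of_ne hne with h | h
    · simp only [hAdef, if_pos h, if_neg (not_lt_of_gt h)] at h1 h2
      exact h2.2 h1
    · simp only [hAdef, if_pos h, if_neg (not_lt_of_gt h)] at h1 h2
      exact h1.2 h2
  -- the sets
  refine ⟨fun α => {ξ : Ordinal | α + 1 ≤ ξ ∧ ξ < c.ord} ∩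
      {ξ : Ordinal | ξ < c.ord ∧ ∀ β < ξ, ξ ∈
        (if β < γ ∧ β ≠ α then A α β else Set.Iio c.ord)}, ?_, ?_, ?_⟩
  · intro α _ ξ hξ
    exact hξ.1.2
  · -- pairwise disjoint
    intro α hα β hβ hne
    ext ξ
    simp only [Set.mem_inter_iff, Set.mem_setOf_eq, Set.mem_empty_iff_false, iff_false]
    rintro ⟨⟨⟨hα1, _⟩, _, hf1⟩, ⟨hβ1, _⟩, _, hf2⟩
    have hβξ : β < ξ := lt_of_lt_of_le (lt_add_one β) hβ1
    have hαξ : α < ξ := lt_of_lt_of_le (lt_add_one α) hα1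
    have m1 := hf1 β hβξ
    have m2 := hf2 α hαξ
    rw [if_pos ⟨hβ, fun h => hne h.symm⟩] at m1
    rw [if_pos ⟨hα, hne⟩] at m2
    exact hA2 α β hne ξ m1 m2
  · -- membership iff
    have hmem : ∀ α < γ, ({ξ : Ordinal | α + 1 ≤ ξ ∧ ξ < c.ord} ∩
        {ξ : Ordinal | ξ < c.ord ∧ ∀ β < ξ, ξ ∈
          (if β < γ ∧ β ≠ α then A α β else Set.Iio c.ord)}) ∈ (μ α).sets := by
      intro α hα
      have hα1 : α + 1 < c.ord := hlim.succ_lt (lt_of_lt_of_le hα hγ)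
      have u1 := (μ α).uniform (α + 1) hα1
      have u2 := (μ α).normal
        (fun β => if β < γ ∧ β ≠ α then A α β else Set.Iio c.ord)
        (by
          intro β _
          by_cases h : β < γ ∧ β ≠ α
          · rw [if_pos h]
            exact hA1 α hα β h.1 (fun he => h.2 he.symm)
          · rw [if_neg h]
            exact (μ α).univ_mem)
      exact (μ α).inter_mem _ u1 _ u2
    intro α hα β hβ
    constructor
    · intro hXμ
      by_contra hne
      have hXβ := hmem β hβ
      have hint := (μ β).inter_mem _ hXμ _ hXβ
      have hempty : ({ξ : Ordinal | α + 1 ≤ ξ ∧ ξ < c.ord} ∩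
          {ξ : Ordinal | ξ < c.ord ∧ ∀ δ < ξ, ξ ∈
            (if δ < γ ∧ δ ≠ α then A α δ else Set.Iio c.ord)}) ∩
          ({ξ : Ordinal | β + 1 ≤ ξ ∧ ξ < c.ord} ∩
          {ξ : Ordinal | ξ < c.ord ∧ ∀ δ < ξ, ξ ∈
            (if δ < γ ∧ δ ≠ β then A β δ else Set.Iio c.ord)}) = ∅ := by
        ext ξ
        simp only [Set.mem_inter_iff, Set.mem_setOf_eq, Set.mem_empty_iff_false, iff_false]
        rintro ⟨⟨⟨hα1, _⟩, _, hf1⟩, ⟨hβ1, _⟩, _, hf2⟩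
        have hβξ : β < ξ := lt_of_lt_of_le (lt_add_one β) hβ1
        have hαξ : α < ξ := lt_of_lt_of_le (lt_add_one α) hα1
        have m1 := hf1 β hβξ
        have m2 := hf2 α hαξ
        rw [if_pos ⟨hβ, fun h => hne h.symm⟩] at m1
        rw [if_pos ⟨hα, hne⟩] at m2
        exact hA2 α β hne ξ m1 m2
      rw [hempty] at hint
      exact (μ β).empty_not_mem hint
    · rintro rfl
      exact hmem α hα
end

section
/- Let κ be a regular uncountable cardinal and let γ ≤ κ be an ordinal. Then the following are equivalent: (i) there is a function ℓ : κ → κ such that for every α < γ there is a normal measure U on κ with {ξ < κ : ℓ(ξ) = α} ∈ U; (ii) there exist at least |γ| many pairwise distinct normal measures on κ. -/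
lemma NormalMeasure.ext'_s1 {κ : Ordinal} {U V : NormalMeasure κ}
    (h : U.sets = V.sets) : U = V := by
  cases U; cases V; simp only at h; subst h; rfl

/-- Two distinct normal measures are separated by a set and its complement. -/
lemma NormalMeasure.sep {κ : Ordinal} {U V : NormalMeasure κ} (h : U ≠ V) :
    ∃ X, X ⊆ Set.Iio κ ∧ X ∈ U.sets ∧ Set.Iio κ \ X ∈ V.sets := by
  have hne : U.sets ≠ V.sets := fun e => h (NormalMeasure.ext'_s1 e)
  have : ∃ X, (X ∈ U.sets ∧ X ∉ V.sets) ∨ (X ∉ U.sets ∧ X ∈ V.sets) := by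
    by_contra hc
    push_neg at hc
    exact hne (Set.ext fun X => by have := hc X; tauto)
  obtain ⟨X, hX⟩ := this
  rcases hX with ⟨h1, h2⟩ | ⟨h1, h2⟩
  · have hsub : X ⊆ Set.Iio κ := U.sets_subset X h1
    rcases V.ultra X hsub with h3 | h3
    · exact absurd h3 h2
    · exact ⟨X, hsub, h1, h3⟩
  · have hsub : X ⊆ Set.Iio κ := V.sets_subset X h2
    rcases U.ultra X hsub with h3 | h3
    · exact absurd h3 h1
    · refine ⟨Set.Iio κ \ X, Set.diff_subset, h3, ?_⟩
      rwa [Set.diff_diff_cancel_left hsub]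

/-- For a regular uncountable cardinal `κ` and an ordinal `γ ≤ κ`, the following are
equivalent: (i) there is a function `ℓ : κ → κ` such that every `α < γ` is guessed,
i.e. `{ξ < κ : ℓ ξ = α}` belongs to some normal measure on `κ`; (ii) there are at
least `|γ|` many pairwise distinct normal measures on `κ`. -/
theorem stmt1 (c : Cardinal) (hreg : c.IsRegular) (hunc : Cardinal.aleph0 < c)
    (γ : Ordinal) (hγ : γ ≤ c.ord) :
    (∃ ℓ : Ordinal → Ordinal, (∀ ξ < c.ord, ℓ ξ < c.ord) ∧
        ∀ α < γ, ∃ U : NormalMeasure c.ord,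
          {ξ : Ordinal | ξ < c.ord ∧ ℓ ξ = α} ∈ U.sets) ↔
      (∃ μ : {α : Ordinal // α < γ} → NormalMeasure c.ord, Function.Injective μ) := by
  set κ := c.ord with hκ
  have hκlim : Order.IsSuccLimit κ := Cardinal.isSuccLimit_ord hreg.aleph0_le
  have hκ0 : (0 : Ordinal) < κ := hκlim.bot_lt
  constructor
  · -- (i) → (ii)
    rintro ⟨ℓ, -, hguess⟩
    refine ⟨fun a => (hguess a.1 a.2).choose, ?_⟩
    intro a b hab
    by_contra hne
    have hne' : a.1 ≠ b.1 := fun e => hne (Subtype.ext e)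
    have hab' : (hguess a.1 a.2).choose = (hguess b.1 b.2).choose := hab
    have ha := (hguess a.1 a.2).choose_spec
    have hb := (hguess b.1 b.2).choose_spec
    rw [← hab'] at hb
    have hint := (hguess a.1 a.2).choose.inter_mem _ ha _ hb
    have hzero : ({ξ : Ordinal | ξ < κ ∧ ℓ ξ = a.1} ∩ {ξ : Ordinal | ξ < κ ∧ ℓ ξ = b.1})
        = (∅ : Set Ordinal) := by
      ext ξ
      simp only [Set.mem_inter_iff, Set.mem_setOf_eq, Set.mem_empty_iff_false, iff_false]
      rintro ⟨⟨-, h1⟩, -, h2⟩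
      exact hne' (h1 ▸ h2 ▸ rfl)
    rw [hzero] at hint
    exact (hguess a.1 a.2).choose.empty_not_mem hint
  · -- (ii) → (i)
    rintro ⟨μ, hμ⟩
    have hsep : ∀ a b : {α : Ordinal // α < γ}, a ≠ b →
        ∃ X, X ⊆ Set.Iio κ ∧ X ∈ (μ a).sets ∧ Set.Iio κ \ X ∈ (μ b).sets :=
      fun a b hab => NormalMeasure.sep (fun e => hab (hμ e))
    classical
    set D : {α : Ordinal // α < γ} → {α : Ordinal // α < γ} → Set Ordinal :=
      fun a b =>
        if h : a ≠ b ∧ a.1 < b.1 then (hsep a b h.1).choose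
        else if h : b ≠ a ∧ b.1 < a.1 then Set.Iio κ \ (hsep b a h.1).choose
        else ∅ with hD
    have hDmem : ∀ a b, a ≠ b → D a b ∈ (μ a).sets := by
      intro a b hab
      simp only [hD]
      split_ifs with h1 h2
      · exact (hsep a b h1.1).choose_spec.2.1
      · exact (hsep b a h2.1).choose_spec.2.2
      · push_neg at h1 h2
        exact absurd (Subtype.ext (le_antisymm (h2 (fun e => hab e.symm)) (h1 hab))) hab
    have hDdisj : ∀ a b : {α : Ordinal // α < γ}, a ≠ b →
        ∀ ξ, ξ ∈ D a b → ξ ∈ D b a → False := by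
      have key : ∀ a b : {α : Ordinal // α < γ}, a ≠ b → a.1 < b.1 →
          ∀ ξ, ξ ∈ D a b → ξ ∈ D b a → False := by
        intro a b hab h ξ h1 h2
        have hc1 : a ≠ b ∧ a.1 < b.1 := ⟨hab, h⟩
        have hc2 : ¬(b ≠ a ∧ b.1 < a.1) := fun hc => absurd hc.2 (asymm h)
        simp only [hD] at h1 h2
        rw [dif_pos hc1] at h1
        rw [dif_neg hc2, dif_pos hc1] at h2
        exact h2.2 h1
      intro a b hab ξ h1 h2
      rcases lt_trichotomy a.1 b.1 with h | h | h
      · exact key a b hab h ξ h1 h2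
      · exact hab (Subtype.ext h)
      · exact key b a (fun e => hab e.symm) h ξ h2 h1
    set A : {α : Ordinal // α < γ} → Set Ordinal :=
      fun a => {ξ | a.1 < ξ ∧ ξ < κ ∧ ∀ β (hβ1 : β < ξ) (hβ2 : β < γ),
        (⟨β, hβ2⟩ : {α : Ordinal // α < γ}) ≠ a → ξ ∈ D a ⟨β, hβ2⟩} with hA
    have hAsub : ∀ a, A a ⊆ Set.Iio κ := fun a ξ hξ => hξ.2.1
    have hAmem : ∀ a, A a ∈ (μ a).sets := by
      intro a
      set f : Ordinal → Set Ordinal := fun β =>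
        if h : β < γ then
          (if hne : (⟨β, h⟩ : {α : Ordinal // α < γ}) ≠ a then D a ⟨β, h⟩ else Set.Iio κ)
        else Set.Iio κ with hf
      have hfm : ∀ β < κ, f β ∈ (μ a).sets := by
        intro β _
        simp only [hf]
        split_ifs with h hne
        · exact hDmem a ⟨β, h⟩ hne.symm
        · exact (μ a).univ_mem
        · exact (μ a).univ_mem
      have hN := (μ a).normal f hfm
      have hsucc : a.1 + 1 < κ := by
        have h1 : a.1 < κ := lt_of_lt_of_le a.2 hγ
        simpa [Order.succ_eq_add_one] using hκlim.succ_lt h1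
      have hU := (μ a).uniform (a.1 + 1) hsucc
      have hint := (μ a).inter_mem _ hN _ hU
      refine (μ a).superset_mem _ hint _ ?_ (hAsub a)
      rintro ξ ⟨⟨hξκ, hdiag⟩, hle, -⟩
      have haξ : a.1 < ξ := by
        have h2 : a.1 < a.1 + 1 := by
          simpa [Order.succ_eq_add_one] using Order.lt_succ a.1
        exact lt_of_lt_of_le h2 hle
      refine ⟨haξ, hξκ, ?_⟩
      intro β hβ1 hβ2 hne
      have hdβ := hdiag β hβ1
      simp only [hf] at hdβ
      rw [dif_pos hβ2, dif_pos hne] at hdβ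
      exact hdβ
    have hAdisj : ∀ a b : {α : Ordinal // α < γ}, a ≠ b →
        ∀ ξ, ξ ∈ A a → ξ ∈ A b → False := by
      intro a b hab ξ ha hb
      have h1 : ξ ∈ D a b := ha.2.2 b.1 hb.1 b.2 (fun e => hab (Subtype.ext
        (congrArg Subtype.val e)).symm)
      have h2 : ξ ∈ D b a := hb.2.2 a.1 ha.1 a.2 (fun e => hab (Subtype.ext
        (congrArg Subtype.val e)))
      exact hDdisj a b hab ξ h1 h2
    set ℓ : Ordinal → Ordinal := fun ξ =>
      if h : ∃ a : {α : Ordinal // α < γ}, ξ ∈ A a then h.choose.1 else 0 with hℓ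
    refine ⟨ℓ, ?_, ?_⟩
    · intro ξ _
      simp only [hℓ]
      split_ifs with h
      · exact lt_of_lt_of_le h.choose.2 hγ
      · exact hκ0
    · intro α hα
      refine ⟨μ ⟨α, hα⟩, ?_⟩
      refine (μ ⟨α, hα⟩).superset_mem _ (hAmem ⟨α, hα⟩) _ ?_ (fun ξ hξ => hξ.1)
      intro ξ hξ
      refine ⟨hAsub _ hξ, ?_⟩
      have hex : ∃ a : {α : Ordinal // α < γ}, ξ ∈ A a := ⟨⟨α, hα⟩, hξ⟩
      have hch : hex.choose = ⟨α, hα⟩ := by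
        by_contra hne
        exact hAdisj hex.choose ⟨α, hα⟩ hne ξ hex.choose_spec hξ
      simp only [hℓ]
      rw [dif_pos hex, hch]
end

section
/- Let κ be a regular uncountable cardinal and let A be a set of subsets of κ with |A| ≤ κ. Then the following are equivalent: (i) there is a function ℓ : κ → 𝒫(κ) such that for every a ∈ A there is a normal measure U on κ with {ξ < κ : ℓ(ξ) = a ∩ ξ} ∈ U; (ii) there exist at least |A| many pairwise distinct normal measures on κ. -/
namespace NormalMeasure

theorem ext'_s2 {κ : Ordinal} {U V : NormalMeasure κ} (h : U.sets = V.sets) : U = V := by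
  cases U; cases V; simpa using h

/-- From two distinct normal measures, extract a separating set. -/
theorem separating {κ : Ordinal} {U V : NormalMeasure κ} (h : U ≠ V) :
    ∃ X, X ⊆ Set.Iio κ ∧ X ∈ U.sets ∧ Set.Iio κ \ X ∈ V.sets := by
  have hsets : U.sets ≠ V.sets := fun hs => h (ext'_s2 hs)
  have hex : ∃ X, (X ∈ U.sets ∧ X ∉ V.sets) ∨ (X ∈ V.sets ∧ X ∉ U.sets) := by
    by_contra hc
    push_neg at hc
    apply hsets
    ext X
    have h1 := (hc X).1
    have h2 := (hc X).2
    tauto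
  obtain ⟨X, hX | hX⟩ := hex
  · have hsub := U.sets_subset X hX.1
    rcases V.ultra X hsub with hv | hv
    · exact absurd hv hX.2
    · exact ⟨X, hsub, hX.1, hv⟩
  · have hsub := V.sets_subset X hX.1
    rcases U.ultra X hsub with hu | hu
    · exact absurd hu hX.2
    · refine ⟨Set.Iio κ \ X, Set.diff_subset, hu, ?_⟩
      rw [Set.diff_diff_cancel_left hsub]
      exact hX.1

/-- Two sets in a normal measure cannot be disjoint. -/
theorem inter_ne_empty {κ : Ordinal} (U : NormalMeasure κ) {X Y : Set Ordinal}
    (hX : X ∈ U.sets) (hY : Y ∈ U.sets) : X ∩ Y ≠ ∅ := fun h =>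
  U.empty_not_mem (h ▸ U.inter_mem X hX Y hY)

end NormalMeasure

/-- Given injectively-indexed normal measures `μ a` (for `a : A`) on a limit `κ`, and an
injective ordinal labelling `e` of `A` below `κ`, there is a family of pairwise disjoint
sets `Y a ∈ (μ a).sets`. -/
theorem exists_disjoint_family {κ : Ordinal} (hκ : ∀ β < κ, β + 1 < κ)
    {A : Set (Set Ordinal)} (μ : A → NormalMeasure κ) (hμ : Function.Injective μ)
    (e : A → Ordinal) (he : ∀ a, e a < κ) (heinj : Function.Injective e) :
    ∃ Y : A → Set Ordinal, (∀ a, Y a ∈ (μ a).sets) ∧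
      (∀ a b : A, ∀ ξ, ξ ∈ Y a → ξ ∈ Y b → a = b) := by
  classical
  have hone : ∀ β ξ : Ordinal, β + 1 ≤ ξ ↔ β < ξ := fun β ξ => by
    rw [Ordinal.add_one_eq_succ, Order.succ_le_iff]
  have hsep : ∀ a b : A, a ≠ b →
      ∃ X, X ⊆ Set.Iio κ ∧ X ∈ (μ a).sets ∧ Set.Iio κ \ X ∈ (μ b).sets :=
    fun a b h => NormalMeasure.separating (fun hm => h (hμ hm))
  choose sep hsep1 hsep2 hsep3 using hsep
  set X' : A → A → Set Ordinal := fun a b =>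
    if h : a ≠ b ∧ e a < e b then sep a b h.1
    else if h' : b ≠ a ∧ e b < e a then Set.Iio κ \ sep b a h'.1
    else ∅ with hX'
  have hX'sub : ∀ a b, X' a b ⊆ Set.Iio κ := by
    intro a b
    simp only [hX']
    split_ifs with h h'
    · exact hsep1 a b h.1
    · exact Set.diff_subset
    · exact Set.empty_subset _
  have hX'mem : ∀ a b, a ≠ b → X' a b ∈ (μ a).sets := by
    intro a b hab
    simp only [hX']
    rcases lt_trichotomy (e a) (e b) with hlt | heq | hgt
    · rw [dif_pos ⟨hab, hlt⟩]; exact hsep2 a b hab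
    · exact absurd (heinj heq) hab
    · rw [dif_neg (fun h => absurd h.2 (not_lt_of_gt hgt)), dif_pos ⟨hab.symm, hgt⟩]
      exact hsep3 b a hab.symm
  have hX'disj : ∀ a b, a ≠ b → X' a b ∩ X' b a = ∅ := by
    have key : ∀ p q : A, p ≠ q → e p < e q → X' p q ∩ X' q p = ∅ := by
      intro p q hpq hlt
      simp only [hX']
      rw [dif_pos ⟨hpq, hlt⟩, dif_neg (fun h => absurd h.2 (not_lt_of_gt hlt)),
        dif_pos ⟨hpq, hlt⟩]
      exact Set.inter_diff_self _ _
    intro a b hab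
    rcases lt_trichotomy (e a) (e b) with hlt | heq | hgt
    · exact key a b hab hlt
    · exact absurd (heinj heq) hab
    · rw [Set.inter_comm]; exact key b a hab.symm hgt
  set f : A → Ordinal → Set Ordinal := fun a β =>
    {ξ : Ordinal | ξ < κ ∧ ∀ b : A, b ≠ a → e b = β → ξ ∈ X' a b} with hf
  have hfmem : ∀ a, ∀ β < κ, f a β ∈ (μ a).sets := by
    intro a β _
    by_cases hb : ∃ b : A, b ≠ a ∧ e b = β
    · obtain ⟨b, hba, hbe⟩ := hb
      have heqset : f a β = X' a b := by
        ext ξ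
        simp only [hf, Set.mem_setOf_eq]
        constructor
        · rintro ⟨-, h⟩; exact h b hba hbe
        · intro h
          refine ⟨hX'sub a b h, fun b' hb'a hb'e => ?_⟩
          have : b' = b := heinj (hb'e.trans hbe.symm)
          rwa [this]
      rw [heqset]
      exact hX'mem a b (Ne.symm hba)
    · have heqset : f a β = Set.Iio κ := by
        ext ξ
        simp only [hf, Set.mem_setOf_eq, Set.mem_Iio]
        exact ⟨fun h => h.1, fun h => ⟨h, fun b hba hbe => absurd ⟨b, hba, hbe⟩ hb⟩⟩
      rw [heqset]
      exact (μ a).univ_mem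
  refine ⟨fun a => {ξ : Ordinal | ξ < κ ∧ ∀ β < ξ, ξ ∈ f a β} ∩
      {ξ : Ordinal | e a + 1 ≤ ξ ∧ ξ < κ}, fun a => ?_, ?_⟩
  · exact (μ a).inter_mem _ ((μ a).normal (f a) (hfmem a)) _
      ((μ a).uniform (e a + 1) (hκ _ (he a)))
  · intro a b ξ ha hb
    by_contra hab
    obtain ⟨⟨-, ha2⟩, ha3, -⟩ := ha
    obtain ⟨⟨-, hb2⟩, hb3, -⟩ := hb
    have hbξ : e b < ξ := (hone _ _).mp hb3
    have haξ : e a < ξ := (hone _ _).mp ha3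
    have h1 : ξ ∈ f a (e b) := ha2 (e b) hbξ
    have h2 : ξ ∈ f b (e a) := hb2 (e a) haξ
    simp only [hf, Set.mem_setOf_eq] at h1 h2
    have hm1 : ξ ∈ X' a b := h1.2 b (Ne.symm hab) rfl
    have hm2 : ξ ∈ X' b a := h2.2 a hab rfl
    have : ξ ∈ X' a b ∩ X' b a := ⟨hm1, hm2⟩
    rw [hX'disj a b hab] at this
    exact this

/-- For a regular uncountable cardinal `κ` and a family `A` of at most `κ` many subsets
of `κ`, the following are equivalent: (i) there is an `A`-guessing measurable Laver
function `ℓ : κ → 𝒫(κ)`, i.e. for each `a ∈ A` the guessing set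
`{ξ < κ : ℓ ξ = a ∩ ξ}` belongs to some normal measure on `κ`; (ii) there are at
least `|A|` many pairwise distinct normal measures on `κ`. -/
theorem stmt2 (c : Cardinal) (hreg : c.IsRegular) (hunc : Cardinal.aleph0 < c)
    (A : Set (Set Ordinal)) (hA : ∀ a ∈ A, a ⊆ Set.Iio c.ord)
    (hAcard : Cardinal.mk A ≤ Cardinal.mk (Set.Iio c.ord)) :
    (∃ ℓ : Ordinal → Set Ordinal,
        ∀ a ∈ A, ∃ U : NormalMeasure c.ord,
          {ξ : Ordinal | ξ < c.ord ∧ ℓ ξ = a ∩ Set.Iio ξ} ∈ U.sets) ↔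
      (∃ μ : A → NormalMeasure c.ord, Function.Injective μ) := by
  classical
  have hlim : Order.IsSuccLimit c.ord := Cardinal.isSuccLimit_ord hunc.le
  have hsucc : ∀ β < c.ord, β + 1 < c.ord := fun β hβ => by
    rw [Ordinal.add_one_eq_succ]; exact hlim.succ_lt hβ
  have hone : ∀ β ξ : Ordinal, β + 1 ≤ ξ ↔ β < ξ := fun β ξ => by
    rw [Ordinal.add_one_eq_succ, Order.succ_le_iff]
  constructor
  · -- (i) → (ii)
    rintro ⟨ℓ, hℓ⟩
    choose U hU using hℓ
    refine ⟨fun a => U a a.2, fun a b hab => ?_⟩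
    by_contra hne
    have hab' : U a.val a.2 = U b.val b.2 := hab
    have hval : a.val ≠ b.val := fun h => hne (Subtype.ext h)
    have hx : ∃ x, ¬(x ∈ a.val ↔ x ∈ b.val) := by
      by_contra hc
      push_neg at hc
      exact hval (Set.ext fun x => hc x)
    obtain ⟨x, hx⟩ := hx
    have hxκ : x < c.ord := by
      by_cases hxa : x ∈ a.val
      · exact hA a a.2 hxa
      · by_cases hxb : x ∈ b.val
        · exact hA b b.2 hxb
        · exact absurd ⟨fun h => absurd h hxa, fun h => absurd h hxb⟩ hx
    have hSa : {ξ : Ordinal | ξ < c.ord ∧ ℓ ξ = a.val ∩ Set.Iio ξ} ∈ (U a.val a.2).sets :=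
      hU a a.2
    have hSb : {ξ : Ordinal | ξ < c.ord ∧ ℓ ξ = b.val ∩ Set.Iio ξ} ∈ (U a.val a.2).sets := by
      rw [hab']; exact hU b b.2
    have hT : {ξ : Ordinal | x + 1 ≤ ξ ∧ ξ < c.ord} ∈ (U a.val a.2).sets :=
      (U a.val a.2).uniform (x + 1) (hsucc x hxκ)
    have hempty : ({ξ : Ordinal | ξ < c.ord ∧ ℓ ξ = a.val ∩ Set.Iio ξ} ∩
        {ξ : Ordinal | ξ < c.ord ∧ ℓ ξ = b.val ∩ Set.Iio ξ}) ∩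
        {ξ : Ordinal | x + 1 ≤ ξ ∧ ξ < c.ord} = ∅ := by
      ext ξ
      simp only [Set.mem_inter_iff, Set.mem_setOf_eq, Set.mem_empty_iff_false, iff_false]
      rintro ⟨⟨⟨-, h1⟩, ⟨-, h2⟩⟩, h3, -⟩
      have hxξ : x < ξ := (hone x ξ).mp h3
      have heq : a.val ∩ Set.Iio ξ = b.val ∩ Set.Iio ξ := h1 ▸ h2
      apply hx
      constructor
      · intro hxa
        have hmem : x ∈ a.val ∩ Set.Iio ξ := ⟨hxa, hxξ⟩
        rw [heq] at hmem; exact hmem.1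
      · intro hxb
        have hmem : x ∈ b.val ∩ Set.Iio ξ := ⟨hxb, hxξ⟩
        rw [← heq] at hmem; exact hmem.1
    exact (U a.val a.2).inter_ne_empty
      ((U a.val a.2).inter_mem _ hSa _ hSb) hT hempty
  · -- (ii) → (i)
    rintro ⟨μ, hμ⟩
    obtain ⟨e⟩ := (Cardinal.le_def _ _).mp hAcard
    obtain ⟨Y, hYmem, hYunique⟩ := exists_disjoint_family hsucc μ hμ
      (fun a => (e a).val) (fun a => (e a).2)
      (fun a b h => e.injective (Subtype.ext h))
    refine ⟨fun ξ => if h : ∃ a : A, ξ ∈ Y a then (h.choose).val ∩ Set.Iio ξ else ∅, ?_⟩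
    intro a ha
    refine ⟨μ ⟨a, ha⟩, (μ ⟨a, ha⟩).superset_mem _ (hYmem ⟨a, ha⟩) _ ?_ (fun ξ hξ => hξ.1)⟩
    intro ξ hξ
    have hξκ : ξ < c.ord :=
      (μ ⟨a, ha⟩).sets_subset _ (hYmem ⟨a, ha⟩) hξ
    have hex : ∃ b : A, ξ ∈ Y b := ⟨⟨a, ha⟩, hξ⟩
    have hch : hex.choose = ⟨a, ha⟩ := hYunique _ _ ξ hex.choose_spec hξ
    simp only [Set.mem_setOf_eq, dif_pos hex, hch]
    exact ⟨hξκ, trivial⟩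
end

section
/- Let κ be a regular uncountable cardinal and let 𝒜 be a family of subsets of κ. Then 𝒜 is contained in a proper normal uniform filter on κ if and only if 𝒜 satisfies the diagonal intersection property: for every function f : κ → 𝒜, the diagonal intersection ∆_{α<κ} f(α) = {ξ < κ : ∀ α < ξ, ξ ∈ f(α)} is stationary in κ. -/
/-- A proper, normal, uniform filter on (the set of ordinals below) `κ`. -/
structure NormalUniformFilter (κ : Ordinal) where
  sets : Set (Set Ordinal)
  sets_subset : ∀ X ∈ sets, X ⊆ Set.Iio κ
  univ_mem : Set.Iio κ ∈ sets
  empty_not_mem : ∅ ∉ sets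
  superset_mem : ∀ X ∈ sets, ∀ Y, X ⊆ Y → Y ⊆ Set.Iio κ → Y ∈ sets
  inter_mem : ∀ X ∈ sets, ∀ Y ∈ sets, X ∩ Y ∈ sets
  uniform : ∀ α < κ, {ξ : Ordinal | α ≤ ξ ∧ ξ < κ} ∈ sets
  normal : ∀ f : Ordinal → Set Ordinal, (∀ α < κ, f α ∈ sets) →
      {ξ : Ordinal | ξ < κ ∧ ∀ α < ξ, ξ ∈ f α} ∈ sets

/-- `C` is club in `κ`: a subset of `κ` that is unbounded in `κ` and closed under
suprema of its bounded nonempty subsets. -/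
def IsClubIn (κ : Ordinal) (C : Set Ordinal) : Prop :=
  C ⊆ Set.Iio κ ∧ (∀ α < κ, ∃ β ∈ C, α ≤ β) ∧
    ∀ s ⊆ C, s.Nonempty → sSup s < κ → sSup s ∈ C

namespace Stmt4Proof

open Set Cardinal Ordinal Order

noncomputable section

universe u

variable {c : Cardinal.{u}}

local notation "κ" => Cardinal.ord c

lemma kLim (hreg : c.IsRegular) : IsSuccLimit (κ) := Cardinal.isSuccLimit_ord hreg.aleph0_le

lemma bdd_of_subset_Iio {s : Set Ordinal.{u}} (h : s ⊆ Set.Iio κ) : BddAbove s :=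
  ⟨κ, fun x hx => (h hx).le⟩

lemma natSup_lt (hreg : c.IsRegular) (hunc : ℵ₀ < c) (g : ℕ → Ordinal.{u})
    (hg : ∀ n, g n < κ) : (⨆ n, g n) < κ :=
  iSup_lt_ord_lift_of_isRegular hreg (by simpa using hunc) hg

lemma bsupLt (hreg : c.IsRegular) {β : Ordinal.{u}} (hβ : β < κ)
    (f : ∀ a < β, Ordinal.{u}) (hf : ∀ a h, f a h < κ) : Ordinal.bsup β f < κ :=
  Ordinal.bsup_lt_ord (by rw [hreg.cof_eq]; exact Cardinal.lt_ord.mp hβ) hf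

lemma clubIio : IsClubIn κ (Set.Iio κ) :=
  ⟨fun _ h => h, fun α hα => ⟨α, hα, le_rfl⟩, fun _ _ _ h => h⟩

lemma clubTail {α : Ordinal.{u}} (hreg : c.IsRegular) (hα : α < κ) :
    IsClubIn κ {ξ : Ordinal | α ≤ ξ ∧ ξ < κ} := by
  refine ⟨fun ξ h => h.2, fun β hβ => ⟨max α β, ⟨le_max_left _ _, max_lt hα hβ⟩, le_max_right _ _⟩,
    fun s hs ⟨η, hη⟩ hsup => ⟨?_, hsup⟩⟩
  exact (hs hη).1.trans (le_csSup (bdd_of_subset_Iio (fun x hx => (hs hx).2)) hη)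

lemma clubTailInter {α : Ordinal.{u}} {C : Set Ordinal.{u}} (hC : IsClubIn κ C) (hα : α < κ) :
    IsClubIn κ (C ∩ {ξ : Ordinal | α ≤ ξ}) := by
  obtain ⟨h1, h2, h3⟩ := hC
  refine ⟨fun ξ h => h1 h.1, fun β hβ => ?_, fun s hs hne hsup => ?_⟩
  · obtain ⟨γ, hγC, hγ⟩ := h2 (max α β) (max_lt hα hβ)
    exact ⟨γ, ⟨hγC, (le_max_left _ _).trans hγ⟩, (le_max_right _ _).trans hγ⟩
  · refine ⟨h3 s (fun x hx => (hs hx).1) hne hsup, ?_⟩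
    obtain ⟨η, hη⟩ := hne
    exact (hs hη).2.trans (le_csSup (bdd_of_subset_Iio (fun x hx => h1 (hs hx).1)) hη)

/-- Restricting a set to elements above `γ` does not change its sup. -/
lemma sup_sep (s : Set Ordinal.{u}) (γ : Ordinal.{u}) (hbd : BddAbove s) (hne : s.Nonempty)
    (hγ : γ < sSup s) : sSup {η ∈ s | γ < η} = sSup s := by
  obtain ⟨η₁, hη₁s, hη₁⟩ := exists_lt_of_lt_csSup hne hγ
  have hbd' : BddAbove {η ∈ s | γ < η} := hbd.mono (Set.sep_subset _ _)
  refine le_antisymm (csSup_le ⟨η₁, hη₁s, hη₁⟩ fun η hη => le_csSup hbd hη.1)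
    (csSup_le hne fun η hη => ?_)
  rcases lt_or_ge γ η with h | h
  · exact le_csSup hbd' ⟨hη, h⟩
  · exact (h.trans hη₁.le).trans (le_csSup hbd' ⟨hη₁s, hη₁⟩)

/-- Diagonal intersection of a family of clubs is club. -/
lemma clubDelta (hreg : c.IsRegular) (hunc : ℵ₀ < c) (C : Ordinal.{u} → Set Ordinal.{u})
    (hC : ∀ α < κ, IsClubIn κ (C α)) :
    IsClubIn κ {ξ : Ordinal | ξ < κ ∧ ∀ α < ξ, ξ ∈ C α} := by
  refine ⟨fun ξ h => h.1, ?_, ?_⟩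
  · -- unbounded
    intro α hα
    -- choice function: elements of `C γ` above `β`
    have hE : ∀ γ β : Ordinal.{u}, ∃ δ : Ordinal.{u}, γ < κ → β < κ → δ ∈ C γ ∧ β ≤ δ := by
      intro γ β
      by_cases h : γ < κ ∧ β < κ
      · obtain ⟨δ, hδ⟩ := (hC γ h.1).2.1 β h.2
        exact ⟨δ, fun _ _ => hδ⟩
      · exact ⟨0, fun h1 h2 => absurd ⟨h1, h2⟩ h⟩
    choose E hE1 using hE
    have hEκ : ∀ {γ β}, γ < κ → β < κ → E γ β < κ := fun {γ β} h1 h2 =>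
      ((hC γ h1).1 (hE1 γ β h1 h2).1)
    set step : Ordinal.{u} → Ordinal.{u} :=
      fun β => max (Ordinal.bsup β (fun γ _ => E γ β)) (succ β) with hstep
    have hstepκ : ∀ {β}, β < κ → step β < κ := by
      intro β hβ
      exact max_lt (bsupLt hreg hβ _ fun γ hγ => hEκ (hγ.trans hβ) hβ) ((kLim hreg).succ_lt hβ)
    have hstep1 : ∀ β, β < step β := fun β => (lt_succ β).trans_le (le_max_right _ _)
    have hstep2 : ∀ {γ β}, γ < β → E γ β ≤ step β := fun {γ β} h =>
      (Ordinal.le_bsup _ γ h).trans (le_max_left _ _)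
    set g : ℕ → Ordinal.{u} := fun n => Nat.rec (succ α) (fun _ ih => step ih) n with hg
    have hg0 : g 0 = succ α := rfl
    have hgs : ∀ n, g (n + 1) = step (g n) := fun n => rfl
    have hgκ : ∀ n, g n < κ := by
      intro n; induction n with
      | zero => exact (kLim hreg).succ_lt hα
      | succ n ih => exact hgs n ▸ hstepκ ih
    have hgmono : StrictMono g := strictMono_nat_of_lt_succ fun n => (hgs n) ▸ hstep1 (g n)
    set ξ := ⨆ n, g n with hξ
    have hbd : BddAbove (Set.range g) := bdd_of_subset_Iio (by rintro x ⟨n, rfl⟩; exact hgκ n)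
    have hgle : ∀ n, g n ≤ ξ := fun n => le_csSup hbd ⟨n, rfl⟩
    have hξκ : ξ < κ := natSup_lt hreg hunc g hgκ
    have hlt : ∀ {β}, β < ξ → ∃ n, β < g n := fun {β} h => by
      obtain ⟨_, ⟨n, rfl⟩, h⟩ := exists_lt_of_lt_csSup (s := Set.range g) ⟨g 0, ⟨0, rfl⟩⟩ h
      exact ⟨n, h⟩
    refine ⟨ξ, ⟨hξκ, ?_⟩, (le_succ α).trans (hgle 0)⟩
    intro γ hγ
    obtain ⟨n, hn⟩ := hlt hγ
    have hγκ : γ < κ := hγ.trans hξκ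
    -- the set of chosen elements of `C γ`
    set t : Set Ordinal.{u} := Set.range (fun m : ℕ => E γ (g (n + m))) with ht
    have htC : t ⊆ C γ := by
      rintro x ⟨m, rfl⟩
      exact (hE1 γ (g (n + m)) hγκ (hgκ _)).1
    have htbd : BddAbove t := bdd_of_subset_Iio fun x hx => (hC γ hγκ).1 (htC hx)
    have hte : ∀ m : ℕ, g (n + m) ≤ E γ (g (n + m)) := fun m =>
      (hE1 γ (g (n + m)) hγκ (hgκ _)).2
    have hte2 : ∀ m : ℕ, E γ (g (n + m)) ≤ g (n + m + 1) := fun m =>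
      (hgs (n + m)) ▸ hstep2 (hn.trans_le (hgmono.monotone (Nat.le_add_right n m)))
    have htsup : sSup t = ξ := by
      refine le_antisymm (csSup_le ⟨_, ⟨0, rfl⟩⟩ ?_) (csSup_le ⟨g 0, ⟨0, rfl⟩⟩ ?_)
      · rintro x ⟨m, rfl⟩
        exact (hte2 m).trans (hgle (n + m + 1))
      · rintro _ ⟨k, rfl⟩
        exact (hgmono.monotone (Nat.le_add_left k n)).trans ((hte k).trans (le_csSup htbd ⟨k, rfl⟩))
    have := (hC γ hγκ).2.2 t htC ⟨_, ⟨0, rfl⟩⟩ (htsup ▸ hξκ)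
    rwa [htsup] at this
  · -- closed
    intro s hs hne hsup
    refine ⟨hsup, fun γ hγ => ?_⟩
    have hbd : BddAbove s := bdd_of_subset_Iio fun x hx => (hs hx).1
    have hγκ : γ < κ := hγ.trans hsup
    have htC : {η ∈ s | γ < η} ⊆ C γ := fun η hη => (hs hη.1).2 γ hη.2
    obtain ⟨η₁, hη₁s, hη₁⟩ := exists_lt_of_lt_csSup hne hγ
    have := (hC γ hγκ).2.2 _ htC ⟨η₁, hη₁s, hη₁⟩ ((sup_sep s γ hbd hne hγ) ▸ hsup)
    rwa [sup_sep s γ hbd hne hγ] at this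

/-- Closure points of a binary function form a club. -/
lemma clubClosure (hreg : c.IsRegular) (hunc : ℵ₀ < c) (F : Ordinal.{u} → Ordinal.{u} → Ordinal.{u})
    (hF : ∀ a < κ, ∀ b < κ, F a b < κ) {θ : Ordinal.{u}} (hθ : θ < κ) :
    IsClubIn κ {ξ : Ordinal | ξ < κ ∧ θ < ξ ∧ ∀ a < ξ, ∀ b < ξ, F a b < ξ} := by
  refine ⟨fun ξ h => h.1, ?_, ?_⟩
  · intro α hα
    set step : Ordinal.{u} → Ordinal.{u} :=
      fun β => max (Ordinal.bsup β (fun a _ => Ordinal.bsup β (fun b _ => F a b))) (succ β)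
        with hstep
    have hstepκ : ∀ {β}, β < κ → step β < κ := by
      intro β hβ
      refine max_lt (bsupLt hreg hβ _ fun a ha => bsupLt hreg hβ _ fun b hb =>
        hF a (ha.trans hβ) b (hb.trans hβ)) ((kLim hreg).succ_lt hβ)
    have hstep1 : ∀ β, β < step β := fun β => (lt_succ β).trans_le (le_max_right _ _)
    have hstep2 : ∀ {a b β}, a < β → b < β → F a b ≤ step β := by
      intro a b β ha hb
      have h1 : F a b ≤ Ordinal.bsup β (fun b _ => F a b) := Ordinal.le_bsup (fun b _ => F a b) b hb
      have h2 : Ordinal.bsup β (fun b _ => F a b) ≤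
          Ordinal.bsup β (fun a _ => Ordinal.bsup β (fun b _ => F a b)) :=
        Ordinal.le_bsup (fun a _ => Ordinal.bsup β (fun b _ => F a b)) a ha
      exact (h1.trans h2).trans (le_max_left _ _)
    set g : ℕ → Ordinal.{u} := fun n => Nat.rec (succ (max α θ)) (fun _ ih => step ih) n with hg
    have hgs : ∀ n, g (n + 1) = step (g n) := fun _ => rfl
    have hgκ : ∀ n, g n < κ := by
      intro n; induction n with
      | zero => exact (kLim hreg).succ_lt (max_lt hα hθ)
      | succ n ih => exact hgs n ▸ hstepκ ih
    have hgmono : StrictMono g := strictMono_nat_of_lt_succ fun n => (hgs n) ▸ hstep1 (g n)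
    set ξ := ⨆ n, g n with hξ
    have hbd : BddAbove (Set.range g) := bdd_of_subset_Iio (by rintro x ⟨n, rfl⟩; exact hgκ n)
    have hgle : ∀ n, g n ≤ ξ := fun n => le_csSup hbd ⟨n, rfl⟩
    have hξκ : ξ < κ := natSup_lt hreg hunc g hgκ
    have hlt : ∀ {β}, β < ξ → ∃ n, β < g n := fun {β} h => by
      obtain ⟨_, ⟨n, rfl⟩, h⟩ := exists_lt_of_lt_csSup (s := Set.range g) ⟨g 0, ⟨0, rfl⟩⟩ h
      exact ⟨n, h⟩
    refine ⟨ξ, ⟨hξκ, (max_lt_iff.mp (lt_succ _ : max α θ < g 0)).2.trans_le (hgle 0), ?_⟩,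
      ((le_max_left α θ).trans (le_succ _)).trans (hgle 0)⟩
    intro a ha b hb
    obtain ⟨n, hn⟩ := hlt ha
    obtain ⟨m, hm⟩ := hlt hb
    have ha' : a < g (max n m) := hn.trans_le (hgmono.monotone (Nat.le_max_left n m))
    have hb' : b < g (max n m) := hm.trans_le (hgmono.monotone (Nat.le_max_right n m))
    calc F a b ≤ step (g (max n m)) := hstep2 ha' hb'
      _ = g (max n m + 1) := (hgs _).symm
      _ < g (max n m + 2) := hgmono (Nat.lt_succ_self (max n m + 1))
      _ ≤ ξ := hgle (max n m + 2)
  · intro s hs hne hsup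
    have hbd : BddAbove s := bdd_of_subset_Iio fun x hx => (hs hx).1
    obtain ⟨η₀, hη₀⟩ := id hne
    refine ⟨hsup, (hs hη₀).2.1.trans_le (le_csSup hbd hη₀), ?_⟩
    intro a ha b hb
    obtain ⟨η₁, hη₁s, hη₁⟩ := exists_lt_of_lt_csSup hne ha
    obtain ⟨η₂, hη₂s, hη₂⟩ := exists_lt_of_lt_csSup hne hb
    rcases le_total η₁ η₂ with h | h
    · exact ((hs hη₂s).2.2 a (hη₁.trans_le h) b hη₂).trans_le (le_csSup hbd hη₂s)
    · exact ((hs hη₁s).2.2 a hη₁ b (hη₂.trans_le h)).trans_le (le_csSup hbd hη₁s)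

/-- Two clubs contain a common club all of whose elements are `≥ 2`. -/
lemma clubInter (hreg : c.IsRegular) (hunc : ℵ₀ < c) {C C' : Set Ordinal.{u}}
    (hC : IsClubIn κ C) (hC' : IsClubIn κ C') :
    ∃ K, IsClubIn κ K ∧ ∀ ξ ∈ K, ξ ∈ C ∧ ξ ∈ C' ∧ 2 ≤ ξ := by
  have h2 : (2 : Ordinal) < κ := by
    refine lt_of_lt_of_le ?_ (omega0_le_of_isSuccLimit (kLim hreg))
    exact_mod_cast nat_lt_omega0 2
  have hD := clubDelta hreg hunc (fun γ => if γ = 0 then C else C')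
    (fun γ _ => by split <;> [exact hC; exact hC'])
  refine ⟨_ ∩ {ξ : Ordinal | 2 ≤ ξ}, clubTailInter hD h2, ?_⟩
  rintro ξ ⟨⟨hξκ, hξ⟩, h2ξ⟩
  have h0 : (0 : Ordinal) < ξ := ((by norm_num : (0 : Ordinal) < 2)).trans_le h2ξ
  have h1 : (1 : Ordinal) < ξ := ((by norm_num : (1 : Ordinal) < 2)).trans_le h2ξ
  have m0 := hξ 0 h0
  have m1 := hξ 1 h1
  simp only [if_pos rfl, if_neg one_ne_zero] at m0 m1
  exact ⟨m0, m1, h2ξ⟩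

/-- A pairing function on the ordinals below `κ`. -/
lemma exists_pair (hreg : c.IsRegular) (hunc : ℵ₀ < c) :
    ∃ (P : Ordinal.{u} → Ordinal.{u} → Ordinal.{u}) (b₀ : Ordinal.{u}),
      b₀ < κ ∧ (∀ a < κ, ∀ b < κ, P a b < κ) ∧
      (∀ a < κ, ∀ b < κ, P a b ≠ b₀) ∧
      (∀ a < κ, ∀ b < κ, ∀ a' < κ, ∀ b' < κ, P a b = P a' b' → a = a' ∧ b = b') := by
  have hle : #(Option (Set.Iio κ × Set.Iio κ)) ≤ #(Set.Iio κ) := by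
    rw [mk_option, mk_prod, Ordinal.mk_Iio_ordinal, card_ord]
    simp only [Cardinal.lift_id]
    have hc : ℵ₀ ≤ Cardinal.lift.{u + 1} c := aleph0_le_lift.mpr hreg.aleph0_le
    rw [mul_eq_self hc, add_one_eq hc]
  obtain ⟨e⟩ := Cardinal.le_def _ _ |>.mp hle
  refine ⟨fun a b => if h : a < κ ∧ b < κ then (e (some (⟨a, h.1⟩, ⟨b, h.2⟩)) : Ordinal) else 0,
    (e none : Ordinal), (e none).2, fun a ha b hb => ?_, fun a ha b hb => ?_,
    fun a ha b hb a' ha' b' hb' h => ?_⟩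
  · dsimp only
    rw [dif_pos (⟨ha, hb⟩ : a < κ ∧ b < κ)]; exact (e _).2
  · dsimp only
    rw [dif_pos (⟨ha, hb⟩ : a < κ ∧ b < κ)]
    intro h
    exact Option.some_ne_none _ (e.injective (Subtype.coe_injective h))
  · dsimp only at h
    rw [dif_pos (⟨ha, hb⟩ : a < κ ∧ b < κ), dif_pos (⟨ha', hb'⟩ : a' < κ ∧ b' < κ)] at h
    have := e.injective (Subtype.coe_injective h)
    simp only [Option.some.injEq, Prod.mk.injEq, Subtype.mk.injEq] at this
    exact ⟨congrArg Subtype.val this.1, congrArg Subtype.val this.2⟩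

/-- Case split on a list: a default value for `[]`, and a function of head and tail. -/
def consCase (d : Set Ordinal.{u}) (F : Ordinal.{u} → List Ordinal.{u} → Set Ordinal.{u}) :
    List Ordinal.{u} → Set Ordinal.{u}
  | [] => d
  | a :: l => F a l

@[simp] lemma consCase_nil (d F) : consCase.{u} d F [] = d := rfl
@[simp] lemma consCase_cons (d F a l) : consCase.{u} d F (a :: l) = F a l := rfl

/-- Encoding of lists of ordinals via a pairing function. -/
def encList (P : Ordinal.{u} → Ordinal.{u} → Ordinal.{u}) (b₀ : Ordinal.{u}) :
    List Ordinal.{u} → Ordinal.{u}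
  | [] => b₀
  | a :: l => P a (encList P b₀ l)

lemma encList_closed {P : Ordinal.{u} → Ordinal.{u} → Ordinal.{u}} {b₀ ξ : Ordinal.{u}}
    (hb : b₀ < ξ) (hcl : ∀ a < ξ, ∀ b < ξ, P a b < ξ) :
    ∀ l : List Ordinal.{u}, (∀ a ∈ l, a < ξ) → encList P b₀ l < ξ
  | [], _ => hb
  | a :: l, h => hcl a (h a List.mem_cons_self) _
      (encList_closed hb hcl l fun x hx => h x (List.mem_cons_of_mem a hx))

variable {P : Ordinal.{u} → Ordinal.{u} → Ordinal.{u}} {b₀ : Ordinal.{u}}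

lemma encList_inj (hb₀ : b₀ < κ)
    (hPκ : ∀ a < κ, ∀ b < κ, P a b < κ)
    (hPne : ∀ a < κ, ∀ b < κ, P a b ≠ b₀)
    (hPinj : ∀ a < κ, ∀ b < κ, ∀ a' < κ, ∀ b' < κ, P a b = P a' b' → a = a' ∧ b = b') :
    ∀ l₁ l₂ : List Ordinal.{u}, (∀ a ∈ l₁, a < κ) → (∀ a ∈ l₂, a < κ) →
      encList P b₀ l₁ = encList P b₀ l₂ → l₁ = l₂ := by
  intro l₁
  induction l₁ with
  | nil =>
    intro l₂ h1 h2 he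
    cases l₂ with
    | nil => rfl
    | cons b m =>
      exact absurd he.symm (hPne b (h2 b List.mem_cons_self) _
        (encList_closed hb₀ hPκ m fun x hx => h2 x (List.mem_cons_of_mem b hx)))
  | cons a l ih =>
    intro l₂ h1 h2 he
    cases l₂ with
    | nil =>
      exact absurd he (hPne a (h1 a List.mem_cons_self) _
        (encList_closed hb₀ hPκ l fun x hx => h1 x (List.mem_cons_of_mem a hx)))
    | cons b m =>
      have ha := h1 a List.mem_cons_self
      have hb := h2 b List.mem_cons_self
      have hl : ∀ x ∈ l, x < κ := fun x hx => h1 x (List.mem_cons_of_mem a hx)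
      have hm : ∀ x ∈ m, x < κ := fun x hx => h2 x (List.mem_cons_of_mem b hx)
      obtain ⟨rfl, he2⟩ := hPinj a ha _ (encList_closed hb₀ hPκ l hl) b hb _
        (encList_closed hb₀ hPκ m hm) he
      rw [ih m hl hm he2]

open Classical in
noncomputable def decList (P : Ordinal.{u} → Ordinal.{u} → Ordinal.{u}) (b₀ o γ : Ordinal.{u}) :
    List Ordinal.{u} :=
  if h : ∃ l : List Ordinal.{u}, (∀ a ∈ l, a < o) ∧ encList P b₀ l = γ then h.choose else []

lemma decList_encList (hb₀ : b₀ < κ)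
    (hPκ : ∀ a < κ, ∀ b < κ, P a b < κ)
    (hPne : ∀ a < κ, ∀ b < κ, P a b ≠ b₀)
    (hPinj : ∀ a < κ, ∀ b < κ, ∀ a' < κ, ∀ b' < κ, P a b = P a' b' → a = a' ∧ b = b')
    (l : List Ordinal.{u}) (hl : ∀ a ∈ l, a < κ) :
    decList P b₀ κ (encList P b₀ l) = l := by
  have hex : ∃ l' : List Ordinal.{u}, (∀ a ∈ l', a < κ) ∧ encList P b₀ l' = encList P b₀ l :=
    ⟨l, hl, rfl⟩
  unfold decList
  rw [dif_pos hex]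
  exact encList_inj hb₀ hPκ hPne hPinj _ _ hex.choose_spec.1 hl hex.choose_spec.2

end
end Stmt4Proof

/-- `S` is stationary in `κ`: it meets every club subset of `κ`. -/
def IsStationaryIn (κ : Ordinal) (S : Set Ordinal) : Prop :=
  ∀ C, IsClubIn κ C → (S ∩ C).Nonempty

open Stmt4Proof Set Order in
/-- A family `𝒜` of subsets of a regular uncountable cardinal `κ` is contained in a
proper normal uniform filter on `κ` if and only if `𝒜` has the diagonal intersection
property: for every `f : κ → 𝒜` the diagonal intersection
`∆_{α<κ} f α = {ξ < κ : ∀ α < ξ, ξ ∈ f α}` is stationary in `κ`. -/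
theorem stmt4 (c : Cardinal) (hreg : c.IsRegular) (hunc : Cardinal.aleph0 < c)
    (𝒜 : Set (Set Ordinal)) (h𝒜 : ∀ X ∈ 𝒜, X ⊆ Set.Iio c.ord) :
    (∃ F : NormalUniformFilter c.ord, 𝒜 ⊆ F.sets) ↔
      ∀ f : Ordinal → Set Ordinal, (∀ α < c.ord, f α ∈ 𝒜) →
        IsStationaryIn c.ord {ξ : Ordinal | ξ < c.ord ∧ ∀ α < ξ, ξ ∈ f α} := by
  have hlim := kLim hreg
  constructor
  · -- a set in a normal uniform filter is stationary
    rintro ⟨F, hF⟩ f hf C hC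
    have hD : {ξ : Ordinal | ξ < c.ord ∧ ∀ α < ξ, ξ ∈ f α} ∈ F.sets :=
      F.normal f fun α hα => hF (hf α hα)
    -- a choice of elements of `C` above any given ordinal
    have hnxt' : ∀ α : Ordinal, ∃ β, α < c.ord → β ∈ C ∧ α < β := by
      intro α
      by_cases h : α < c.ord
      · obtain ⟨β, hβC, hβ⟩ := hC.2.1 (succ α) (hlim.succ_lt h)
        exact ⟨β, fun _ => ⟨hβC, (lt_succ α).trans_le hβ⟩⟩
      · exact ⟨0, fun h' => absurd h' h⟩
    choose nxt hnxt using hnxt'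
    have hnκ : ∀ {α}, α < c.ord → nxt α < c.ord := fun {α} h => hC.1 (hnxt α h).1
    have hD' : {ξ : Ordinal | ξ < c.ord ∧ ∀ α < ξ,
        ξ ∈ {ξ : Ordinal | nxt α ≤ ξ ∧ ξ < c.ord}} ∈ F.sets :=
      F.normal _ fun α hα => F.uniform _ (hnκ hα)
    have h1κ : (1 : Ordinal) < c.ord := by
      refine lt_of_lt_of_le ?_ (Ordinal.omega0_le_of_isSuccLimit hlim)
      exact_mod_cast Ordinal.nat_lt_omega0 1
    have hB := F.inter_mem _ hD _ (F.inter_mem _ hD' _ (F.uniform 1 h1κ))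
    rcases Set.eq_empty_or_nonempty ({ξ : Ordinal | ξ < c.ord ∧ ∀ α < ξ, ξ ∈ f α} ∩
        ({ξ : Ordinal | ξ < c.ord ∧ ∀ α < ξ, ξ ∈ {ξ : Ordinal | nxt α ≤ ξ ∧ ξ < c.ord}} ∩
          {ξ : Ordinal | 1 ≤ ξ ∧ ξ < c.ord})) with he | hne
    · rw [he] at hB
      exact absurd hB F.empty_not_mem
    obtain ⟨ξ, hξD, ⟨hξκ, hξT⟩, h1ξ, -⟩ := hne
    have h0ξ : (0 : Ordinal) < ξ := lt_of_lt_of_le zero_lt_one h1ξ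
    -- ξ is in C, being a sup of elements of C
    set s : Set Ordinal := (fun α => nxt α) '' Set.Iio ξ with hs
    have hsC : s ⊆ C := by
      rintro x ⟨α, hα, rfl⟩
      exact (hnxt α (hα.trans hξκ)).1
    have hsne : s.Nonempty := ⟨nxt 0, 0, h0ξ, rfl⟩
    have hbd : BddAbove s := ⟨ξ, by rintro x ⟨α, hα, rfl⟩; exact (hξT α hα).1⟩
    have hsup : sSup s = ξ := by
      refine le_antisymm (csSup_le hsne (by rintro x ⟨α, hα, rfl⟩; exact (hξT α hα).1)) ?_
      by_contra h
      push_neg at h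
      have h1 : sSup s < ξ := h
      have h2 : nxt (sSup s) ≤ sSup s := le_csSup hbd ⟨sSup s, h1, rfl⟩
      exact absurd h2 (not_le.mpr (hnxt _ (h1.trans hξκ)).2)
    have hξC : ξ ∈ C := by
      have := hC.2.2 s hsC hsne (hsup ▸ hξκ)
      rwa [hsup] at this
    exact ⟨ξ, hξD, hξC⟩
  · -- construction of the filter
    intro hdi
    classical
    obtain ⟨P, b₀, hb₀, hPκ, hPne, hPinj⟩ := exists_pair hreg hunc
    set 𝒜' : Set (Set Ordinal) := insert (Set.Iio c.ord) 𝒜 with h𝒜'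
    set Dl : (List Ordinal → Set Ordinal) → Set Ordinal :=
      fun f => {ξ | ξ < c.ord ∧ ∀ l : List Ordinal, (∀ a ∈ l, a < ξ) → ξ ∈ f l} with hDl
    -- the key point: list-diagonal intersections of sets in `𝒜'` are stationary
    have key : ∀ f : List Ordinal → Set Ordinal, (∀ l, f l ∈ 𝒜') →
        ∀ C, IsClubIn c.ord C → (Dl f ∩ C).Nonempty := by
      intro f hf C hC
      rcases Set.eq_empty_or_nonempty 𝒜 with hA | ⟨A₀, hA₀⟩
      · obtain ⟨β, hβC, -⟩ := hC.2.1 0 hlim.pos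
        refine ⟨β, ⟨hC.1 hβC, fun l _ => ?_⟩, hβC⟩
        have hfl := hf l
        rw [h𝒜', hA, Set.mem_insert_iff] at hfl
        rcases hfl with hfl | hfl
        swap
        · exact absurd hfl (Set.notMem_empty _)
        rw [hfl]
        exact hC.1 hβC
      · set g : Ordinal → Set Ordinal := fun γ =>
          if f (decList P b₀ c.ord γ) ∈ 𝒜 then f (decList P b₀ c.ord γ) else A₀ with hg
        have hgA : ∀ γ < c.ord, g γ ∈ 𝒜 := by
          intro γ _
          rw [hg]
          dsimp only
          split
          · assumption
          · exact hA₀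
        have hCl := clubClosure hreg hunc P hPκ hb₀
        obtain ⟨K, hK, hKsub⟩ := clubInter hreg hunc hC hCl
        obtain ⟨ξ, ⟨hξκ, hξg⟩, hξK⟩ := hdi g hgA K hK
        obtain ⟨hξC, hξCl, -⟩ := hKsub ξ hξK
        obtain ⟨-, hbξ, hclξ⟩ := hξCl
        refine ⟨ξ, ⟨hξκ, fun l hl => ?_⟩, hξC⟩
        have hlκ : ∀ a ∈ l, a < c.ord := fun a ha => (hl a ha).trans hξκ
        have henc : encList P b₀ l < ξ := encList_closed hbξ hclξ l hl
        have hmem := hξg _ henc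
        rw [hg] at hmem
        dsimp only at hmem
        rw [decList_encList hb₀ hPκ hPne hPinj l hlκ] at hmem
        by_cases hfl : f l ∈ 𝒜
        · rwa [if_pos hfl] at hmem
        · have hIio : f l = Set.Iio c.ord := by
            have := hf l
            rw [h𝒜', Set.mem_insert_iff] at this
            tauto
          rw [hIio]
          exact hξκ
    refine ⟨⟨{X | X ⊆ Set.Iio c.ord ∧ ∃ f : List Ordinal → Set Ordinal,
        (∀ l, f l ∈ 𝒜') ∧ ∃ C, IsClubIn c.ord C ∧ Dl f ∩ C ⊆ X},
      fun X hX => hX.1, ?_, ?_, ?_, ?_, ?_, ?_⟩, ?_⟩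
    · -- univ_mem
      exact ⟨subset_rfl, fun _ => Set.Iio c.ord, fun _ => Set.mem_insert _ _,
        Set.Iio c.ord, clubIio, fun ξ hξ => hξ.2⟩
    · -- empty_not_mem
      rintro ⟨-, f, hf, C, hC, hsub⟩
      obtain ⟨ξ, hξ⟩ := key f hf C hC
      exact Set.notMem_empty ξ (hsub hξ)
    · -- superset_mem
      rintro X ⟨-, f, hf, C, hC, hsub⟩ Y hXY hY
      exact ⟨hY, f, hf, C, hC, hsub.trans hXY⟩
    · -- inter_mem
      rintro X ⟨hX, f, hf, C, hC, hsub⟩ Y ⟨hY, f', hf', C', hC', hsub'⟩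
      obtain ⟨K, hK, hKsub⟩ := clubInter hreg hunc hC hC'
      refine ⟨fun x hx => hX hx.1,
        consCase (Set.Iio c.ord) (fun a l => if a = 0 then f l else f' l), ?_, K, hK, ?_⟩
      · intro l
        cases l with
        | nil => exact Set.mem_insert _ _
        | cons a l =>
          rw [consCase_cons]
          split
          · exact hf l
          · exact hf' l
      · rintro ξ ⟨⟨hξκ, hξl⟩, hξK⟩
        obtain ⟨hξC, hξC', h2ξ⟩ := hKsub ξ hξK
        have h0 : (0 : Ordinal) < ξ := lt_of_lt_of_le (by norm_num : (0 : Ordinal) < 2) h2ξ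
        have h1 : (1 : Ordinal) < ξ := lt_of_lt_of_le (by norm_num : (1 : Ordinal) < 2) h2ξ
        constructor
        · refine hsub ⟨⟨hξκ, fun l hl => ?_⟩, hξC⟩
          have := hξl (0 :: l) (by
            intro a ha
            rcases List.mem_cons.mp ha with rfl | ha
            · exact h0
            · exact hl a ha)
          rwa [consCase_cons, if_pos rfl] at this
        · refine hsub' ⟨⟨hξκ, fun l hl => ?_⟩, hξC'⟩
          have := hξl (1 :: l) (by
            intro a ha
            rcases List.mem_cons.mp ha with rfl | ha
            · exact h1
            · exact hl a ha)
          rwa [consCase_cons, if_neg one_ne_zero] at this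
    · -- uniform
      intro α hα
      exact ⟨fun ξ h => h.2, fun _ => Set.Iio c.ord, fun _ => Set.mem_insert _ _,
        _, clubTail hreg hα, fun ξ hξ => hξ.2⟩
    · -- normal
      intro X hX
      have HW : ∀ α : Ordinal, ∃ fC : (List Ordinal → Set Ordinal) × Set Ordinal,
          (∀ l, fC.1 l ∈ 𝒜') ∧ IsClubIn c.ord fC.2 ∧ (α < c.ord → Dl fC.1 ∩ fC.2 ⊆ X α) := by
        intro α
        by_cases h : α < c.ord
        · obtain ⟨-, f, hf, C, hC, hsub⟩ := hX α h
          exact ⟨(f, C), hf, hC, fun _ => hsub⟩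
        · exact ⟨(fun _ => Set.Iio c.ord, Set.Iio c.ord), fun _ => Set.mem_insert _ _,
            clubIio, fun h' => absurd h' h⟩
      choose W hW1 hW2 hW3 using HW
      have hK := clubDelta hreg hunc (fun α => (W α).2) fun α _ => hW2 α
      refine ⟨fun ξ h => h.1, consCase (Set.Iio c.ord) (fun a l => (W a).1 l), ?_,
        _, hK, ?_⟩
      · intro l
        cases l with
        | nil => exact Set.mem_insert _ _
        | cons a l => exact hW1 a l
      · rintro ξ ⟨⟨hξκ, hξl⟩, -, hxiD⟩
        refine ⟨hξκ, fun α hα => ?_⟩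
        refine hW3 α (hα.trans hξκ) ⟨⟨hξκ, fun l hl => ?_⟩, hxiD α hα⟩
        have := hξl (α :: l) (by
          intro a ha
          rcases List.mem_cons.mp ha with rfl | ha
          · exact hα
          · exact hl a ha)
        rwa [consCase_cons] at this
    · -- 𝒜 ⊆ sets
      intro X hXA
      refine ⟨h𝒜 X hXA, consCase X (fun _ _ => Set.Iio c.ord), ?_, Set.Iio c.ord, clubIio, ?_⟩
      · intro l
        cases l with
        | nil => exact Set.mem_insert_of_mem _ hXA
        | cons a l => exact Set.mem_insert _ _
      · rintro ξ ⟨⟨hξκ, hξl⟩, -⟩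
        have := hξl [] (by simp)
        rwa [consCase_nil] at this
end

section
/- Let κ be a regular uncountable cardinal and λ a cardinal. A sequence ⟨d_β : β < λ⟩ of κ-lists is a jd_{κ,λ}-sequence if and only if for every set of indices A ⊆ λ with |A| ≤ κ, the subfamily ⟨d_β : β ∈ A⟩ has the joint guessing property: for every choice of targets a_β ⊆ κ (β ∈ A) there is a proper normal uniform filter on κ containing every guessing set S(d_β, a_β) for β ∈ A. -/
/-- `d` is a `κ`-list: a function on `κ` with `d ξ ⊆ ξ` for all `ξ < κ`. -/
def IsKappaList (κ : Ordinal) (d : Ordinal → Set Ordinal) : Prop :=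
  ∀ ξ < κ, d ξ ⊆ Set.Iio ξ

/-- The guessing set `S(d,a) = {ξ < κ : d ξ = a ∩ ξ}` of a `κ`-list `d` at a target
`a ⊆ κ`. -/
def guessSet (κ : Ordinal) (d : Ordinal → Set Ordinal) (a : Set Ordinal) : Set Ordinal :=
  {ξ : Ordinal | ξ < κ ∧ d ξ = a ∩ Set.Iio ξ}

/-- The family of `κ`-lists `⟨d β : β ∈ I⟩` guesses jointly: for every choice of
targets `a β ⊆ κ` (for `β ∈ I`) there is a single proper normal uniform filter on `κ`
containing all the guessing sets `S(d β, a β)` for `β ∈ I`. -/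
def JointGuess (κ : Ordinal) (I : Set Ordinal) (d : Ordinal → Ordinal → Set Ordinal) : Prop :=
  ∀ a : Ordinal → Set Ordinal, (∀ β ∈ I, a β ⊆ Set.Iio κ) →
    ∃ F : NormalUniformFilter κ, ∀ β ∈ I, guessSet κ (d β) (a β) ∈ F.sets

/-- For a regular uncountable cardinal `κ` and a cardinal `λ`, a sequence
`⟨d β : β < λ⟩` of `κ`-lists is a `jd_{κ,λ}`-sequence if and only if every subfamily
indexed by a set `A ⊆ λ` with `|A| ≤ κ` has the joint guessing property. -/
theorem stmt5 (c l : Cardinal) (hreg : c.IsRegular) (hunc : Cardinal.aleph0 < c)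
    (d : Ordinal → Ordinal → Set Ordinal)
    (hd : ∀ β < l.ord, IsKappaList c.ord (d β)) :
    JointGuess c.ord (Set.Iio l.ord) d ↔
      ∀ A ⊆ Set.Iio l.ord, Cardinal.mk A ≤ Cardinal.mk (Set.Iio c.ord) →
        JointGuess c.ord A d := by

  have haleph : Cardinal.aleph0 ≤ Cardinal.mk (Set.Iio c.ord) := by
    rw [Ordinal.mk_Iio_ordinal, Cardinal.card_ord]
    exact le_trans (by simp) (Cardinal.lift_le.2 hunc.le)
  classical
  constructor
  · -- forward: restrict to a subfamily
    intro H A hA _ a ha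
    obtain ⟨F, hF⟩ := H (fun β => if β ∈ A then a β else ∅) (by
      intro β _
      by_cases hb : β ∈ A
      · simpa [hb] using ha β hb
      · simp [hb])
    exact ⟨F, fun β hβ => by simpa [hβ] using hF β (hA hβ)⟩
  · -- backward: build the filter generated by small supports
    intro H a ha
    classical
    -- F.sets : X with a small support A forcing X into every filter containing the A-guess sets
    refine ⟨⟨{X | X ⊆ Set.Iio c.ord ∧ ∃ A, A ⊆ Set.Iio l.ord ∧
        Cardinal.mk A ≤ Cardinal.mk (Set.Iio c.ord) ∧
        ∀ F' : NormalUniformFilter c.ord,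
          (∀ β ∈ A, guessSet c.ord (d β) (a β) ∈ F'.sets) → X ∈ F'.sets},
        ?_, ?_, ?_, ?_, ?_, ?_, ?_⟩, ?_⟩
    · exact fun X hX => hX.1
    · exact ⟨le_refl _, ∅, by simp, by simp [le_trans Cardinal.aleph0_pos.le haleph],
        fun F' _ => F'.univ_mem⟩
    · rintro ⟨-, A, hA, hcard, hforce⟩
      obtain ⟨F', hF'⟩ := H A hA hcard a (fun β hβ => ha β (hA hβ))
      exact F'.empty_not_mem (hforce F' hF')
    · rintro X ⟨-, A, hA, hcard, hforce⟩ Y hXY hY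
      exact ⟨hY, A, hA, hcard, fun F' h => F'.superset_mem X (hforce F' h) Y hXY hY⟩
    · rintro X ⟨hX1, A1, hA1, hc1, hf1⟩ Y ⟨hY1, A2, hA2, hc2, hf2⟩
      refine ⟨fun ξ hξ => hX1 hξ.1, A1 ∪ A2, Set.union_subset hA1 hA2, ?_, ?_⟩
      · exact le_trans (Cardinal.mk_union_le _ _) (Cardinal.add_le_of_le haleph hc1 hc2)
      · intro F' h
        exact F'.inter_mem X (hf1 F' fun β hβ => h β (Or.inl hβ)) Y
          (hf2 F' fun β hβ => h β (Or.inr hβ))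
    · intro α hα
      exact ⟨fun ξ hξ => hξ.2, ∅, by simp, by simp [le_trans Cardinal.aleph0_pos.le haleph],
        fun F' _ => F'.uniform α hα⟩
    · intro f hf
      -- choose supports for each α < κ
      choose A hA1 hA2 hA3 using fun α (h : α < c.ord) => (hf α h).2
      refine ⟨fun ξ hξ => hξ.1, ⋃ α : Set.Iio c.ord, A α.1 α.2, ?_, ?_, ?_⟩
      · exact Set.iUnion_subset fun α => hA1 α.1 α.2
      · refine le_trans (Cardinal.mk_iUnion_le _) ?_
        have h1 : Cardinal.mk (Set.Iio c.ord) * Cardinal.mk (Set.Iio c.ord) =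
            Cardinal.mk (Set.Iio c.ord) := Cardinal.mul_eq_self haleph
        calc Cardinal.mk (Set.Iio c.ord) * ⨆ α : Set.Iio c.ord, Cardinal.mk (A α.1 α.2)
            ≤ Cardinal.mk (Set.Iio c.ord) * Cardinal.mk (Set.Iio c.ord) := by
              exact mul_le_mul_right (ciSup_le' fun α : Set.Iio c.ord => hA2 α.1 α.2) _
          _ = Cardinal.mk (Set.Iio c.ord) := h1
      · intro F' h
        apply F'.normal
        intro α hα
        refine hA3 α hα F' fun β hβ => h β ?_
        exact Set.mem_iUnion.2 ⟨⟨α, hα⟩, hβ⟩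
    · intro β hβ
      refine ⟨fun ξ hξ => hξ.1, {β}, by simpa using hβ, ?_, ?_⟩
      · simpa using le_trans Cardinal.one_le_aleph0 haleph
      · intro F' h
        exact h β rfl
end

section
/- Let κ be a regular uncountable cardinal. The following are equivalent: (1) there is a ◊_κ-sequence; (2) there is a jd_{κ,κ}-sequence; (3) there is a jd_{κ,2^κ}-sequence; (4) there is a ◊_κ-tree. -/
/-- `D` is a `◊_κ`-tree: a labelling of the binary tree of height `κ` (here `D ξ s`
is the label at the node `s↾ξ`, so `D ξ s` depends only on `s` below `ξ` and is a
subset of `κ`) such that for any assignment of targets `a s ⊆ κ` to the branches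
`s : κ → 2` (so `a s` depends only on `s` below `κ`) there is a proper normal uniform
filter on `κ` containing all the guessing sets `{ξ < κ : D (s↾ξ) = a s ∩ ξ}`. -/
def IsDiamondTree (κ : Ordinal) (D : Ordinal → (Ordinal → Bool) → Set Ordinal) : Prop :=
  (∀ ξ < κ, ∀ s, D ξ s ⊆ Set.Iio κ) ∧
  (∀ ξ < κ, ∀ s t : Ordinal → Bool, (∀ η < ξ, s η = t η) → D ξ s = D ξ t) ∧
  ∀ a : (Ordinal → Bool) → Set Ordinal, (∀ s, a s ⊆ Set.Iio κ) →
    (∀ s t : Ordinal → Bool, (∀ η < κ, s η = t η) → a s = a t) →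
    ∃ F : NormalUniformFilter κ, ∀ s : Ordinal → Bool,
      {ξ : Ordinal | ξ < κ ∧ D ξ s = a s ∩ Set.Iio ξ} ∈ F.sets

open Cardinal Set

universe u
variable {c : Cardinal.{u}}

-- defs copied

theorem kappa_isLimit (hunc : Cardinal.aleph0 < c) : Order.IsSuccLimit c.ord :=
  Cardinal.isSuccLimit_ord hunc.le

theorem succ_lt_kappa (hunc : Cardinal.aleph0 < c) {α : Ordinal} (h : α < c.ord) :
    α + 1 < c.ord := by
  rw [Ordinal.add_one_eq_succ]
  exact (kappa_isLimit hunc).succ_lt h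

/-- iteration for building closure points -/
noncomputable def clIter (g : Ordinal.{u} → Ordinal.{u} → Ordinal.{u}) (α : Ordinal.{u}) : ℕ → Ordinal.{u}
  | 0 => α + 1
  | n + 1 => max (clIter g α n + 1)
      (Ordinal.bsup.{u,u} (clIter g α n) fun β _ =>
        Ordinal.bsup.{u,u} (clIter g α n) fun γ _ => g β γ + 1)

theorem clIter_lt (hreg : c.IsRegular) (hunc : Cardinal.aleph0 < c)
    (g : Ordinal → Ordinal → Ordinal) (hg : ∀ α < c.ord, ∀ β < c.ord, g α β < c.ord)
    {α : Ordinal} (hα : α < c.ord) : ∀ n, clIter g α n < c.ord := by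
  intro n
  induction n with
  | zero => exact succ_lt_kappa hunc hα
  | succ n ih =>
      refine max_lt (succ_lt_kappa hunc ih) ?_
      refine Cardinal.bsup_lt_ord_of_isRegular hreg (Cardinal.lt_ord.1 ih) ?_
      intro β hβ
      refine Cardinal.bsup_lt_ord_of_isRegular hreg (Cardinal.lt_ord.1 ih) ?_
      intro γ hγ
      exact succ_lt_kappa hunc (hg β (hβ.trans ih) γ (hγ.trans ih))

theorem clIter_mono (g : Ordinal.{u} → Ordinal.{u} → Ordinal.{u}) (α : Ordinal.{u}) {m n : ℕ} (h : m ≤ n) :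
    clIter g α m ≤ clIter g α n := by
  induction n with
  | zero => simpa using (Nat.le_zero.1 h) ▸ le_rfl
  | succ n ih =>
      rcases Nat.lt_or_ge m (n+1) with h' | h'
      · exact (ih (Nat.lt_succ_iff.1 h')).trans
          ((le_of_lt (lt_of_lt_of_le (lt_add_one _) (le_max_left _ _))))
      · have : m = n + 1 := le_antisymm h h'
        exact this ▸ le_rfl

/-- closure points of a two-variable function -/
def cl2 (κ : Ordinal.{u}) (g : Ordinal.{u} → Ordinal.{u} → Ordinal.{u}) : Set Ordinal.{u} :=
  {ξ | ξ < κ ∧ 0 < ξ ∧ ∀ α < ξ, ∀ β < ξ, g α β < ξ}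

theorem olt_succ (a : Ordinal.{u}) : a < a + 1 := by
  rw [Ordinal.add_one_eq_succ]; exact Order.lt_succ a
theorem cl2_subset {κ g} : cl2 κ g ⊆ Set.Iio κ := fun _ h => h.1

theorem cl2_isClub (hreg : c.IsRegular) (hunc : Cardinal.aleph0 < c)
    (g : Ordinal.{u} → Ordinal.{u} → Ordinal.{u})
    (hg : ∀ α < c.ord, ∀ β < c.ord, g α β < c.ord) : IsClubIn c.ord (cl2 c.ord g) := by
  refine ⟨cl2_subset, ?_, ?_⟩
  · -- unbounded
    intro α hα
    set F : ℕ → Ordinal.{u} := clIter g α with hF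
    have hFlt : ∀ n, F n < c.ord := clIter_lt hreg hunc g hg hα
    have hbdd : BddAbove (Set.range F) := ⟨c.ord, by rintro x ⟨n, rfl⟩; exact (hFlt n).le⟩
    set ξ := ⨆ n, F n with hξ
    have hle : ∀ n, F n ≤ ξ := fun n => le_ciSup hbdd n
    have hξlt : ξ < c.ord := by
      refine Cardinal.iSup_lt_ord_lift_of_isRegular hreg ?_ hFlt
      simpa using hunc
    have hexists : ∀ β < ξ, ∃ n, β < F n := by
      intro β hβ
      by_contra h
      push_neg at h
      exact absurd (ciSup_le h) (not_le.2 hβ)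
    refine ⟨ξ, ⟨hξlt, ?_, ?_⟩, ?_⟩
    · exact lt_of_lt_of_le ((zero_le (a := α)).trans_lt (olt_succ α)) (hle 0)
    · intro β hβ γ hγ
      obtain ⟨n, hn⟩ := hexists β hβ
      obtain ⟨m, hm⟩ := hexists γ hγ
      have hβ' : β < F (max n m) := hn.trans_le (clIter_mono g α (le_max_left n m))
      have hγ' : γ < F (max n m) := hm.trans_le (clIter_mono g α (le_max_right n m))
      have : g β γ + 1 ≤ F (max n m + 1) := by
        refine le_trans ?_ (le_max_right _ _)
        refine le_trans (Ordinal.le_bsup (fun γ' _ => g β γ' + 1) γ hγ') ?_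
        exact Ordinal.le_bsup (fun β' _ => Ordinal.bsup.{u,u} (F (max n m)) fun γ' _ => g β' γ' + 1) β hβ'
      calc g β γ < g β γ + 1 := olt_succ _
        _ ≤ F (max n m + 1) := this
        _ ≤ ξ := hle _
    · -- α ≤ ξ
      exact le_of_lt ((olt_succ α).trans_le (hle 0))
  · -- closed
    intro s hs hne hlt
    refine ⟨hlt, ?_, ?_⟩
    · obtain ⟨x, hx⟩ := hne
      exact lt_of_lt_of_le (hs hx).2.1 (le_csSup ⟨c.ord, fun y hy => ((hs hy).1).le⟩ hx)
    · intro β hβ γ hγ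
      have hbdd : BddAbove s := ⟨c.ord, fun y hy => ((hs hy).1).le⟩
      have h1 : ∃ x ∈ s, β < x := by
        by_contra h; push_neg at h
        exact absurd (csSup_le hne h) (not_le.2 hβ)
      have h2 : ∃ x ∈ s, γ < x := by
        by_contra h; push_neg at h
        exact absurd (csSup_le hne h) (not_le.2 hγ)
      obtain ⟨x, hx, hβx⟩ := h1
      obtain ⟨y, hy, hγy⟩ := h2
      rcases le_total x y with hxy | hxy
      · exact lt_of_lt_of_le ((hs hy).2.2 β (hβx.trans_le hxy) γ hγy) (le_csSup hbdd hy)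
      · exact lt_of_lt_of_le ((hs hx).2.2 β hβx γ (hγy.trans_le hxy)) (le_csSup hbdd hx)

theorem tail_isClub (hunc : Cardinal.aleph0 < c) {α : Ordinal.{u}} (hα : α < c.ord) :
    IsClubIn c.ord {ξ | α ≤ ξ ∧ ξ < c.ord} := by
  refine ⟨fun x hx => hx.2, ?_, ?_⟩
  · intro γ hγ
    exact ⟨max α γ, ⟨le_max_left _ _, max_lt hα hγ⟩, le_max_right _ _⟩
  · intro s hs hne hlt
    obtain ⟨x, hx⟩ := hne
    exact ⟨(hs hx).1.trans (le_csSup ⟨c.ord, fun y hy => ((hs hy).2).le⟩ hx), hlt⟩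

theorem Iio_isClub (hunc : Cardinal.aleph0 < c) : IsClubIn c.ord (Set.Iio c.ord) :=
  ⟨fun _ h => h, fun α hα => ⟨α, hα, le_rfl⟩, fun _ _ _ hlt => hlt⟩

/-- a club of points lying diagonally in all clubs of a family -/
theorem club_diag (hreg : c.IsRegular) (hunc : Cardinal.aleph0 < c)
    (Cs : Ordinal.{u} → Set Ordinal.{u}) (h : ∀ α < c.ord, IsClubIn c.ord (Cs α)) :
    ∃ C, IsClubIn c.ord C ∧ ∀ ξ ∈ C, ∀ α < ξ, ξ ∈ Cs α := by
  have pick : ∀ α η : Ordinal.{u}, α < c.ord → η < c.ord → ∃ β, β ∈ Cs α ∧ η + 1 ≤ β := by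
    intro α η hα hη
    obtain ⟨β, hβ, hle⟩ := (h α hα).2.1 (η + 1) (succ_lt_kappa hunc hη)
    exact ⟨β, hβ, hle⟩
  classical
  set g : Ordinal.{u} → Ordinal.{u} → Ordinal.{u} := fun α η =>
    if hc : α < c.ord ∧ η < c.ord then (pick α η hc.1 hc.2).choose else 0 with hg
  have hg1 : ∀ α η, α < c.ord → η < c.ord → g α η ∈ Cs α ∧ η + 1 ≤ g α η := by
    intro α η hα hη
    simp only [hg, dif_pos (And.intro hα hη)]
    exact (pick α η hα hη).choose_spec
  have hglt : ∀ α < c.ord, ∀ η < c.ord, g α η < c.ord := by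
    intro α hα η hη
    exact (h α hα).1 (hg1 α η hα hη).1
  refine ⟨cl2 c.ord g, cl2_isClub hreg hunc g hglt, ?_⟩
  rintro ξ ⟨hξκ, hξ0, hξcl⟩ α hα
  -- ξ is the sup of elements of Cs α
  set s : Set Ordinal.{u} := (fun η => g α η) '' Set.Iio ξ with hs
  have hsub : s ⊆ Cs α := by
    rintro x ⟨η, hη, rfl⟩
    exact (hg1 α η (hα.trans hξκ) (hη.trans hξκ)).1
  have hne : s.Nonempty := ⟨g α 0, 0, hξ0, rfl⟩
  have hbdd : BddAbove s := ⟨ξ, by rintro x ⟨η, hη, rfl⟩; exact (hξcl α hα η hη).le⟩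
  have hsup : sSup s = ξ := by
    apply le_antisymm
    · refine csSup_le hne ?_
      rintro x ⟨η, hη, rfl⟩
      exact (hξcl α hα η hη).le
    · refine le_of_forall_lt ?_
      intro η hη
      calc η < η + 1 := olt_succ η
        _ ≤ g α η := (hg1 α η (hα.trans hξκ) (hη.trans hξκ)).2
        _ ≤ sSup s := le_csSup hbdd ⟨η, hη, rfl⟩
  have := (h α (hα.trans hξκ)).2.2 s hsub hne (hsup ▸ hξκ)
  rwa [hsup] at this


theorem nat_lt_kappa (hunc : Cardinal.aleph0 < c) (n : ℕ) : (n : Ordinal.{u}) < c.ord := by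
  induction n with
  | zero => exact_mod_cast (kappa_isLimit hunc).pos
  | succ n ih => exact_mod_cast succ_lt_kappa hunc ih

/-- intersection of a club with a tail is a club -/
theorem club_tail_inter (hunc : Cardinal.aleph0 < c) {C : Set Ordinal.{u}}
    (hC : IsClubIn c.ord C) {α : Ordinal.{u}} (hα : α < c.ord) :
    IsClubIn c.ord (C ∩ {ξ | α ≤ ξ ∧ ξ < c.ord}) := by
  refine ⟨fun x hx => hx.2.2, ?_, ?_⟩
  · intro γ hγ
    obtain ⟨β, hβ, hle⟩ := hC.2.1 (max α γ) (max_lt hα hγ)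
    exact ⟨β, ⟨hβ, (le_max_left _ _).trans hle, hC.1 hβ⟩, (le_max_right α γ).trans hle⟩
  · intro s hs hne hlt
    refine ⟨hC.2.2 s (fun x hx => (hs hx).1) hne hlt, ?_, hlt⟩
    obtain ⟨x, hx⟩ := hne
    exact (hs hx).2.1.trans (le_csSup ⟨c.ord, fun y hy => ((hs hy).2.2).le⟩ hx)

/-- intersection of two clubs contains a club -/
theorem club_inter (hreg : c.IsRegular) (hunc : Cardinal.aleph0 < c)
    {C₁ C₂ : Set Ordinal.{u}} (h₁ : IsClubIn c.ord C₁) (h₂ : IsClubIn c.ord C₂) :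
    ∃ C, IsClubIn c.ord C ∧ C ⊆ C₁ ∩ C₂ := by
  classical
  obtain ⟨C, hC, hCd⟩ := club_diag hreg hunc (fun α => if α = 0 then C₁ else C₂)
    (fun α _ => by by_cases h : α = 0 <;> simp [h, h₁, h₂])
  refine ⟨C ∩ {ξ | (2:Ordinal.{u}) ≤ ξ ∧ ξ < c.ord},
    club_tail_inter hunc hC (by exact_mod_cast nat_lt_kappa hunc 2), ?_⟩
  rintro ξ ⟨hξC, h2, hξκ⟩
  have h0 : (0:Ordinal.{u}) < ξ := lt_of_lt_of_le (by norm_num) h2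
  have h1 : (1:Ordinal.{u}) < ξ := lt_of_lt_of_le (by norm_num) h2
  have e1 : ξ ∈ C₁ := by have := hCd ξ hξC 0 h0; simpa using this
  have e2 : ξ ∈ C₂ := by have := hCd ξ hξC 1 h1; simpa using this
  exact ⟨e1, e2⟩



/-- every club belongs to every normal uniform filter -/
theorem club_mem_NUF (hunc : Cardinal.aleph0 < c) (F : NormalUniformFilter c.ord)
    {C : Set Ordinal.{u}} (hC : IsClubIn c.ord C) : C ∈ F.sets := by
  classical
  have pick : ∀ η : Ordinal.{u}, η < c.ord → ∃ β, β ∈ C ∧ η + 1 ≤ β := by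
    intro η hη
    obtain ⟨β, hβ, hle⟩ := hC.2.1 (η + 1) (succ_lt_kappa hunc hη)
    exact ⟨β, hβ, hle⟩
  set g : Ordinal.{u} → Ordinal.{u} := fun η =>
    if hη : η < c.ord then (pick η hη).choose else 0 with hg
  have hg1 : ∀ η, η < c.ord → g η ∈ C ∧ η + 1 ≤ g η := by
    intro η hη
    simp only [hg, dif_pos hη]
    exact (pick η hη).choose_spec
  set f : Ordinal.{u} → Set Ordinal.{u} := fun η => {ξ | g η + 1 ≤ ξ ∧ ξ < c.ord} with hf
  have hfs : ∀ η < c.ord, f η ∈ F.sets := by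
    intro η hη
    exact F.uniform (g η + 1) (succ_lt_kappa hunc (hC.1 (hg1 η hη).1))
  have hDI := F.normal f hfs
  have h1 := F.uniform 1 (by exact_mod_cast nat_lt_kappa hunc 1)
  have hY := F.inter_mem _ hDI _ h1
  refine F.superset_mem _ hY C ?_ hC.1
  rintro ξ ⟨⟨hξκ, hdi⟩, h1ξ, _⟩
  have h0 : (0:Ordinal.{u}) < ξ := lt_of_lt_of_le (by norm_num) h1ξ
  set s : Set Ordinal.{u} := g '' Set.Iio ξ with hs
  have hsC : s ⊆ C := by
    rintro x ⟨η, hη, rfl⟩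
    exact (hg1 η (hη.trans hξκ)).1
  have hne : s.Nonempty := ⟨g 0, 0, h0, rfl⟩
  have hub : ∀ η < ξ, g η < ξ := by
    intro η hη
    have := hdi η hη
    exact lt_of_lt_of_le (olt_succ (g η)) this.1
  have hbdd : BddAbove s := ⟨ξ, by rintro x ⟨η, hη, rfl⟩; exact (hub η hη).le⟩
  have hsup : sSup s = ξ := by
    apply le_antisymm
    · refine csSup_le hne ?_
      rintro x ⟨η, hη, rfl⟩
      exact (hub η hη).le
    · refine le_of_forall_lt fun η hη => ?_
      calc η < η + 1 := olt_succ η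
        _ ≤ g η := (hg1 η (hη.trans hξκ)).2
        _ ≤ sSup s := le_csSup hbdd ⟨η, hη, rfl⟩
  have := hC.2.2 s hsC hne (hsup ▸ hξκ)
  rwa [hsup] at this

theorem NUF_mem_stationary (hunc : Cardinal.aleph0 < c) (F : NormalUniformFilter c.ord)
    {X : Set Ordinal.{u}} (hX : X ∈ F.sets) : IsStationaryIn c.ord X := by
  intro C hC
  have := F.inter_mem _ hX _ (club_mem_NUF hunc F hC)
  rw [Set.nonempty_iff_ne_empty]
  intro h
  rw [h] at this
  exact F.empty_not_mem this

theorem mk_Iio_ord : #(Set.Iio c.ord) = Cardinal.lift.{u+1,u} c := by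
  rw [Ordinal.mk_Iio_ordinal, Cardinal.card_ord]

/-- a pairing injection on `Iio κ` -/
theorem exists_pairing (hunc : Cardinal.aleph0 < c) :
    ∃ q : Ordinal.{u} → Ordinal.{u} → Ordinal.{u},
      (∀ α < c.ord, ∀ β < c.ord, q α β < c.ord) ∧
      (∀ α α' β β', α < c.ord → α' < c.ord → β < c.ord → β' < c.ord →
        q α β = q α' β' → α = α' ∧ β = β') := by
  classical
  have hcard : #(↥(Set.Iio c.ord) × ↥(Set.Iio c.ord)) ≤ #(↥(Set.Iio c.ord)) := by
    rw [Cardinal.mk_prod, mk_Iio_ord, Cardinal.lift_id,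
      Cardinal.mul_eq_self (Cardinal.aleph0_le_lift.2 hunc.le)]
  obtain ⟨e⟩ := Cardinal.le_def _ _ |>.1 hcard
  set q : Ordinal.{u} → Ordinal.{u} → Ordinal.{u} := fun α β =>
    if h : α < c.ord ∧ β < c.ord then (e (⟨α, h.1⟩, ⟨β, h.2⟩) : Ordinal.{u}) else 0 with hq
  refine ⟨q, ?_, ?_⟩
  · intro α hα β hβ
    simp only [hq, dif_pos (And.intro hα hβ)]
    exact (e (⟨α, hα⟩, ⟨β, hβ⟩)).2
  · intro α α' β β' hα hα' hβ hβ' heq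
    simp only [hq, dif_pos (And.intro hα hβ), dif_pos (And.intro hα' hβ')] at heq
    have := e.injective (Subtype.ext heq)
    exact ⟨congrArg (fun p => (p.1 : Ordinal.{u})) this, congrArg (fun p => (p.2 : Ordinal.{u})) this⟩

/-- branches indexed by ordinals below `(2^c).ord`, distinct below `c.ord` -/
theorem exists_branches (hunc : Cardinal.aleph0 < c) :
    ∃ s : Ordinal.{u} → Ordinal.{u} → Bool,
      ∀ β β', β < ((2:Cardinal.{u}) ^ c).ord → β' < ((2:Cardinal.{u}) ^ c).ord →
        (∀ η < c.ord, s β η = s β' η) → β = β' := by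
  classical
  have hcard : #(↥(Set.Iio ((2:Cardinal.{u}) ^ c).ord)) ≤ #(↥(Set.Iio c.ord) → Bool) := by
    rw [mk_Iio_ord, Cardinal.mk_arrow, mk_Iio_ord, Cardinal.mk_bool, Cardinal.lift_two,
      Cardinal.lift_uzero, Cardinal.lift_power, Cardinal.lift_two]
  obtain ⟨e⟩ := Cardinal.le_def _ _ |>.1 hcard
  set s : Ordinal.{u} → Ordinal.{u} → Bool := fun β η =>
    if hβ : β < ((2:Cardinal.{u}) ^ c).ord then
      (if hη : η < c.ord then e ⟨β, hβ⟩ ⟨η, hη⟩ else false) else false with hs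
  refine ⟨s, fun β β' hβ hβ' hagree => ?_⟩
  have : e ⟨β, hβ⟩ = e ⟨β', hβ'⟩ := by
    funext η
    have h2 : (η : Ordinal.{u}) < c.ord := η.2
    have := hagree η h2
    simpa only [hs, dif_pos hβ, dif_pos hβ', dif_pos h2, Subtype.coe_eta] using this
  exact congrArg Subtype.val (e.injective this)




/-- (2) → (1) -/
theorem two_to_one (hreg : c.IsRegular) (hunc : Cardinal.aleph0 < c)
    (h : ∃ d : Ordinal → Ordinal → Set Ordinal,
      (∀ β < c.ord, IsKappaList c.ord (d β)) ∧ JointGuess c.ord (Set.Iio c.ord) d) :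
    ∃ d : Ordinal → Set Ordinal, IsKappaList c.ord d ∧
      ∀ a ⊆ Set.Iio c.ord, IsStationaryIn c.ord (guessSet c.ord d a) := by
  obtain ⟨d, hlist, hjoint⟩ := h
  have h0 : (0:Ordinal.{u}) < c.ord := (kappa_isLimit hunc).pos
  refine ⟨d 0, hlist 0 h0, ?_⟩
  intro a ha
  obtain ⟨F, hF⟩ := hjoint (fun _ => a) (fun _ _ => ha)
  exact NUF_mem_stationary hunc F (hF 0 h0)

/-- (3) → (2) -/
theorem three_to_two (hunc : Cardinal.aleph0 < c)
    (h : ∃ d : Ordinal → Ordinal → Set Ordinal,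
      (∀ β < ((2:Cardinal.{u}) ^ c).ord, IsKappaList c.ord (d β)) ∧
        JointGuess c.ord (Set.Iio ((2:Cardinal.{u}) ^ c).ord) d) :
    ∃ d : Ordinal → Ordinal → Set Ordinal,
      (∀ β < c.ord, IsKappaList c.ord (d β)) ∧ JointGuess c.ord (Set.Iio c.ord) d := by
  classical
  obtain ⟨d, hlist, hjoint⟩ := h
  have hle : c.ord ≤ ((2:Cardinal.{u}) ^ c).ord :=
    Cardinal.ord_le_ord.2 (Cardinal.cantor c).le
  refine ⟨d, fun β hβ => hlist β (hβ.trans_le hle), ?_⟩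
  intro a ha
  set a' : Ordinal.{u} → Set Ordinal.{u} := fun β => if β < c.ord then a β else ∅ with ha'
  have hsub : ∀ β ∈ Set.Iio ((2:Cardinal.{u}) ^ c).ord, a' β ⊆ Set.Iio c.ord := by
    intro β _
    by_cases hβ : β < c.ord
    · simp only [ha', if_pos hβ]; exact ha β hβ
    · simp only [ha', if_neg hβ]; exact empty_subset _
  obtain ⟨F, hF⟩ := hjoint a' hsub
  refine ⟨F, fun β hβ => ?_⟩
  rw [Set.mem_Iio] at hβ
  have := hF β (Set.mem_Iio.2 (lt_of_lt_of_le hβ hle))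
  simpa only [ha', if_pos hβ] using this

/-- (4) → (3) -/
theorem four_to_three (hreg : c.IsRegular) (hunc : Cardinal.aleph0 < c)
    (h : ∃ D : Ordinal → (Ordinal → Bool) → Set Ordinal, IsDiamondTree c.ord D) :
    ∃ d : Ordinal → Ordinal → Set Ordinal,
      (∀ β < ((2:Cardinal.{u}) ^ c).ord, IsKappaList c.ord (d β)) ∧
        JointGuess c.ord (Set.Iio ((2:Cardinal.{u}) ^ c).ord) d := by
  classical
  obtain ⟨D, hD1, hD2, hD3⟩ := h
  obtain ⟨s, hs⟩ := exists_branches (c := c) hunc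
  set d : Ordinal.{u} → Ordinal.{u} → Set Ordinal.{u} :=
    fun β ξ => D ξ (s β) ∩ Set.Iio ξ with hd
  refine ⟨d, ?_, ?_⟩
  · intro β _ ξ _
    exact Set.inter_subset_right
  · intro a ha
    set A : (Ordinal.{u} → Bool) → Set Ordinal.{u} := fun t =>
      ⋃₀ {x | ∃ β, β < ((2:Cardinal.{u}) ^ c).ord ∧ (∀ η < c.ord, s β η = t η) ∧ x = a β}
      with hA
    have hA1 : ∀ t, A t ⊆ Set.Iio c.ord := by
      rintro t x ⟨y, ⟨β, hβ, _, rfl⟩, hxy⟩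
      exact ha β hβ hxy
    have hA2 : ∀ t t' : Ordinal.{u} → Bool, (∀ η < c.ord, t η = t' η) → A t = A t' := by
      intro t t' hag
      ext x
      simp only [hA, Set.mem_sUnion, Set.mem_setOf_eq]
      constructor
      · rintro ⟨y, ⟨β, hβ, hagr, rfl⟩, hxy⟩
        exact ⟨a β, ⟨β, hβ, fun η hη => (hagr η hη).trans (hag η hη), rfl⟩, hxy⟩
      · rintro ⟨y, ⟨β, hβ, hagr, rfl⟩, hxy⟩
        exact ⟨a β, ⟨β, hβ, fun η hη => (hagr η hη).trans (hag η hη).symm, rfl⟩, hxy⟩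
    have hAs : ∀ β, β < ((2:Cardinal.{u}) ^ c).ord → A (s β) = a β := by
      intro β hβ
      apply Set.eq_of_subset_of_subset
      · rintro x ⟨y, ⟨β', hβ', hagr, rfl⟩, hxy⟩
        have : β' = β := hs β' β hβ' hβ hagr
        exact this ▸ hxy
      · intro x hx
        exact ⟨a β, ⟨β, hβ, fun _ _ => rfl, rfl⟩, hx⟩
    obtain ⟨F, hF⟩ := hD3 A hA1 hA2
    refine ⟨F, fun β hβ => ?_⟩
    rw [Set.mem_Iio] at hβ
    have hmem := hF (s β)
    refine F.superset_mem _ hmem _ ?_ (fun x hx => hx.1)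
    rintro ξ ⟨hξ, hDξ⟩
    refine ⟨hξ, ?_⟩
    rw [hd]
    simp only
    rw [hDξ, hAs β hβ]
    ext x
    simp only [Set.mem_inter_iff, Set.mem_Iio, and_assoc]
    tauto

/-! ### (1) → (4): construction of the diamond tree -/

/-- the diamond tree built from a diamond sequence `d` and pairing `q` -/
def DTree (q : Ordinal.{u} → Ordinal.{u} → Ordinal.{u}) (d : Ordinal.{u} → Set Ordinal.{u}) :
    Ordinal.{u} → (Ordinal.{u} → Bool) → Set Ordinal.{u} := fun ξ s =>
  {η | η < ξ ∧ ∃ α < ξ,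
    ({θ | θ < ξ ∧ q α (q 0 θ) ∈ d ξ} = {θ | θ < ξ ∧ s θ = true}) ∧ q α (q 1 η) ∈ d ξ}

section OneToFour

variable (hreg : c.IsRegular) (hunc : Cardinal.aleph0 < c)
  (q : Ordinal.{u} → Ordinal.{u} → Ordinal.{u})
  (hq1 : ∀ α < c.ord, ∀ β < c.ord, q α β < c.ord)
  (hq2 : ∀ α α' β β', α < c.ord → α' < c.ord → β < c.ord → β' < c.ord →
    q α β = q α' β' → α = α' ∧ β = β')
  (d : Ordinal.{u} → Set Ordinal.{u})
  (hstat : ∀ a ⊆ Set.Iio c.ord, IsStationaryIn c.ord (guessSet c.ord d a))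
  (a : (Ordinal.{u} → Bool) → Set Ordinal.{u})
  (ha1 : ∀ s, a s ⊆ Set.Iio c.ord)
  (ha2 : ∀ s t : Ordinal.{u} → Bool, (∀ η < c.ord, s η = t η) → a s = a t)

include hreg hunc hq1 hq2 hstat ha2 in
/-- the core guessing lemma: diagonal intersections of guessing sets of the tree
meet every club -/
theorem core_lemma (σ : Ordinal.{u} → (Ordinal.{u} → Bool)) {C : Set Ordinal.{u}}
    (hC : IsClubIn c.ord C) :
    (C ∩ {ξ | ξ < c.ord ∧ ∀ α < ξ,
      DTree q d ξ (σ α) = a (σ α) ∩ Set.Iio ξ}).Nonempty := by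
  classical
  have h0κ : (0:Ordinal.{u}) < c.ord := nat_lt_kappa hunc 0
  have h1κ : (1:Ordinal.{u}) < c.ord := by exact_mod_cast nat_lt_kappa hunc 1
  -- the coded target
  set A : Set Ordinal.{u} := {γ | ∃ α, α < c.ord ∧ ∃ η, η < c.ord ∧
    ((σ α η = true ∧ γ = q α (q 0 η)) ∨ (η ∈ a (σ α) ∧ γ = q α (q 1 η)))} with hA
  have hAsub : A ⊆ Set.Iio c.ord := by
    rintro γ ⟨α, hα, η, hη, hcase⟩
    rcases hcase with ⟨_, rfl⟩ | ⟨_, rfl⟩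
    · exact hq1 α hα _ (hq1 0 h0κ η hη)
    · exact hq1 α hα _ (hq1 1 h1κ η hη)
  -- separation function
  have wex : ∀ α α' : Ordinal.{u}, (∃ η, η < c.ord ∧ σ α η ≠ σ α' η) ∨
      ¬ (∃ η, η < c.ord ∧ σ α η ≠ σ α' η) := fun _ _ => em _
  set w : Ordinal.{u} → Ordinal.{u} → Ordinal.{u} := fun α α' =>
    if h : ∃ η, η < c.ord ∧ σ α η ≠ σ α' η then h.choose else 0 with hw
  have hwlt : ∀ α α', w α α' < c.ord := by
    intro α α'
    by_cases h : ∃ η, η < c.ord ∧ σ α η ≠ σ α' η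
    · simp only [hw, dif_pos h]; exact h.choose_spec.1
    · simp only [hw, dif_neg h]; exact h0κ
  have hwspec : ∀ α α', (∃ η, η < c.ord ∧ σ α η ≠ σ α' η) →
      σ α (w α α') ≠ σ α' (w α α') := by
    intro α α' h
    simp only [hw, dif_pos h]
    exact h.choose_spec.2
  -- the closure club
  set g : Ordinal.{u} → Ordinal.{u} → Ordinal.{u} := fun α β => max (q α β) (w α β) with hg
  have hglt : ∀ α < c.ord, ∀ β < c.ord, g α β < c.ord := fun α hα β hβ =>
    max_lt (hq1 α hα β hβ) (hwlt α β)
  have hE := cl2_isClub hreg hunc g hglt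
  obtain ⟨C', hC', hC'sub⟩ := club_inter hreg hunc hC hE
  have hC'' := club_tail_inter hunc hC' (α := 2) (by exact_mod_cast nat_lt_kappa hunc 2)
  obtain ⟨ξ, hξS, hξC''⟩ := hstat A hAsub _ hC''
  obtain ⟨hξκ, hdξ⟩ := hξS
  obtain ⟨hξC', h2ξ, -⟩ := hξC''
  obtain ⟨hξC, hξE⟩ := hC'sub hξC'
  obtain ⟨-, hξ0, hξcl⟩ := hξE
  have hξ1 : (1:Ordinal.{u}) < ξ := lt_of_lt_of_le (by norm_num) h2ξ
  have hqcl : ∀ α < ξ, ∀ β < ξ, q α β < ξ := by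
    intro α hα β hβ
    exact lt_of_le_of_lt (le_max_left _ _) (hξcl α hα β hβ)
  have hwcl : ∀ α < ξ, ∀ β < ξ, w α β < ξ := by
    intro α hα β hβ
    exact lt_of_le_of_lt (le_max_right _ _) (hξcl α hα β hβ)
  -- computation of the first components
  have hT : ∀ α' < ξ, {θ | θ < ξ ∧ q α' (q 0 θ) ∈ d ξ} = {θ | θ < ξ ∧ σ α' θ = true} := by
    intro α' hα'
    have hα'κ : α' < c.ord := hα'.trans hξκ
    ext θ
    simp only [Set.mem_setOf_eq, hdξ]
    constructor
    · rintro ⟨hθξ, hmem, -⟩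
      refine ⟨hθξ, ?_⟩
      obtain ⟨α'', hα''κ, η, hηκ, hcase⟩ := hmem
      have hθκ : θ < c.ord := hθξ.trans hξκ
      rcases hcase with ⟨htrue, heq⟩ | ⟨-, heq⟩
      · obtain ⟨he1, he2⟩ := hq2 α' α'' (q 0 θ) (q 0 η) hα'κ hα''κ
          (hq1 0 h0κ θ hθκ) (hq1 0 h0κ η hηκ) heq
        obtain ⟨-, he3⟩ := hq2 0 0 θ η h0κ h0κ hθκ hηκ he2
        rw [he1, he3]; exact htrue
      · obtain ⟨-, he2⟩ := hq2 α' α'' (q 0 θ) (q 1 η) hα'κ hα''κ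
          (hq1 0 h0κ θ hθκ) (hq1 1 h1κ η hηκ) heq
        obtain ⟨he01, -⟩ := hq2 0 1 θ η h0κ h1κ (hθξ.trans hξκ) hηκ he2
        exact absurd he01 zero_ne_one
    · rintro ⟨hθξ, htrue⟩
      have hθκ : θ < c.ord := hθξ.trans hξκ
      refine ⟨hθξ, ⟨α', hα'κ, θ, hθκ, Or.inl ⟨htrue, rfl⟩⟩, ?_⟩
      exact hqcl α' hα' (q 0 θ) (hqcl 0 hξ0 θ hθξ)
  -- computation of the second components
  have hV : ∀ α' < ξ, {η | η < ξ ∧ q α' (q 1 η) ∈ d ξ} = a (σ α') ∩ Set.Iio ξ := by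
    intro α' hα'
    have hα'κ : α' < c.ord := hα'.trans hξκ
    ext η
    simp only [Set.mem_setOf_eq, hdξ, Set.mem_inter_iff, Set.mem_Iio]
    constructor
    · rintro ⟨hηξ, hmem, -⟩
      refine ⟨?_, hηξ⟩
      obtain ⟨α'', hα''κ, η', hη'κ, hcase⟩ := hmem
      have hηκ : η < c.ord := hηξ.trans hξκ
      rcases hcase with ⟨-, heq⟩ | ⟨hmem', heq⟩
      · obtain ⟨-, he2⟩ := hq2 α' α'' (q 1 η) (q 0 η') hα'κ hα''κ
          (hq1 1 h1κ η hηκ) (hq1 0 h0κ η' hη'κ) heq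
        obtain ⟨he10, -⟩ := hq2 1 0 η η' h1κ h0κ hηκ hη'κ he2
        exact absurd he10 one_ne_zero
      · obtain ⟨he1, he2⟩ := hq2 α' α'' (q 1 η) (q 1 η') hα'κ hα''κ
          (hq1 1 h1κ η hηκ) (hq1 1 h1κ η' hη'κ) heq
        obtain ⟨-, he3⟩ := hq2 1 1 η η' h1κ h1κ hηκ hη'κ he2
        rw [he1, he3]; exact hmem'
    · rintro ⟨hmem, hηξ⟩
      have hηκ : η < c.ord := hηξ.trans hξκ
      refine ⟨hηξ, ⟨α', hα'κ, η, hηκ, Or.inr ⟨hmem, rfl⟩⟩, ?_⟩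
      exact hqcl α' hα' (q 1 η) (hqcl 1 hξ1 η hηξ)
  -- separation
  have hSep : ∀ α < ξ, ∀ α' < ξ,
      ({θ | θ < ξ ∧ σ α' θ = true} = {θ | θ < ξ ∧ σ α θ = true}) → a (σ α') = a (σ α) := by
    intro α hα α' hα' hset
    refine ha2 _ _ ?_
    intro η hηκ
    by_contra hne
    have hex : ∃ η', η' < c.ord ∧ σ α' η' ≠ σ α η' := ⟨η, hηκ, hne⟩
    have hwer := hwspec α' α hex
    have hwξ : w α' α < ξ := hwcl α' hα' α hα
    have := Set.ext_iff.1 hset (w α' α)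
    simp only [Set.mem_setOf_eq] at this
    have hiff : σ α' (w α' α) = true ↔ σ α (w α' α) = true := by
      constructor
      · intro h; exact ((this.1 ⟨hwξ, h⟩).2)
      · intro h; exact ((this.2 ⟨hwξ, h⟩).2)
    refine hwer ?_
    by_cases hb : σ α' (w α' α) = true
    · rw [hb]; exact (hiff.1 hb).symm
    · have h1 : σ α' (w α' α) = false := by revert hb; cases σ α' (w α' α) <;> simp
      have h2 : σ α (w α' α) = false := by
        by_cases hb' : σ α (w α' α) = true
        · exact absurd (hiff.2 hb') hb
        · revert hb'; cases σ α (w α' α) <;> simp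
      rw [h1, h2]
  -- conclusion
  refine ⟨ξ, hξC, hξκ, ?_⟩
  intro α hα
  have hακ : α < c.ord := hα.trans hξκ
  ext η
  simp only [DTree, Set.mem_setOf_eq, Set.mem_inter_iff, Set.mem_Iio]
  constructor
  · rintro ⟨hηξ, α', hα', hcond, hmem⟩
    have hcond' : {θ | θ < ξ ∧ σ α' θ = true} = {θ | θ < ξ ∧ σ α θ = true} := by
      rw [← hT α' hα', hcond]
    have haeq := hSep α hα α' hα' hcond'
    have : η ∈ a (σ α') ∩ Set.Iio ξ := by
      rw [← hV α' hα']
      exact ⟨hηξ, hmem⟩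
    rw [haeq] at this
    exact ⟨this.1, this.2⟩
  · rintro ⟨hmem, hηξ⟩
    refine ⟨hηξ, α, hα, ?_, ?_⟩
    · rw [hT α hα]
    · have : η ∈ {η | η < ξ ∧ q α (q 1 η) ∈ d ξ} := by
        rw [hV α hα]
        exact ⟨hmem, hηξ⟩
      exact this.2



/-- diagonal intersection of tree guessing sets along `σ` -/
def DIset (κ : Ordinal.{u}) (D : Ordinal.{u} → (Ordinal.{u} → Bool) → Set Ordinal.{u})
    (a : (Ordinal.{u} → Bool) → Set Ordinal.{u}) (σ : Ordinal.{u} → (Ordinal.{u} → Bool)) :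
    Set Ordinal.{u} :=
  {ξ | ξ < κ ∧ ∀ α < ξ, D ξ (σ α) = a (σ α) ∩ Set.Iio ξ}

include hreg hunc hq1 hq2 in
/-- flattening a doubly-indexed family of branches -/
theorem flatten_lemma (δ : Ordinal.{u} → Ordinal.{u} → (Ordinal.{u} → Bool)) :
    ∃ τ : Ordinal.{u} → (Ordinal.{u} → Bool), ∃ E, IsClubIn c.ord E ∧
      E ∩ DIset c.ord (DTree q d) a τ ⊆
        {ξ | ξ < c.ord ∧ ∀ α < ξ, ∀ β < ξ, DTree q d ξ (δ α β) = a (δ α β) ∩ Set.Iio ξ} := by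
  classical
  set τ : Ordinal.{u} → (Ordinal.{u} → Bool) := fun γ =>
    if h : ∃ p : Ordinal.{u} × Ordinal.{u}, p.1 < c.ord ∧ p.2 < c.ord ∧ q p.1 p.2 = γ then
      δ h.choose.1 h.choose.2 else δ 0 0 with hτ
  refine ⟨τ, cl2 c.ord q, cl2_isClub hreg hunc q hq1, ?_⟩
  rintro ξ ⟨⟨hξκ, -, hξcl⟩, -, hdi⟩
  refine ⟨hξκ, ?_⟩
  intro α hα β hβ
  have hγ : q α β < ξ := hξcl α hα β hβ
  have hDI := hdi (q α β) hγ
  have hex : ∃ p : Ordinal.{u} × Ordinal.{u}, p.1 < c.ord ∧ p.2 < c.ord ∧ q p.1 p.2 = q α β :=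
    ⟨(α, β), hα.trans hξκ, hβ.trans hξκ, rfl⟩
  have hspec := hex.choose_spec
  obtain ⟨he1, he2⟩ := hq2 _ _ _ _ hspec.1 (hα.trans hξκ) hspec.2.1 (hβ.trans hξκ) hspec.2.2
  have hτval : τ (q α β) = δ α β := by
    simp only [hτ, dif_pos hex]
    rw [he1, he2]
  rwa [hτval] at hDI

include hreg hunc hq1 hq2 hstat ha2 in
/-- the filter witnessing that `DTree q d` is a diamond tree -/
theorem exists_NUF :
    ∃ F : NormalUniformFilter c.ord, ∀ s : Ordinal.{u} → Bool,
      {ξ : Ordinal.{u} | ξ < c.ord ∧ DTree q d ξ s = a s ∩ Set.Iio ξ} ∈ F.sets := by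
  classical
  set DI : (Ordinal.{u} → (Ordinal.{u} → Bool)) → Set Ordinal.{u} :=
    DIset c.ord (DTree q d) a with hDI
  set FF : Set (Set Ordinal.{u}) := {X | X ⊆ Set.Iio c.ord ∧
    ∃ σ, ∃ C, IsClubIn c.ord C ∧ C ∩ DI σ ⊆ X} with hFF
  have hcore : ∀ σ, ∀ C, IsClubIn c.ord C → (C ∩ DI σ).Nonempty := by
    intro σ C hC
    exact core_lemma hreg hunc q hq1 hq2 d hstat a ha2 σ hC
  have h1κ : (1:Ordinal.{u}) < c.ord := by exact_mod_cast nat_lt_kappa hunc 1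
  refine ⟨⟨FF, ?_, ?_, ?_, ?_, ?_, ?_, ?_⟩, ?_⟩
  · -- sets_subset
    exact fun X hX => hX.1
  · -- univ_mem
    exact ⟨subset_rfl, fun _ _ => false, Set.Iio c.ord, Iio_isClub hunc,
      Set.inter_subset_left⟩
  · -- empty_not_mem
    rintro ⟨-, σ, C, hC, hsub⟩
    obtain ⟨ξ, hξ⟩ := hcore σ C hC
    exact (hsub hξ)
  · -- superset_mem
    rintro X ⟨-, σ, C, hC, hsub⟩ Y hXY hY
    exact ⟨hY, σ, C, hC, hsub.trans hXY⟩
  · -- inter_mem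
    rintro X ⟨hX, σ, C, hC, hXs⟩ Y ⟨hY, σ', C', hC', hYs⟩
    set δ : Ordinal.{u} → Ordinal.{u} → (Ordinal.{u} → Bool) := fun α β =>
      if β = 0 then σ α else σ' α with hδ
    obtain ⟨τ, E, hE, hEs⟩ := flatten_lemma hreg hunc q hq1 hq2 d a δ
    obtain ⟨C₀, hC₀, hC₀s⟩ := club_inter hreg hunc hC hC'
    obtain ⟨C₁, hC₁, hC₁s⟩ := club_inter hreg hunc hC₀ hE
    have hC₂ := club_tail_inter hunc hC₁ (α := 2) (by exact_mod_cast nat_lt_kappa hunc 2)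
    refine ⟨fun x hx => hX hx.1, τ, _, hC₂, ?_⟩
    rintro ξ ⟨⟨hξ1, h2ξ, -⟩, hξDI⟩
    obtain ⟨hξ0, hξE⟩ := hC₁s hξ1
    obtain ⟨hξC, hξC'⟩ := hC₀s hξ0
    have hflat := hEs ⟨hξE, hξDI⟩
    have h0ξ : (0:Ordinal.{u}) < ξ := lt_of_lt_of_le (by norm_num) h2ξ
    have h1ξ : (1:Ordinal.{u}) < ξ := lt_of_lt_of_le (by norm_num) h2ξ
    constructor
    · refine hXs ⟨hξC, hflat.1, ?_⟩
      intro α hα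
      have := hflat.2 α hα 0 h0ξ
      simpa only [hδ, if_pos rfl] using this
    · refine hYs ⟨hξC', hflat.1, ?_⟩
      intro α hα
      have := hflat.2 α hα 1 h1ξ
      simpa only [hδ, if_neg one_ne_zero] using this
  · -- uniform
    intro α hα
    exact ⟨fun x hx => hx.2, fun _ _ => false, _, tail_isClub hunc hα,
      Set.inter_subset_left⟩
  · -- normal
    intro f hf
    have hch : ∀ α, α < c.ord → ∃ p : (Ordinal.{u} → (Ordinal.{u} → Bool)) × Set Ordinal.{u},
        IsClubIn c.ord p.2 ∧ p.2 ∩ DI p.1 ⊆ f α := by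
      intro α hα
      obtain ⟨-, σ, C, hC, hsub⟩ := hf α hα
      exact ⟨(σ, C), hC, hsub⟩
    set P : Ordinal.{u} → (Ordinal.{u} → (Ordinal.{u} → Bool)) × Set Ordinal.{u} := fun α =>
      if hα : α < c.ord then (hch α hα).choose else (fun _ _ => false, Set.Iio c.ord) with hP
    have hPspec : ∀ α, α < c.ord → IsClubIn c.ord (P α).2 ∧ (P α).2 ∩ DI (P α).1 ⊆ f α := by
      intro α hα
      simp only [hP, dif_pos hα]
      exact (hch α hα).choose_spec
    obtain ⟨Cd, hCd, hCds⟩ := club_diag hreg hunc (fun α => (P α).2)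
      (fun α hα => (hPspec α hα).1)
    obtain ⟨τ, E, hE, hEs⟩ := flatten_lemma hreg hunc q hq1 hq2 d a (fun α β => (P α).1 β)
    obtain ⟨C₀, hC₀, hC₀s⟩ := club_inter hreg hunc hCd hE
    refine ⟨fun x hx => Set.mem_Iio.2 hx.1, τ, C₀, hC₀, ?_⟩
    rintro ξ ⟨hξ0, hξDI⟩
    obtain ⟨hξCd, hξE⟩ := hC₀s hξ0
    have hflat := hEs ⟨hξE, hξDI⟩
    refine ⟨hflat.1, ?_⟩
    intro α hα
    have hακ : α < c.ord := hα.trans hflat.1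
    refine (hPspec α hακ).2 ⟨hCds ξ hξCd α hα, hflat.1, ?_⟩
    intro β hβ
    exact hflat.2 α hα β hβ
  · -- the guessing sets belong to the filter
    intro s
    refine ⟨fun x hx => hx.1, fun _ => s, _, tail_isClub hunc h1κ, ?_⟩
    rintro ξ ⟨⟨h1ξ, -⟩, hξκ, hdi⟩
    exact ⟨hξκ, hdi 0 (lt_of_lt_of_le (by norm_num) h1ξ)⟩

include hreg hunc in
/-- (1) → (4) -/
theorem one_to_four (h : ∃ d : Ordinal.{u} → Set Ordinal.{u}, IsKappaList c.ord d ∧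
      ∀ a ⊆ Set.Iio c.ord, IsStationaryIn c.ord (guessSet c.ord d a)) :
    ∃ D : Ordinal.{u} → (Ordinal.{u} → Bool) → Set Ordinal.{u}, IsDiamondTree c.ord D := by
  obtain ⟨d', -, hstat'⟩ := h
  obtain ⟨q', hq1', hq2'⟩ := exists_pairing (c := c) hunc
  refine ⟨DTree q' d', ?_, ?_, ?_⟩
  · intro ξ hξ s η hη
    exact Set.mem_Iio.2 (hη.1.trans hξ)
  · intro ξ hξ s t hag
    have hst : {θ | θ < ξ ∧ s θ = true} = {θ | θ < ξ ∧ t θ = true} := by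
      ext θ
      exact ⟨fun ⟨h1, h2⟩ => ⟨h1, (hag θ h1) ▸ h2⟩, fun ⟨h1, h2⟩ => ⟨h1, (hag θ h1).symm ▸ h2⟩⟩
    unfold DTree
    rw [hst]
  · intro a' ha1' ha2'
    exact exists_NUF hreg hunc q' hq1' hq2' d' hstat' a' ha2'

end OneToFour

/-- For a regular uncountable cardinal `κ` the following are equivalent:
(1) there is a `◊_κ`-sequence, i.e. a `κ`-list all of whose guessing sets are
stationary; (2) there is a `jd_{κ,κ}`-sequence; (3) there is a
`jd_{κ,2^κ}`-sequence; (4) there is a `◊_κ`-tree. -/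
theorem stmt6 (c : Cardinal) (hreg : c.IsRegular) (hunc : Cardinal.aleph0 < c) :
    List.TFAE
      [ ∃ d : Ordinal → Set Ordinal, IsKappaList c.ord d ∧
          ∀ a ⊆ Set.Iio c.ord, IsStationaryIn c.ord (guessSet c.ord d a),
        ∃ d : Ordinal → Ordinal → Set Ordinal,
          (∀ β < c.ord, IsKappaList c.ord (d β)) ∧
            JointGuess c.ord (Set.Iio c.ord) d,
        ∃ d : Ordinal → Ordinal → Set Ordinal,
          (∀ β < ((2 : Cardinal) ^ c).ord, IsKappaList c.ord (d β)) ∧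
            JointGuess c.ord (Set.Iio ((2 : Cardinal) ^ c).ord) d,
        ∃ D : Ordinal → (Ordinal → Bool) → Set Ordinal, IsDiamondTree c.ord D ] := by
  tfae_have 1 → 4
  · exact fun h => one_to_four hreg hunc h
  tfae_have 4 → 3
  · exact fun h => four_to_three hreg hunc h
  tfae_have 3 → 2
  · exact fun h => three_to_two hunc h
  tfae_have 2 → 1
  · exact fun h => two_to_one hreg hunc h
  tfae_finish
end

section
/- Suppose that for every cardinal λ < 𝔠 and every family 𝒟 of fewer than 𝔠 dense subsets of the Cohen poset Add(ω,λ) there is a filter on Add(ω,λ) meeting every member of 𝒟. Then the same holds for every cardinal κ: for every family 𝒟 of fewer than 𝔠 dense subsets of Add(ω,κ) there is a filter on Add(ω,κ) meeting every member of 𝒟. (That is, Martin's axiom for Cohen posets is equivalent to its restriction to Cohen posets Add(ω,λ) with λ < 𝔠.) -/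
/-- The Cohen poset of finite partial functions from `X` to `2`, ordered by reverse
inclusion. A condition is (the graph of) a finite partial function, coded as a finite
set of pairs `(x, b)` containing at most one pair for each `x`. -/
def CohenPoset (X : Type) : Type :=
  {s : Finset (X × Bool) // ∀ x b₁ b₂, (x, b₁) ∈ s → (x, b₂) ∈ s → b₁ = b₂}

instance (X : Type) : PartialOrder (CohenPoset X) where
  le p q := q.1 ⊆ p.1
  le_refl p := Finset.Subset.refl _
  le_trans p q r hpq hqr := Finset.Subset.trans hqr hpq
  le_antisymm p q h₁ h₂ := Subtype.ext (Finset.Subset.antisymm h₂ h₁)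

lemma cp_le_def {X : Type} {p q : CohenPoset X} : p ≤ q ↔ q.1 ⊆ p.1 := Iff.rfl

lemma pairInj {X Y : Type} {f : X → Y} (hf : Function.Injective f) :
    Function.Injective (fun z : X × Bool => (f z.1, z.2)) := by
  intro z w h
  simp only [Prod.mk.injEq] at h
  exact Prod.ext (hf h.1) h.2

noncomputable def cpMap {X Y : Type} (f : X → Y) (hf : Function.Injective f)
    (p : CohenPoset X) : CohenPoset Y :=
  letI := Classical.decEq (Y × Bool)
  ⟨p.1.image (fun z => (f z.1, z.2)), by
    intro y b₁ b₂ h₁ h₂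
    simp only [Finset.mem_image] at h₁ h₂
    obtain ⟨z₁, hz₁, he₁⟩ := h₁
    obtain ⟨z₂, hz₂, he₂⟩ := h₂
    obtain ⟨hf₁, hb₁⟩ := Prod.mk.injEq .. ▸ he₁
    obtain ⟨hf₂, hb₂⟩ := Prod.mk.injEq .. ▸ he₂
    have hx : z₁.1 = z₂.1 := hf (hf₁.trans hf₂.symm)
    have := p.2 z₁.1 z₁.2 z₂.2 hz₁ (by rw [hx]; exact hz₂)
    rw [← hb₁, ← hb₂]; exact this⟩

lemma cpMap_val {X Y : Type} (f : X → Y) (hf : Function.Injective f) (p : CohenPoset X) :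
    (cpMap f hf p).1 = @Finset.image _ _ (Classical.decEq (Y × Bool)) (fun z => (f z.1, z.2)) p.1 := rfl

lemma cpMap_mem_iff {X Y : Type} (f : X → Y) (hf : Function.Injective f)
    (p : CohenPoset X) (z : Y × Bool) :
    z ∈ (cpMap f hf p).1 ↔ ∃ w ∈ p.1, (f w.1, w.2) = z := by
  rw [cpMap_val]
  letI := Classical.decEq (Y × Bool)
  exact Finset.mem_image

lemma cpMap_le_iff {X Y : Type} (f : X → Y) (hf : Function.Injective f)
    {p q : CohenPoset X} : cpMap f hf p ≤ cpMap f hf q ↔ p ≤ q := by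
  constructor
  · intro h z hz
    have h2 : (f z.1, z.2) ∈ (cpMap f hf q).1 := (cpMap_mem_iff f hf q _).mpr ⟨z, hz, rfl⟩
    obtain ⟨w, hw, hwe⟩ := (cpMap_mem_iff f hf p _).mp (h h2)
    rwa [← pairInj hf hwe]
  · intro h z hz
    obtain ⟨w, hw, rfl⟩ := (cpMap_mem_iff f hf q _).mp hz
    exact (cpMap_mem_iff f hf p _).mpr ⟨w, h hw, rfl⟩

lemma cpMap_surj {X Y : Type} (f : X → Y) (hf : Function.Injective f) (hX : Nonempty X)
    (q : CohenPoset Y) (hq : ∀ z ∈ q.1, z.1 ∈ Set.range f) :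
    ∃ p, cpMap f hf p = q := by
  classical
  set g := Function.invFun f with hg
  have hfg : ∀ z ∈ q.1, f (g z.1) = z.1 := fun z hz => Function.invFun_eq (hq z hz)
  refine ⟨⟨q.1.image (fun z => (g z.1, z.2)), ?_⟩, ?_⟩
  · intro x b₁ b₂ h₁ h₂
    simp only [Finset.mem_image] at h₁ h₂
    obtain ⟨z₁, hz₁, he₁⟩ := h₁
    obtain ⟨z₂, hz₂, he₂⟩ := h₂
    obtain ⟨hf₁, hb₁⟩ := Prod.mk.injEq .. ▸ he₁
    obtain ⟨hf₂, hb₂⟩ := Prod.mk.injEq .. ▸ he₂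
    have h1 : z₁.1 = z₂.1 := by
      rw [← hfg z₁ hz₁, ← hfg z₂ hz₂, hf₁, hf₂]
    have := q.2 z₁.1 z₁.2 z₂.2 hz₁ (by rw [h1]; exact hz₂)
    rw [← hb₁, ← hb₂]; exact this
  · apply Subtype.ext
    ext z
    refine (cpMap_mem_iff f hf _ z).trans ?_
    constructor
    · rintro ⟨w, hw, rfl⟩
      rw [Finset.mem_image] at hw
      obtain ⟨u, hu, rfl⟩ := hw
      rw [hfg u hu]
      exact hu
    · intro hz
      exact ⟨(g z.1, z.2), Finset.mem_image_of_mem _ hz, by rw [hfg z hz]⟩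

lemma cpMap_mem {X Y : Type} (f : X → Y) (hf : Function.Injective f)
    (p : CohenPoset X) (z : Y × Bool) (hz : z ∈ (cpMap f hf p).1) :
    z.1 ∈ Set.range f := by
  obtain ⟨w, _, hw⟩ := (cpMap_mem_iff f hf p z).mp hz
  exact ⟨w.1, by rw [← hw]⟩

open Cardinal in
lemma aux_mk_supported {X : Type} (Y : Set X) (hY : Y.Infinite) :
    #{p : CohenPoset X | ∀ z ∈ p.1, z.1 ∈ Y} ≤ #Y := by
  classical
  haveI : Infinite Y := hY.to_subtype
  have key : Function.Injective
      (fun p : {p : CohenPoset X | ∀ z ∈ p.1, z.1 ∈ Y} =>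
        ((p.1.1.subtype (fun z => z.1 ∈ Y)).image
          (fun z => ((⟨z.1.1, z.2⟩ : Y), z.1.2)) : Finset (Y × Bool))) := by
    intro p q hpq
    have hpq' : (p.1.1.subtype (fun z => z.1 ∈ Y)).image
          (fun z => ((⟨z.1.1, z.2⟩ : Y), z.1.2))
        = (q.1.1.subtype (fun z => z.1 ∈ Y)).image
          (fun z => ((⟨z.1.1, z.2⟩ : Y), z.1.2)) := hpq
    apply Subtype.ext; apply Subtype.ext
    ext z
    have hiff : ∀ (r : {p : CohenPoset X | ∀ z ∈ p.1, z.1 ∈ Y}) (z : X × Bool),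
        z ∈ r.1.1 ↔ ∃ hz : z.1 ∈ Y, ((⟨z.1, hz⟩ : Y), z.2) ∈
          (r.1.1.subtype (fun z => z.1 ∈ Y)).image (fun z => ((⟨z.1.1, z.2⟩ : Y), z.1.2)) := by
      intro r z
      constructor
      · intro hz
        refine ⟨r.2 z hz, ?_⟩
        rw [Finset.mem_image]
        exact ⟨⟨z, r.2 z hz⟩, by simp [Finset.mem_subtype, hz], rfl⟩
      · rintro ⟨hz, hmem⟩
        rw [Finset.mem_image] at hmem
        obtain ⟨w, hw, hwe⟩ := hmem
        rw [Finset.mem_subtype] at hw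
        obtain ⟨h1, h2⟩ := Prod.mk.injEq .. ▸ hwe
        have : w.1.1 = z.1 := congrArg Subtype.val h1
        have hw1 : w.1 = z := Prod.ext this h2
        rwa [hw1] at hw
    constructor
    · intro hz
      obtain ⟨h1, h2⟩ := (hiff p z).mp hz
      exact (hiff q z).mpr ⟨h1, hpq' ▸ h2⟩
    · intro hz
      obtain ⟨h1, h2⟩ := (hiff q z).mp hz
      exact (hiff p z).mpr ⟨h1, hpq' ▸ h2⟩
  calc #{p : CohenPoset X | ∀ z ∈ p.1, z.1 ∈ Y} ≤ #(Finset (Y × Bool)) := mk_le_of_injective key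
    _ = #(Y × Bool) := mk_finset_of_infinite _
    _ = #Y * 2 := by rw [mk_prod, lift_id, lift_id, mk_bool]
    _ ≤ #Y * ℵ₀ := mul_le_mul_right (by exact_mod_cast (nat_lt_aleph0 2).le) _
    _ = #Y := by
        rw [mul_eq_max (aleph0_le_mk Y) le_rfl, max_eq_left (aleph0_le_mk Y)]

/-- A subset `D` of a poset is dense if every condition has a lower bound in `D`. -/
def IsDenseIn {P : Type*} [LE P] (D : Set P) : Prop :=
  ∀ p : P, ∃ q ∈ D, q ≤ p

/-- A filter on a poset: a nonempty, upward closed, downward directed set. -/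
def IsPosetFilter {P : Type*} [LE P] (G : Set P) : Prop :=
  G.Nonempty ∧ (∀ p ∈ G, ∀ q, p ≤ q → q ∈ G) ∧
    ∀ p ∈ G, ∀ q ∈ G, ∃ r ∈ G, r ≤ p ∧ r ≤ q

open Cardinal in
lemma main_aux {X : Type} (x₀ : X)
    (h : ∀ lam : Cardinal, lam < Cardinal.continuum →
      ∀ 𝒟 : Set (Set (CohenPoset (lam.ord.ToType × ℕ))),
        Cardinal.mk 𝒟 < Cardinal.continuum → (∀ D ∈ 𝒟, IsDenseIn D) →
        ∃ G : Set (CohenPoset (lam.ord.ToType × ℕ)),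
          IsPosetFilter G ∧ ∀ D ∈ 𝒟, (G ∩ D).Nonempty)
    (𝒟 : Set (Set (CohenPoset (X × ℕ)))) (hcard : Cardinal.mk 𝒟 < Cardinal.continuum)
    (hdense : ∀ D ∈ 𝒟, IsDenseIn D) :
    ∃ G : Set (CohenPoset (X × ℕ)), IsPosetFilter G ∧ ∀ D ∈ 𝒟, (G ∩ D).Nonempty := by
  classical
  have hch : ∀ (D : Set (CohenPoset (X × ℕ))) (p : CohenPoset (X × ℕ)),
      ∃ q, D ∈ 𝒟 → q ∈ D ∧ q ≤ p := by
    intro D p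
    by_cases hD : D ∈ 𝒟
    · obtain ⟨q, hq, hle⟩ := hdense D hD p
      exact ⟨q, fun _ => ⟨hq, hle⟩⟩
    · exact ⟨p, fun hc => absurd hc hD⟩
  choose ex hex using hch
  have hinj : Function.Injective (fun k : ℕ => ((x₀, k) : X × ℕ)) :=
    fun a b hab => congrArg Prod.snd hab
  let Z : ℕ → Set (X × ℕ) := fun n => n.rec (Set.range (fun k : ℕ => (x₀, k)))
    (fun _ Zn => Zn ∪ ⋃ D ∈ 𝒟, ⋃ p ∈ {p : CohenPoset (X × ℕ) | ∀ z ∈ p.1, z.1 ∈ Zn},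
      ↑(p.1.image Prod.fst) ∪ ↑((ex D p).1.image Prod.fst))
  have hZsucc : ∀ n, Z (n+1) = Z n ∪ ⋃ D ∈ 𝒟,
      ⋃ p ∈ {p : CohenPoset (X × ℕ) | ∀ z ∈ p.1, z.1 ∈ Z n},
      ↑(p.1.image Prod.fst) ∪ ↑((ex D p).1.image Prod.fst) := fun n => rfl
  have hZ0 : Z 0 = Set.range (fun k : ℕ => ((x₀, k) : X × ℕ)) := rfl
  have hZmono : Monotone Z :=
    monotone_nat_of_le_succ (fun n => (hZsucc n) ▸ Set.subset_union_left)
  have hZ0inf : (Z 0).Infinite := hZ0 ▸ Set.infinite_range_of_injective hinj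
  have hZninf : ∀ n, (Z n).Infinite := fun n => hZ0inf.mono (hZmono (Nat.zero_le n))
  have hZωsub : ∀ n, Z n ⊆ ⋃ k, Z k := fun n => Set.subset_iUnion Z n
  have hZωinf : (⋃ k, Z k).Infinite := hZ0inf.mono (hZωsub 0)
  have hclosed : ∀ D ∈ 𝒟, ∀ p : CohenPoset (X × ℕ), (∀ z ∈ p.1, z.1 ∈ ⋃ k, Z k) →
      ex D p ∈ D ∧ ex D p ≤ p ∧ ∀ z ∈ (ex D p).1, z.1 ∈ ⋃ k, Z k := by
    intro D hD p hp
    refine ⟨(hex D p hD).1, (hex D p hD).2, ?_⟩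
    have hfin : ∃ n, ∀ z ∈ p.1, z.1 ∈ Z n := by
      have hz : ∀ z ∈ p.1, ∃ n, z.1 ∈ Z n := fun z hz => Set.mem_iUnion.mp (hp z hz)
      choose! g hg using hz
      exact ⟨p.1.sup g, fun z hz => hZmono (Finset.le_sup hz) (hg z hz)⟩
    obtain ⟨n, hn⟩ := hfin
    intro z hz
    refine Set.mem_iUnion.mpr ⟨n+1, ?_⟩
    rw [hZsucc n]
    refine Set.mem_union_right _ ?_
    refine Set.mem_biUnion hD ?_
    refine Set.mem_biUnion (by exact hn) ?_
    exact Set.mem_union_right _ (Finset.mem_coe.mpr (Finset.mem_image_of_mem Prod.fst hz))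
  set μ : Cardinal := max (Cardinal.mk 𝒟) ℵ₀ with hμ
  have hμinf : ℵ₀ ≤ μ := le_max_right _ _
  have hμlt : μ < continuum := max_lt hcard aleph0_lt_continuum
  have hZcard : ∀ n, #↥(Z n) ≤ μ := by
    intro n
    induction n with
    | zero =>
      rw [hZ0]
      exact le_trans mk_range_le (le_trans mk_nat.le hμinf)
    | succ n ih =>
      have hS : #↥{p : CohenPoset (X × ℕ) | ∀ z ∈ p.1, z.1 ∈ Z n} ≤ μ :=
        le_trans (aux_mk_supported (Z n) (hZninf n)) ih
      rw [hZsucc n]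
      refine le_trans (mk_union_le _ _) ?_
      have hU : #↥(⋃ D ∈ 𝒟, ⋃ p ∈ {p : CohenPoset (X × ℕ) | ∀ z ∈ p.1, z.1 ∈ Z n},
          (↑(p.1.image Prod.fst) ∪ ↑((ex D p).1.image Prod.fst) : Set (X × ℕ))) ≤ μ := by
        refine le_trans (mk_biUnion_le _ _) ?_
        have hin : ∀ D : 𝒟, #↥(⋃ p ∈ {p : CohenPoset (X × ℕ) | ∀ z ∈ p.1, z.1 ∈ Z n},
            (↑(p.1.image Prod.fst) ∪ ↑((ex D.1 p).1.image Prod.fst) : Set (X × ℕ))) ≤ μ := by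
          intro D
          refine le_trans (mk_biUnion_le _ _) ?_
          have hsmall : ∀ p : {p : CohenPoset (X × ℕ) | ∀ z ∈ p.1, z.1 ∈ Z n},
              #↥(↑(p.1.1.image Prod.fst) ∪ ↑((ex D.1 p.1).1.image Prod.fst) : Set (X × ℕ)) ≤ ℵ₀ :=
            fun p => mk_le_aleph0
          calc _ ≤ μ * ℵ₀ := mul_le_mul' hS (ciSup_le' hsmall)
            _ = μ := by rw [mul_eq_max hμinf le_rfl, max_eq_left hμinf]
        calc _ ≤ μ * μ := mul_le_mul' (le_trans (le_max_left _ _) le_rfl) (ciSup_le' hin)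
          _ = μ := mul_eq_self hμinf
      calc #↥(Z n) + _ ≤ μ + μ := add_le_add ih hU
        _ = μ := add_eq_self hμinf
  have hZωcard : #↥(⋃ k, Z k) ≤ μ := by
    refine le_trans (mk_iUnion_le _) ?_
    calc #ℕ * ⨆ n, #↥(Z n) ≤ ℵ₀ * μ := mul_le_mul' mk_nat.le (ciSup_le' hZcard)
      _ = μ := by rw [mul_eq_max le_rfl hμinf, max_eq_right hμinf]
  haveI : Infinite (⋃ k, Z k) := hZωinf.to_subtype
  have hlaminf : ℵ₀ ≤ #↥(⋃ k, Z k) := aleph0_le_mk _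
  have hlamlt : #↥(⋃ k, Z k) < continuum := lt_of_le_of_lt hZωcard hμlt
  have hmkeq : #((#↥(⋃ k, Z k)).ord.ToType × ℕ) = #↥(⋃ k, Z k) := by
    rw [mk_prod, lift_id, lift_id, mk_ord_toType, mk_nat]
    rw [mul_eq_max hlaminf le_rfl, max_eq_left hlaminf]
  obtain ⟨e⟩ := Cardinal.eq.mp hmkeq
  let emb : (#↥(⋃ k, Z k)).ord.ToType × ℕ → X × ℕ := fun z => ((e z : ⋃ k, Z k) : X × ℕ)
  have hembinj : Function.Injective emb := fun a b hab => e.injective (Subtype.ext hab)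
  have hembrange : Set.range emb = ⋃ k, Z k := by
    ext z
    constructor
    · rintro ⟨w, rfl⟩
      exact (e w).2
    · intro hz
      exact ⟨e.symm ⟨z, hz⟩, by simp [emb]⟩
  haveI hNE : Nonempty ((#↥(⋃ k, Z k)).ord.ToType × ℕ) :=
    ⟨e.symm ⟨(x₀, 0), hZωsub 0 ⟨0, rfl⟩⟩⟩
  have hpullcard : #↥((fun D => {p | cpMap emb hembinj p ∈ D}) '' 𝒟) < continuum :=
    lt_of_le_of_lt mk_image_le hcard
  have hpulldense : ∀ D' ∈ (fun D => {p | cpMap emb hembinj p ∈ D}) '' 𝒟, IsDenseIn D' := by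
    rintro D' ⟨D, hD, rfl⟩
    intro p
    have hsupp : ∀ z ∈ (cpMap emb hembinj p).1, z.1 ∈ ⋃ k, Z k := by
      intro z hz
      have := cpMap_mem emb hembinj p z hz
      rwa [hembrange] at this
    obtain ⟨hq1, hq2, hq3⟩ := hclosed D hD (cpMap emb hembinj p) hsupp
    obtain ⟨q', hq'⟩ := cpMap_surj emb hembinj hNE (ex D (cpMap emb hembinj p))
      (fun z hz => by rw [hembrange]; exact hq3 z hz)
    refine ⟨q', ?_, ?_⟩
    · show cpMap emb hembinj q' ∈ D
      rw [hq']
      exact hq1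
    · rw [← cpMap_le_iff emb hembinj, hq']
      exact hq2
  obtain ⟨G', hG'filter, hG'meet⟩ :=
    h _ hlamlt ((fun D => {p | cpMap emb hembinj p ∈ D}) '' 𝒟) hpullcard hpulldense
  refine ⟨{r | ∃ g ∈ G', cpMap emb hembinj g ≤ r}, ⟨?_, ?_, ?_⟩, ?_⟩
  · obtain ⟨g₀, hg₀⟩ := hG'filter.1
    exact ⟨cpMap emb hembinj g₀, g₀, hg₀, le_refl _⟩
  · rintro p ⟨g, hg, hle⟩ q hpq
    exact ⟨g, hg, hle.trans hpq⟩
  · rintro p ⟨g₁, hg₁, hle₁⟩ q ⟨g₂, hg₂, hle₂⟩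
    obtain ⟨g, hg, hgl₁, hgl₂⟩ := hG'filter.2.2 g₁ hg₁ g₂ hg₂
    exact ⟨cpMap emb hembinj g, ⟨g, hg, le_refl _⟩,
      ((cpMap_le_iff emb hembinj).mpr hgl₁).trans hle₁,
      ((cpMap_le_iff emb hembinj).mpr hgl₂).trans hle₂⟩
  · intro D hD
    obtain ⟨q', hq'G, hq'D⟩ := hG'meet {p | cpMap emb hembinj p ∈ D} ⟨D, hD, rfl⟩
    exact ⟨cpMap emb hembinj q', ⟨q', hq'G, le_refl _⟩, hq'D⟩

/-- Martin's axiom for Cohen posets is equivalent to its restriction to Cohen posets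
`Add(ω,λ)` with `λ < 𝔠`: if for every cardinal `λ < 𝔠` and every family of fewer than
`𝔠` dense subsets of `Add(ω,λ)` (the poset of finite partial functions from `λ × ω`
to `2`) there is a filter meeting them all, then the same holds for `Add(ω,κ)` for
every cardinal `κ`. -/
theorem stmt9
    (h : ∀ lam : Cardinal, lam < Cardinal.continuum →
      ∀ 𝒟 : Set (Set (CohenPoset (lam.ord.ToType × ℕ))),
        Cardinal.mk 𝒟 < Cardinal.continuum → (∀ D ∈ 𝒟, IsDenseIn D) →
        ∃ G : Set (CohenPoset (lam.ord.ToType × ℕ)),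
          IsPosetFilter G ∧ ∀ D ∈ 𝒟, (G ∩ D).Nonempty) :
    ∀ kap : Cardinal, ∀ 𝒟 : Set (Set (CohenPoset (kap.ord.ToType × ℕ))),
      Cardinal.mk 𝒟 < Cardinal.continuum → (∀ D ∈ 𝒟, IsDenseIn D) →
      ∃ G : Set (CohenPoset (kap.ord.ToType × ℕ)),
        IsPosetFilter G ∧ ∀ D ∈ 𝒟, (G ∩ D).Nonempty := by
  intro kap 𝒟 hcard hdense
  by_cases hA : Nonempty kap.ord.ToType
  · obtain ⟨x₀⟩ := hA
    exact main_aux x₀ h 𝒟 hcard hdense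
  · -- the index type is empty, so the poset has a single element
    have hempty : IsEmpty ((kap.ord.ToType × ℕ) × Bool) := ⟨fun z => hA ⟨z.1.1⟩⟩
    have hbot : ∀ x b₁ b₂, (x, b₁) ∈ (∅ : Finset ((kap.ord.ToType × ℕ) × Bool)) →
        (x, b₂) ∈ (∅ : Finset ((kap.ord.ToType × ℕ) × Bool)) → b₁ = b₂ :=
      fun x b₁ b₂ h1 _ => absurd h1 (Finset.notMem_empty _)
    have hsub : ∀ p q : CohenPoset (kap.ord.ToType × ℕ), p = q := by
      intro p q
      apply Subtype.ext
      ext z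
      exact (hempty.false z).elim
    refine ⟨Set.univ, ⟨⟨⟨∅, hbot⟩, trivial⟩, fun p _ q _ => trivial,
      fun p _ q _ => ⟨p, trivial, le_refl p, le_of_eq (hsub p q)⟩⟩, ?_⟩
    intro D hD
    obtain ⟨q, hq, _⟩ := hdense D hD ⟨∅, hbot⟩
    exact ⟨q, trivial, hq⟩
end

section
/- Let κ be an infinite cardinal and let Q be an infinite elementary substructure, in the first-order language of partial orders, of the Cohen poset Add(ω,κ) of finite partial functions from κ to 2 ordered by reverse inclusion. Then Q consists exactly of those conditions that are meets (unions, as partial functions) of finite sets of pairwise compatible coatoms of Add(ω,κ) that belong to Q; consequently Q is order-isomorphic to Add(ω,μ), where μ is the cardinality of the set of coatoms of Add(ω,κ) belonging to Q, and μ = |Q|. -/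
instance (X : Type) : OrderTop (CohenPoset X) where
  top := ⟨∅, by intro x b₁ b₂ h₁ h₂; exact absurd h₁ (Finset.notMem_empty _)⟩
  le_top p := Finset.empty_subset _

/-- View the Cohen poset as a structure in the first-order language of orders. -/
noncomputable instance (X : Type) : FirstOrder.Language.order.Structure (CohenPoset X) :=
  FirstOrder.Language.orderStructure _

open FirstOrder FirstOrder.Language Cardinal

namespace CohenAux

instance (X : Type) : Language.order.OrderedStructure (CohenPoset X) := ⟨fun _ => Iff.rfl⟩

variable {X : Type}

noncomputable local instance : DecidableEq X := Classical.decEq _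

lemma le_def {p q : CohenPoset X} : p ≤ q ↔ q.1 ⊆ p.1 := Iff.rfl

lemma top_val : (⊤ : CohenPoset X).1 = (∅ : Finset (X × Bool)) := rfl

lemma eq_top_iff_val {p : CohenPoset X} : p = ⊤ ↔ p.1 = ∅ :=
  ⟨fun h => by rw [h]; rfl, fun h => Subtype.ext h⟩

lemma forall_le_iff {a : CohenPoset X} : (∀ t, t ≤ a) ↔ a = ⊤ :=
  ⟨fun h => le_antisymm le_top (h ⊤), fun h t => h ▸ le_top⟩

def single (x : X) (b : Bool) : CohenPoset X :=
  ⟨{(x, b)}, by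
    intro y b₁ b₂ h₁ h₂
    simp only [Finset.mem_singleton, Prod.mk.injEq] at h₁ h₂
    rw [h₁.2, h₂.2]⟩

@[simp] lemma single_val (x : X) (b : Bool) : (single x b).1 = {(x, b)} := rfl

lemma single_ne_top (x : X) (b : Bool) : single x b ≠ ⊤ := by
  rw [Ne, eq_top_iff_val, single_val]
  simp

lemma isCoatom_single (x : X) (b : Bool) : IsCoatom (single x b) := by
  refine ⟨single_ne_top x b, fun t ht => ?_⟩
  rw [lt_iff_le_and_ne] at ht
  rw [eq_top_iff_val]
  rcases Finset.subset_singleton_iff.1 (le_def.1 ht.1) with h | h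
  · exact h
  · exact absurd (Subtype.ext h.symm) ht.2

lemma isCoatom_iff {c : CohenPoset X} : IsCoatom c ↔ ∃ x b, c = single x b := by
  constructor
  · rintro ⟨hne, hmax⟩
    have hne' : c.1 ≠ ∅ := fun h => hne (eq_top_iff_val.2 h)
    obtain ⟨⟨x, b⟩, hxb⟩ := Finset.nonempty_iff_ne_empty.2 hne'
    refine ⟨x, b, ?_⟩
    by_contra hne2
    have hlt : c < single x b := by
      refine lt_iff_le_and_ne.2 ⟨le_def.2 ?_, fun h => hne2 h⟩
      simp only [single_val, Finset.singleton_subset_iff]; exact hxb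
    exact single_ne_top x b (hmax _ hlt)
  · rintro ⟨x, b, rfl⟩; exact isCoatom_single x b

/-- compatibility of two conditions -/
def Compat (p q : CohenPoset X) : Prop :=
  ∀ x b₁ b₂, (x, b₁) ∈ p.1 → (x, b₂) ∈ q.1 → b₁ = b₂

lemma compat_of_subset {p q r : CohenPoset X} (hp : p.1 ⊆ r.1) (hq : q.1 ⊆ r.1) :
    Compat p q := fun x b₁ b₂ h₁ h₂ => r.2 x b₁ b₂ (hp h₁) (hq h₂)

noncomputable def union (p q : CohenPoset X) (h : Compat p q) : CohenPoset X :=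
  ⟨p.1 ∪ q.1, by
    intro x b₁ b₂ h₁ h₂
    rcases Finset.mem_union.1 h₁ with h₁ | h₁ <;> rcases Finset.mem_union.1 h₂ with h₂ | h₂
    · exact p.2 x b₁ b₂ h₁ h₂
    · exact h x b₁ b₂ h₁ h₂
    · exact (h x b₂ b₁ h₂ h₁).symm
    · exact q.2 x b₁ b₂ h₁ h₂⟩

@[simp] lemma union_val (p q : CohenPoset X) (h : Compat p q) :
    (union p q h).1 = p.1 ∪ q.1 := rfl

lemma union_le_left (p q : CohenPoset X) (h : Compat p q) : union p q h ≤ p :=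
  le_def.2 (Finset.subset_union_left)

lemma union_le_right (p q : CohenPoset X) (h : Compat p q) : union p q h ≤ q :=
  le_def.2 (Finset.subset_union_right)

lemma le_union {p q t : CohenPoset X} (h : Compat p q) (hp : t ≤ p) (hq : t ≤ q) :
    t ≤ union p q h :=
  le_def.2 (Finset.union_subset (le_def.1 hp) (le_def.1 hq))

/-! ### Formulas -/

abbrev vf {n k : ℕ} (i : Fin n) : Language.order.Term (Fin n ⊕ Fin k) := Term.var (Sum.inl i)
abbrev vb {n k : ℕ} (j : Fin k) : Language.order.Term (Fin n ⊕ Fin k) := Term.var (Sum.inr j)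

def chiTop : Language.order.BoundedFormula (Fin 0) 1 :=
  (Term.le (vb 1) (vb 0)).all

lemma realize_chiTop (v : Fin 0 → CohenPoset X) (a : CohenPoset X) :
    chiTop.Realize v (fun _ => a) ↔ ∀ t, t ≤ a := by
  simp [chiTop, Fin.snoc]

def chiGlb : Language.order.BoundedFormula (Fin 2) 1 :=
  (Term.le (vb 0) (vf 0)) ⊓ ((Term.le (vb 0) (vf 1)) ⊓
    (((Term.le (vb 1) (vf 0)) ⊓ (Term.le (vb 1) (vf 1))).imp (Term.le (vb 1) (vb 0))).all)

lemma realize_chiGlb (v : Fin 2 → CohenPoset X) (r : CohenPoset X) :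
    chiGlb.Realize v (fun _ => r) ↔
      r ≤ v 0 ∧ r ≤ v 1 ∧ ∀ t, t ≤ v 0 → t ≤ v 1 → t ≤ r := by
  simp [chiGlb, Fin.snoc]

def chiRem : Language.order.BoundedFormula (Fin 2) 1 :=
  (Term.le (vf 0) (vb 0)) ⊓ (∼(Term.le (vb 0) (vf 1)) ⊓
    (((Term.le (vb 1) (vb 0)) ⊓ (Term.le (vb 1) (vf 1))).imp (Term.le (vb 1) (vf 0))).all)

lemma realize_chiRem (v : Fin 2 → CohenPoset X) (r : CohenPoset X) :
    chiRem.Realize v (fun _ => r) ↔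
      v 0 ≤ r ∧ ¬(r ≤ v 1) ∧ ∀ t, t ≤ r → t ≤ v 1 → t ≤ v 0 := by
  simp [chiRem, Fin.snoc]

def notTopF {n : ℕ} : Language.order.BoundedFormula (Fin n) 1 :=
  ∼((Term.le (vb 1) (vb 0)).all)

def maximalF {n : ℕ} : Language.order.BoundedFormula (Fin n) 1 :=
  (((Term.le (vb 0) (vb 1)) ⊓ ∼(Term.le (vb 1) (vb 0))).imp ((Term.le (vb 2) (vb 1)).all)).all

lemma realize_coatomF {n : ℕ} (v : Fin n → CohenPoset X) (a : CohenPoset X) :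
    (notTopF ⊓ maximalF).Realize v (fun _ => a) ↔ IsCoatom a := by
  have : IsCoatom a ↔ (¬ ∀ t, t ≤ a) ∧ ∀ t, a ≤ t → ¬ t ≤ a → ∀ s, s ≤ t := by
    rw [IsCoatom]
    constructor
    · rintro ⟨h1, h2⟩
      refine ⟨fun h => h1 (forall_le_iff.1 h), fun t h1' h2' => ?_⟩
      exact forall_le_iff.2 (h2 t (lt_iff_le_not_ge.2 ⟨h1', h2'⟩))
    · rintro ⟨h1, h2⟩
      refine ⟨fun h => h1 (h ▸ fun t => le_top), fun t ht => ?_⟩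
      rw [lt_iff_le_not_ge] at ht
      exact forall_le_iff.1 (h2 t ht.1 ht.2)
  rw [this]
  simp [notTopF, maximalF, Fin.snoc]

def chiCoatAbove : Language.order.BoundedFormula (Fin 1) 1 :=
  (Term.le (vf 0) (vb 0)) ⊓ (notTopF ⊓ maximalF)

lemma realize_chiCoatAbove (v : Fin 1 → CohenPoset X) (a : CohenPoset X) :
    chiCoatAbove.Realize v (fun _ => a) ↔ v 0 ≤ a ∧ IsCoatom a := by
  rw [chiCoatAbove, BoundedFormula.realize_inf, realize_coatomF]
  simp [Fin.snoc]

def chiFlip : Language.order.BoundedFormula (Fin 1) 1 :=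
  (notTopF ⊓ maximalF) ⊓ ∼(((Term.le (vb 1) (vf 0)) ⊓ (Term.le (vb 1) (vb 0))).ex)

lemma realize_chiFlip (v : Fin 1 → CohenPoset X) (a : CohenPoset X) :
    chiFlip.Realize v (fun _ => a) ↔ IsCoatom a ∧ ¬ ∃ t, t ≤ v 0 ∧ t ≤ a := by
  rw [chiFlip, BoundedFormula.realize_inf, realize_coatomF]
  simp [Fin.snoc]


/-! ### Transfer -/

lemma transfer (S : Language.order.ElementarySubstructure (CohenPoset X)) {n : ℕ}
    (χ : Language.order.BoundedFormula (Fin n) 1) (v : Fin n → CohenPoset X)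
    (hv : ∀ i, v i ∈ S) (a : CohenPoset X) (ha : χ.Realize v (fun _ => a)) :
    ∃ b ∈ S, χ.Realize v (fun _ => b) := by
  set v' : Fin n → S := fun i => ⟨v i, hv i⟩ with hv'
  have h1 : (χ.ex).Realize v (default : Fin 0 → CohenPoset X) := by
    rw [BoundedFormula.realize_ex]
    exact ⟨a, by convert ha using 2; simp [Fin.snoc]⟩
  have h2 : Formula.Realize (χ.ex) v' := by
    have := S.subtype.map_formula (χ.ex) v'
    rw [← this]
    exact h1
  rw [Formula.Realize, BoundedFormula.realize_ex] at h2
  obtain ⟨b, hb⟩ := h2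
  refine ⟨b.1, b.2, ?_⟩
  have := S.subtype.map_boundedFormula χ v' (Fin.snoc default b)
  have h3 := this.mpr hb
  convert h3 using 2
  · rfl
  · simp [Fin.snoc]

variable (S : Language.order.ElementarySubstructure (CohenPoset X))

lemma top_mem : (⊤ : CohenPoset X) ∈ S := by
  obtain ⟨b, hbS, hb⟩ := transfer S chiTop default (fun i => i.elim0) ⊤
    ((realize_chiTop _ _).2 fun t => le_top)
  rw [realize_chiTop] at hb
  rwa [← forall_le_iff.1 hb]

lemma union_mem {p q : CohenPoset X} (h : Compat p q) (hp : p ∈ S) (hq : q ∈ S) :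
    union p q h ∈ S := by
  obtain ⟨b, hbS, hb⟩ := transfer S chiGlb ![p, q] (fun i => by fin_cases i <;> assumption)
    (union p q h) (by
      rw [realize_chiGlb]
      refine ⟨?_, ?_, ?_⟩ <;> simp only [Matrix.cons_val_zero, Matrix.cons_val_one,
        Matrix.head_cons]
      · exact union_le_left p q h
      · exact union_le_right p q h
      · exact fun t ht1 ht2 => le_union h ht1 ht2)
  rw [realize_chiGlb] at hb
  simp only [Matrix.cons_val_zero, Matrix.cons_val_one, Matrix.head_cons] at hb
  obtain ⟨h1, h2, h3⟩ := hb
  have heq : b = union p q h :=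
    le_antisymm (le_union h h1 h2) (h3 _ (union_le_left p q h) (union_le_right p q h))
  rwa [← heq]

/-- the erase lemma -/
lemma erase_mem {p : CohenPoset X} {x : X} {b : Bool} (hp : p ∈ S) (hxb : (x, b) ∈ p.1)
    (hs : single x b ∈ S) :
    (⟨p.1.erase (x, b), fun y b₁ b₂ h₁ h₂ =>
      p.2 y b₁ b₂ (Finset.erase_subset _ _ h₁) (Finset.erase_subset _ _ h₂)⟩ :
        CohenPoset X) ∈ S := by
  set r : CohenPoset X := ⟨p.1.erase (x, b), fun y b₁ b₂ h₁ h₂ =>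
      p.2 y b₁ b₂ (Finset.erase_subset _ _ h₁) (Finset.erase_subset _ _ h₂)⟩ with hr
  obtain ⟨c, hcS, hc⟩ := transfer S chiRem ![p, single x b]
    (fun i => by fin_cases i <;> assumption) r (by
      rw [realize_chiRem]
      simp only [Matrix.cons_val_zero, Matrix.cons_val_one, Matrix.head_cons]
      refine ⟨le_def.2 (Finset.erase_subset _ _), ?_, ?_⟩
      · intro hle
        exact Finset.notMem_erase (x, b) p.1 (le_def.1 hle (by simp))
      · intro t ht1 ht2
        rw [le_def] at ht1 ht2 ⊢
        intro y hy
        by_cases hyx : y = (x, b)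
        · exact ht2 (by simp [hyx])
        · exact ht1 (Finset.mem_erase.2 ⟨hyx, hy⟩))
  rw [realize_chiRem] at hc
  simp only [Matrix.cons_val_zero, Matrix.cons_val_one, Matrix.head_cons] at hc
  obtain ⟨h1, h2, h3⟩ := hc
  have hcp : c.1 ⊆ p.1 := le_def.1 h1
  have hxbc : (x, b) ∉ c.1 := fun hmem => h2 (le_def.2 (by
    simp only [single_val, Finset.singleton_subset_iff]; exact hmem))
  have hcompat : Compat c (single x b) :=
    compat_of_subset hcp (by simp [hxb])
  have hle : union c (single x b) hcompat ≤ p :=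
    h3 _ (union_le_left _ _ _) (union_le_right _ _ _)
  have heq : c = r := by
    apply Subtype.ext
    apply Finset.Subset.antisymm
    · intro y hy
      exact Finset.mem_erase.2 ⟨fun h => hxbc (h ▸ hy), hcp hy⟩
    · intro y hy
      rcases Finset.mem_erase.1 hy with ⟨hyne, hyp⟩
      have := le_def.1 hle hyp
      rcases Finset.mem_union.1 this with h | h
      · exact h
      · simp only [single_val, Finset.mem_singleton] at h
        exact absurd h hyne
  rwa [← heq]

lemma exists_coatom_above {p : CohenPoset X} (hp : p ∈ S) (hne : p ≠ ⊤) :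
    ∃ x b, (x, b) ∈ p.1 ∧ single x b ∈ S := by
  have hne' : p.1.Nonempty := by
    rw [Finset.nonempty_iff_ne_empty]
    exact fun h => hne (eq_top_iff_val.2 h)
  obtain ⟨⟨x, b⟩, hxb⟩ := hne'
  obtain ⟨c, hcS, hc⟩ := transfer S chiCoatAbove ![p] (fun i => by fin_cases i; exact hp)
    (single x b) (by
      rw [realize_chiCoatAbove]
      exact ⟨le_def.2 (by simp [hxb]), isCoatom_single x b⟩)
  rw [realize_chiCoatAbove] at hc
  simp only [Matrix.cons_val_zero] at hc
  obtain ⟨hle, hco⟩ := hc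
  obtain ⟨y, d, rfl⟩ := isCoatom_iff.1 hco
  exact ⟨y, d, le_def.1 hle (by simp), hcS⟩

lemma flip_mem {x : X} {b : Bool} (hs : single x b ∈ S) : single x (!b) ∈ S := by
  obtain ⟨c, hcS, hc⟩ := transfer S chiFlip ![single x b]
    (fun i => by fin_cases i; exact hs) (single x (!b)) (by
      rw [realize_chiFlip]
      refine ⟨isCoatom_single x (!b), ?_⟩
      rintro ⟨t, ht1, ht2⟩
      simp only [Matrix.cons_val_zero] at ht1
      have h1 : (x, b) ∈ t.1 := le_def.1 ht1 (by simp)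
      have h2 : (x, !b) ∈ t.1 := le_def.1 ht2 (by simp)
      have := t.2 x b (!b) h1 h2
      simp at this)
  rw [realize_chiFlip] at hc
  simp only [Matrix.cons_val_zero] at hc
  obtain ⟨hco, hinc⟩ := hc
  obtain ⟨y, d, rfl⟩ := isCoatom_iff.1 hco
  by_cases hcompat : Compat (single x b) (single y d)
  · exfalso
    exact hinc ⟨union _ _ hcompat, union_le_left _ _ _, union_le_right _ _ _⟩
  · have : y = x ∧ d = !b := by
      by_contra hcon
      apply hcompat
      intro z b₁ b₂ h₁ h₂
      simp only [single_val, Finset.mem_singleton, Prod.mk.injEq] at h₁ h₂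
      obtain ⟨rfl, rfl⟩ := h₁
      obtain ⟨hzy, rfl⟩ := h₂
      by_contra hne
      exact hcon ⟨hzy.symm, by revert hne; cases b₁ <;> cases b₂ <;> simp⟩
    obtain ⟨rfl, rfl⟩ := this
    exact hcS


lemma singles_mem_aux : ∀ (n : ℕ) (p : CohenPoset X), p ∈ S → p.1.card ≤ n →
    ∀ x b, (x, b) ∈ p.1 → single x b ∈ S := by
  intro n
  induction n with
  | zero =>
    intro p _ hcard x b hxb
    rw [Nat.le_zero, Finset.card_eq_zero] at hcard
    rw [hcard] at hxb
    exact absurd hxb (Finset.notMem_empty _)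
  | succ n ih =>
    intro p hp hcard x b hxb
    have hne : p ≠ ⊤ := by
      rw [Ne, eq_top_iff_val]
      exact fun h => Finset.notMem_empty _ (h ▸ hxb)
    obtain ⟨y, d, hyd, hydS⟩ := exists_coatom_above S hp hne
    by_cases heq : (y, d) = (x, b)
    · obtain ⟨rfl, rfl⟩ := Prod.mk.injEq .. ▸ heq
      exact hydS
    · have hr := erase_mem S hp hyd hydS
      refine ih _ hr ?_ x b (Finset.mem_erase.2 ⟨fun h => heq (h ▸ rfl), hxb⟩)
      show (p.1.erase (y, d)).card ≤ n
      have := Finset.card_erase_of_mem hyd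
      omega

lemma singles_mem {p : CohenPoset X} (hp : p ∈ S) {x : X} {b : Bool}
    (hxb : (x, b) ∈ p.1) : single x b ∈ S :=
  singles_mem_aux S p.1.card p hp le_rfl x b hxb

lemma sup_mem (p : CohenPoset X) (s : Finset (CohenPoset X)) (hS : ∀ q ∈ s, q ∈ S)
    (hsub : ∀ q ∈ s, q.1 ⊆ p.1) : ∃ u : CohenPoset X, u ∈ S ∧ u.1 = s.sup (·.1) := by
  classical
  induction s using Finset.induction_on with
  | empty => exact ⟨⊤, top_mem S, by simp [top_val]⟩
  | @insert a s ha ih =>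
    obtain ⟨u, huS, hu⟩ := ih (fun q hq => hS q (Finset.mem_insert_of_mem hq))
      (fun q hq => hsub q (Finset.mem_insert_of_mem hq))
    have hup : u.1 ⊆ p.1 := by
      rw [hu]
      exact Finset.sup_le fun q hq => hsub q (Finset.mem_insert_of_mem hq)
    have hcompat : Compat a u := compat_of_subset (hsub a (Finset.mem_insert_self a s)) hup
    refine ⟨union a u hcompat, union_mem S hcompat (hS a (Finset.mem_insert_self a s)) huS, ?_⟩
    rw [union_val, hu, Finset.sup_insert]
    rfl

lemma mem_iff_singles (p : CohenPoset X) :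
    p ∈ S ↔ ∀ x b, (x, b) ∈ p.1 → single x b ∈ S := by
  classical
  refine ⟨fun hp x b hxb => singles_mem S hp hxb, fun h => ?_⟩
  obtain ⟨u, huS, hu⟩ := sup_mem S p (p.1.image (fun y => single y.1 y.2))
    (fun q hq => by
      obtain ⟨y, hy, rfl⟩ := Finset.mem_image.1 hq
      exact h y.1 y.2 hy)
    (fun q hq => by
      obtain ⟨y, hy, rfl⟩ := Finset.mem_image.1 hq
      simp only [single_val, Finset.singleton_subset_iff]
      exact hy)
  have : u = p := by
    apply Subtype.ext
    rw [hu]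
    ext z
    simp only [Finset.mem_sup, Finset.mem_image]
    constructor
    · rintro ⟨q, ⟨y, hy, rfl⟩, hz⟩
      simp only [single_val, Finset.mem_singleton] at hz
      exact hz ▸ hy
    · intro hz
      exact ⟨single z.1 z.2, ⟨z, hz, rfl⟩, by simp⟩
  rwa [← this]

lemma mem_iff_decomp (p : CohenPoset X) :
    p ∈ S ↔ ∃ s : Finset (CohenPoset X),
      (∀ q ∈ s, IsCoatom q ∧ q ∈ S) ∧
      (∀ q ∈ s, ∀ r ∈ s, ∃ t : CohenPoset X, t ≤ q ∧ t ≤ r) ∧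
      (∀ x, x ∈ p.1 ↔ ∃ q ∈ s, x ∈ q.1) := by
  classical
  constructor
  · intro hp
    refine ⟨p.1.image (fun y => single y.1 y.2), ?_, ?_, ?_⟩
    · intro q hq
      obtain ⟨y, hy, rfl⟩ := Finset.mem_image.1 hq
      exact ⟨isCoatom_single y.1 y.2, singles_mem S hp hy⟩
    · intro q hq r hr
      obtain ⟨y, hy, rfl⟩ := Finset.mem_image.1 hq
      obtain ⟨z, hz, rfl⟩ := Finset.mem_image.1 hr
      exact ⟨p, le_def.2 (by simp [hy]), le_def.2 (by simp [hz])⟩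
    · intro z
      simp only [Finset.mem_image]
      constructor
      · intro hz
        exact ⟨single z.1 z.2, ⟨z, hz, rfl⟩, by simp⟩
      · rintro ⟨q, ⟨y, hy, rfl⟩, hz⟩
        simp only [single_val, Finset.mem_singleton] at hz
        exact hz ▸ hy
  · rintro ⟨s, hco, _, hiff⟩
    obtain ⟨u, huS, hu⟩ := sup_mem S p s (fun q hq => (hco q hq).2)
      (fun q hq z hz => (hiff z).2 ⟨q, hq, hz⟩)
    have : u = p := by
      apply Subtype.ext
      rw [hu]
      ext z
      rw [Finset.mem_sup, hiff z]
    rwa [← this]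


/-! ### Flip closure and the core -/

lemma single_mem_iff {x : X} (b : Bool) : single x b ∈ S ↔ single x true ∈ S := by
  cases b
  · constructor
    · intro h; have := flip_mem S h; simpa using this
    · intro h; have := flip_mem S h; simpa using this
  · exact Iff.rfl

/-- The set of "active coordinates" of `S`. -/
def Core : Type := {x : X // single x true ∈ S}

def embCore : (Core S × Bool) ↪ (X × Bool) :=
  (Function.Embedding.subtype _).prodMap (Function.Embedding.refl _)

@[simp] lemma embCore_apply (a : Core S) (c : Bool) : embCore S (a, c) = (a.1, c) := rfl

def toFull (s : CohenPoset (Core S)) : CohenPoset X :=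
  ⟨s.1.map (embCore S), by
    intro x b₁ b₂ h₁ h₂
    obtain ⟨⟨a₁, c₁⟩, ha₁, he₁⟩ := Finset.mem_map.1 h₁
    obtain ⟨⟨a₂, c₂⟩, ha₂, he₂⟩ := Finset.mem_map.1 h₂
    simp only [embCore_apply, Prod.mk.injEq] at he₁ he₂
    obtain ⟨he₁x, rfl⟩ := he₁
    obtain ⟨he₂x, rfl⟩ := he₂
    have : a₂ = a₁ := Subtype.ext (he₂x.trans he₁x.symm)
    exact s.2 a₁ _ _ ha₁ (this ▸ ha₂)⟩

@[simp] lemma toFull_val (s : CohenPoset (Core S)) : (toFull S s).1 = s.1.map (embCore S) := rfl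

lemma toFull_mem (s : CohenPoset (Core S)) : toFull S s ∈ S := by
  rw [mem_iff_singles]
  intro x b hxb
  obtain ⟨⟨a, c⟩, ha, he⟩ := Finset.mem_map.1 hxb
  simp only [embCore_apply, Prod.mk.injEq] at he
  obtain ⟨rfl, rfl⟩ := he
  exact (single_mem_iff S c).2 a.2

lemma toFull_inj : Function.Injective (toFull S) := fun s t h =>
  Subtype.ext (Finset.map_injective (embCore S) (congrArg Subtype.val h))

lemma toFull_le_iff {s t : CohenPoset (Core S)} : toFull S s ≤ toFull S t ↔ s ≤ t := by
  rw [le_def, le_def, toFull_val, toFull_val, Finset.map_subset_map]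

lemma toFull_surj {p : CohenPoset X} (hp : p ∈ S) : ∃ s, toFull S s = p := by
  classical
  have hmem : ∀ y : {a // a ∈ p.1}, single y.1.1 true ∈ S := by
    intro y
    refine (single_mem_iff S y.1.2).1 (singles_mem S hp ?_)
    simpa using y.2
  refine ⟨⟨p.1.attach.image (fun y => ((⟨y.1.1, hmem y⟩ : Core S), y.1.2)), ?_⟩, ?_⟩
  · intro a b₁ b₂ h₁ h₂
    obtain ⟨y₁, -, he₁⟩ := Finset.mem_image.1 h₁
    obtain ⟨y₂, -, he₂⟩ := Finset.mem_image.1 h₂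
    have hy₁ : y₁.1 = (a.1, b₁) := Prod.ext (congrArg (fun z => z.1.1) he₁) (congrArg (fun z => z.2) he₁)
    have hy₂ : y₂.1 = (a.1, b₂) := Prod.ext (congrArg (fun z => z.1.1) he₂) (congrArg (fun z => z.2) he₂)
    exact p.2 a.1 b₁ b₂ (hy₁ ▸ y₁.2) (hy₂ ▸ y₂.2)
  · apply Subtype.ext
    show Finset.map (embCore S) _ = p.1
    ext z
    simp only [Finset.mem_map, Finset.mem_image, Finset.mem_attach, true_and]
    constructor
    · rintro ⟨w, ⟨y, rfl⟩, he⟩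
      have : y.1 = z := he
      exact this ▸ y.2
    · intro hz
      exact ⟨(⟨z.1, hmem ⟨z, hz⟩⟩, z.2), ⟨⟨z, hz⟩, rfl⟩, rfl⟩


noncomputable def isoCore : CohenPoset (Core S) ≃o S where
  toEquiv := Equiv.ofBijective (fun s => (⟨toFull S s, toFull_mem S s⟩ : S))
    ⟨fun s t h => toFull_inj S (congrArg Subtype.val h),
     fun p => by
      obtain ⟨s, hs⟩ := toFull_surj S p.2
      exact ⟨s, Subtype.ext hs⟩⟩
  map_rel_iff' := by
    intro s t
    rw [← Subtype.coe_le_coe]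
    exact toFull_le_iff S

/-- Transport of Cohen posets along an equivalence of index types. -/
def mapCP {A B : Type} (e : A ≃ B) (s : CohenPoset A) : CohenPoset B :=
  ⟨s.1.map (e.toEmbedding.prodMap (Function.Embedding.refl Bool)), by
    intro y b₁ b₂ h₁ h₂
    obtain ⟨⟨a₁, c₁⟩, ha₁, he₁⟩ := Finset.mem_map.1 h₁
    obtain ⟨⟨a₂, c₂⟩, ha₂, he₂⟩ := Finset.mem_map.1 h₂
    simp only [Function.Embedding.coe_prodMap, Equiv.coe_toEmbedding,
      Function.Embedding.refl_apply, Prod.map_apply, id_eq, Prod.mk.injEq] at he₁ he₂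
    obtain ⟨he₁x, rfl⟩ := he₁
    obtain ⟨he₂x, rfl⟩ := he₂
    have : a₂ = a₁ := e.injective (he₂x.trans he₁x.symm)
    exact s.2 a₁ _ _ ha₁ (this ▸ ha₂)⟩

lemma mapCP_symm {A B : Type} (e : A ≃ B) (s : CohenPoset A) :
    mapCP e.symm (mapCP e s) = s := by
  apply Subtype.ext
  show ((s.1.map _).map _) = s.1
  rw [Finset.map_map]
  ext ⟨z1, z2⟩
  simp only [Finset.mem_map, Function.Embedding.trans_apply, Function.Embedding.coe_prodMap,
    Equiv.coe_toEmbedding, Function.Embedding.refl_apply, Prod.map_apply, id_eq,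
    Equiv.symm_apply_apply, Prod.exists, Prod.mk.injEq]
  constructor
  · rintro ⟨a, c, ha, rfl, rfl⟩
    exact ha
  · intro hz
    exact ⟨z1, z2, hz, rfl, rfl⟩

def cohenCongr {A B : Type} (e : A ≃ B) : CohenPoset A ≃o CohenPoset B where
  toFun := mapCP e
  invFun := mapCP e.symm
  left_inv s := mapCP_symm e s
  right_inv s := by
    have := mapCP_symm e.symm s
    simpa using this
  map_rel_iff' := by
    intro s t
    show mapCP e s ≤ mapCP e t ↔ s ≤ t
    rw [le_def, le_def]
    show t.1.map _ ⊆ s.1.map _ ↔ _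
    rw [Finset.map_subset_map]


noncomputable def coatomEquiv : (Core S × Bool) ≃ {p : CohenPoset X | IsCoatom p ∧ p ∈ S} := by
  refine Equiv.ofBijective
    (fun ac => ⟨single ac.1.1 ac.2, isCoatom_single _ _, (single_mem_iff S ac.2).2 ac.1.2⟩)
    ⟨?_, ?_⟩
  · rintro ⟨a, c⟩ ⟨a', c'⟩ h
    simp only [Subtype.mk.injEq] at h
    have h' := congrArg Subtype.val h
    simp only [single_val, Finset.singleton_inj, Prod.mk.injEq] at h'
    exact Prod.ext_iff.2 ⟨Subtype.ext h'.1, h'.2⟩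
  · rintro ⟨p, hco, hmem⟩
    obtain ⟨x, b, rfl⟩ := isCoatom_iff.1 hco
    exact ⟨(⟨x, (single_mem_iff S b).1 hmem⟩, b), rfl⟩

lemma singleCP_inj {A : Type} : Function.Injective (fun a : A => single a true) := by
  intro a a' h
  have := congrArg Subtype.val h
  simp only [single_val, Finset.singleton_inj, Prod.mk.injEq] at this
  exact this.1

lemma mk_cohenPoset (A : Type) [Infinite A] : #(CohenPoset A) = #A := by
  apply le_antisymm
  · have h1 : #(CohenPoset A) ≤ #(Finset (A × Bool)) := by
      apply Cardinal.mk_le_of_injective (f := fun s : CohenPoset A => s.1)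
      exact fun s t h => Subtype.ext h
    have h2 : #(Finset (A × Bool)) = #(A × Bool) := Cardinal.mk_finset_of_infinite _
    have h3 : #(A × Bool) = #A := by
      rw [Cardinal.mk_prod, Cardinal.mk_bool, Cardinal.lift_id, Cardinal.lift_id]
      refine Cardinal.mul_eq_left (Cardinal.infinite_iff.1 inferInstance) ?_ (by norm_num)
      exact le_trans (by exact_mod_cast (Cardinal.nat_lt_aleph0 2).le)
        (Cardinal.infinite_iff.1 inferInstance)
    rw [h2, h3] at h1
    exact h1
  · exact Cardinal.mk_le_of_injective singleCP_inj

end CohenAux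


/-- Let `κ` be an infinite cardinal and let `Q` be an infinite elementary substructure
(in the language of partial orders) of the Cohen poset `Add(ω,κ)` of finite partial
functions from `κ` to `2`. Then `Q` consists exactly of those conditions that are
unions of finite sets of pairwise compatible coatoms (single-bit conditions) of
`Add(ω,κ)` belonging to `Q`; consequently `Q` is order-isomorphic to `Add(ω,μ)`
where `μ` is the cardinality of the set of coatoms of `Add(ω,κ)` belonging to `Q`,
and `μ = |Q|`. -/
theorem stmt10 (kap : Cardinal) (hkap : Cardinal.aleph0 ≤ kap)
    (Q : FirstOrder.Language.order.ElementarySubstructure (CohenPoset kap.ord.ToType))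
    (hQ : Infinite Q) :
    (∀ p : CohenPoset kap.ord.ToType, p ∈ Q ↔
      ∃ s : Finset (CohenPoset kap.ord.ToType),
        (∀ q ∈ s, IsCoatom q ∧ q ∈ Q) ∧
        (∀ q ∈ s, ∀ r ∈ s, ∃ t : CohenPoset kap.ord.ToType, t ≤ q ∧ t ≤ r) ∧
        (∀ x, x ∈ p.1 ↔ ∃ q ∈ s, x ∈ q.1)) ∧
    Nonempty (Q ≃o CohenPoset
      (Cardinal.mk {p : CohenPoset kap.ord.ToType | IsCoatom p ∧ p ∈ Q}).ord.ToType) ∧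
    Cardinal.mk {p : CohenPoset kap.ord.ToType | IsCoatom p ∧ p ∈ Q} = Cardinal.mk Q := by
  classical
  -- infinite core
  have hinfA : Infinite (CohenAux.Core Q) := by
    by_contra h
    rw [not_infinite_iff_finite] at h
    have f1 : Finite (CohenAux.Core Q × Bool) := inferInstance
    have := Fintype.ofFinite (CohenAux.Core Q × Bool)
    have f2 : Finite (Finset (CohenAux.Core Q × Bool)) := inferInstance
    have f3 : Finite (CohenPoset (CohenAux.Core Q)) := Subtype.finite
    have f4 : Finite Q := Finite.of_equiv _ (CohenAux.isoCore Q).toEquiv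
    exact f4.not_infinite hQ
  have hcard1 : Cardinal.mk {p : CohenPoset kap.ord.ToType | IsCoatom p ∧ p ∈ Q} =
      Cardinal.mk (CohenAux.Core Q × Bool) :=
    (Cardinal.mk_congr (CohenAux.coatomEquiv Q)).symm
  have hAB : Cardinal.mk (CohenAux.Core Q × Bool) = Cardinal.mk (CohenAux.Core Q) := by
    rw [Cardinal.mk_prod, Cardinal.mk_bool, Cardinal.lift_id, Cardinal.lift_id]
    refine Cardinal.mul_eq_left (Cardinal.infinite_iff.1 hinfA) ?_ (by norm_num)
    exact le_trans (by exact_mod_cast (Cardinal.nat_lt_aleph0 2).le)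
      (Cardinal.infinite_iff.1 hinfA)
  have hcardQ : Cardinal.mk Q = Cardinal.mk (CohenAux.Core Q) := by
    rw [Cardinal.mk_congr (CohenAux.isoCore Q).toEquiv.symm]
    exact CohenAux.mk_cohenPoset _
  have hmu : Cardinal.mk {p : CohenPoset kap.ord.ToType | IsCoatom p ∧ p ∈ Q} =
      Cardinal.mk (CohenAux.Core Q) := hcard1.trans hAB
  refine ⟨fun p => CohenAux.mem_iff_decomp Q p, ?_, hmu.trans hcardQ.symm⟩
  -- the iso
  have htt : Cardinal.mk
      ((Cardinal.mk {p : CohenPoset kap.ord.ToType | IsCoatom p ∧ p ∈ Q}).ord.ToType) =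
      Cardinal.mk (CohenAux.Core Q) := by
    rw [Cardinal.mk_toType, Cardinal.card_ord, hmu]
  obtain ⟨e2⟩ := Cardinal.eq.1 htt.symm
  exact ⟨(CohenAux.isoCore Q).symm.trans (CohenAux.cohenCongr e2)⟩
end

section
/- Let Q be a Knaster poset. Then the finite-mixture termspace preorder Termfin(C,Q) over Cohen forcing C = 2^{<ω} is also Knaster. -/
/-- A (pre)ordered set is Knaster if every uncountable subset has an uncountable
subset of pairwise compatible elements. -/
def IsKnaster (P : Type*) [LE P] : Prop :=
  ∀ T : Set P, ¬T.Countable →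
    ∃ T' ⊆ T, ¬T'.Countable ∧ ∀ p ∈ T', ∀ q ∈ T', ∃ r, r ≤ p ∧ r ≤ q

/-- A finite mixture over Cohen forcing `C = 2^{<ω}` into `Q`: a finite maximal
antichain `A` of finite binary sequences (pairwise non-comparable, and every branch
`ω → 2` has an initial segment in `A`) together with a function `f : A → Q`. -/
structure FinMixture (Q : Type*) where
  A : Finset (List Bool)
  antichain : ∀ s ∈ A, ∀ t ∈ A, s ≠ t → ¬(s <+: t ∨ t <+: s)
  maximal : ∀ b : ℕ → Bool, ∃ s ∈ A, ∀ i : Fin s.length, s.get i = b i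
  f : {s : List Bool // s ∈ A} → Q

/-- The finite-mixture termspace preorder `Termfin(C,Q)`: `(A',f') ≤ (A,f)` iff
`f' s' ≤ f s` whenever `s' ∈ A'` and `s ∈ A` are comparable. -/
instance (Q : Type*) [LE Q] : LE (FinMixture Q) :=
  ⟨fun p q => ∀ (s' : {s : List Bool // s ∈ p.A}) (s : {s : List Bool // s ∈ q.A}),
    ((s' : List Bool) <+: s ∨ (s : List Bool) <+: s') → p.f s' ≤ q.f s⟩

/-- Knaster is productive over finitely many coordinate projections. -/
lemma knaster_finset_proj {Q : Type*} [Preorder Q] (hQ : IsKnaster Q)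
    {α : Type*} {ι : Type*} (J : Finset ι) (proj : ι → α → Q) :
    ∀ S : Set α, ¬S.Countable →
      ∃ S' ⊆ S, ¬S'.Countable ∧
        ∀ p ∈ S', ∀ q ∈ S', ∀ i ∈ J, ∃ r, r ≤ proj i p ∧ r ≤ proj i q := by
  classical
  induction J using Finset.induction_on with
  | empty =>
      intro S hS
      exact ⟨S, subset_rfl, hS, fun p _ q _ i hi => absurd hi (by simp)⟩
  | @insert a J ha ih =>
      intro S hS
      obtain ⟨S', hS'sub, hS'unc, hS'⟩ := ih S hS
      by_cases himg : ((proj a) '' S').Countable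
      · have hfib : ∃ b ∈ proj a '' S', ¬(S' ∩ proj a ⁻¹' {b}).Countable := by
          by_contra hcon
          push_neg at hcon
          apply hS'unc
          have hsub : S' ⊆ ⋃ b ∈ proj a '' S', (S' ∩ proj a ⁻¹' {b}) := fun x hx =>
            Set.mem_biUnion (Set.mem_image_of_mem _ hx) ⟨hx, rfl⟩
          exact (Set.Countable.biUnion himg hcon).mono hsub
        obtain ⟨b, -, hfib⟩ := hfib
        refine ⟨S' ∩ proj a ⁻¹' {b}, Set.inter_subset_left.trans hS'sub, hfib, ?_⟩
        intro p hp q hq i hi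
        rcases Finset.mem_insert.mp hi with rfl | hi
        · refine ⟨proj i p, le_refl _, ?_⟩
          have h1 : proj i p = b := hp.2
          have h2 : proj i q = b := hq.2
          rw [h1, h2]
        · exact hS' p hp.1 q hq.1 i hi
      · obtain ⟨U, hUsub, hUunc, hU⟩ := hQ _ himg
        refine ⟨S' ∩ proj a ⁻¹' U, Set.inter_subset_left.trans hS'sub, ?_, ?_⟩
        · intro hcount
          apply hUunc
          have hsub : U ⊆ proj a '' (S' ∩ proj a ⁻¹' U) := by
            intro u hu
            obtain ⟨x, hx, rfl⟩ := hUsub hu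
            exact ⟨x, ⟨hx, hu⟩, rfl⟩
          exact (hcount.image _).mono hsub
        · intro p hp q hq i hi
          rcases Finset.mem_insert.mp hi with rfl | hi
          · exact hU _ hp.2 _ hq.2
          · exact hS' p hp.1 q hq.1 i hi

/-- If `Q` is a Knaster poset then the finite-mixture termspace preorder
`Termfin(C,Q)` over Cohen forcing is Knaster as well. -/
theorem stmt11 (Q : Type*) [PartialOrder Q] (hQ : IsKnaster Q) :
    IsKnaster (FinMixture Q) := by
  classical
  intro T hT
  have hTne : T.Nonempty := Set.nonempty_iff_ne_empty.mpr (by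
    rintro rfl; exact hT Set.countable_empty)
  obtain ⟨p₀, hp₀⟩ := hTne
  have hQne : Nonempty Q := by
    obtain ⟨s, hs, -⟩ := p₀.maximal (fun _ => false)
    exact ⟨p₀.f ⟨s, hs⟩⟩
  have step1 : ∃ A : Finset (List Bool), ¬(T ∩ {p | p.A = A}).Countable := by
    by_contra h
    push_neg at h
    apply hT
    have hsub : T ⊆ ⋃ A : Finset (List Bool), (T ∩ {p | p.A = A}) := fun p hp =>
      Set.mem_iUnion.mpr ⟨p.A, hp, rfl⟩
    exact (Set.countable_iUnion h).mono hsub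
  obtain ⟨A, hA⟩ := step1
  set proj : {s : List Bool // s ∈ A} → FinMixture Q → Q := fun i p =>
    if h : (i : List Bool) ∈ p.A then p.f ⟨i, h⟩ else Classical.arbitrary Q with hproj
  obtain ⟨S', hsub, hunc, hcompat⟩ :=
    knaster_finset_proj hQ (Finset.univ : Finset {s : List Bool // s ∈ A}) proj _ hA
  refine ⟨S', fun p hp => (hsub hp).1, hunc, ?_⟩
  intro p hp q hq
  have hpA : p.A = A := (hsub hp).2
  have hqA : q.A = A := (hsub hq).2
  have hch : ∀ i : {s : List Bool // s ∈ A}, ∃ r, r ≤ proj i p ∧ r ≤ proj i q :=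
    fun i => hcompat p hp q hq i (Finset.mem_univ i)
  choose r hr1 hr2 using hch
  have hanti : ∀ s ∈ A, ∀ t ∈ A, s ≠ t → ¬(s <+: t ∨ t <+: s) := by
    intro s hs t ht
    exact p.antichain s (by rw [hpA]; exact hs) t (by rw [hpA]; exact ht)
  have hmax : ∀ b : ℕ → Bool, ∃ s ∈ A, ∀ i : Fin s.length, s.get i = b i := by
    intro b
    obtain ⟨s, hs, h⟩ := p.maximal b
    exact ⟨s, by rw [← hpA]; exact hs, h⟩
  refine ⟨⟨A, hanti, hmax, r⟩, ?_, ?_⟩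
  · intro s' s hcomp
    have hsA : (s : List Bool) ∈ A := by rw [← hpA]; exact s.2
    have heq : (s' : List Bool) = (s : List Bool) := by
      by_contra hne
      exact hanti _ s'.2 _ hsA hne hcomp
    have h1 : (s' : List Bool) ∈ p.A := by rw [hpA]; exact s'.2
    have h2 : proj s' p = p.f s := by
      rw [hproj]
      simp only [dif_pos h1]
      exact congrArg p.f (Subtype.ext heq)
    calc r s' ≤ proj s' p := hr1 s'
      _ = p.f s := h2
  · intro s' s hcomp
    have hsA : (s : List Bool) ∈ A := by rw [← hqA]; exact s.2
    have heq : (s' : List Bool) = (s : List Bool) := by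
      by_contra hne
      exact hanti _ s'.2 _ hsA hne hcomp
    have h1 : (s' : List Bool) ∈ q.A := by rw [hqA]; exact s'.2
    have h2 : proj s' q = q.f s := by
      rw [hproj]
      simp only [dif_pos h1]
      exact congrArg q.f (Subtype.ext heq)
    calc r s' ≤ proj s' q := hr2 s'
      _ = q.f s := h2
end

section
/- Let Q be a Knaster poset and let 0 < ε < 1. Then the ε-deficient finite-mixture termspace preorder Termfin^ε(B_null, Q) over the random algebra is also Knaster. -/
open MeasureTheory

/-- An `ε`-deficient finite mixture over the random algebra into `Q`: a finite set `A`
of Borel subsets of `[0,1]` of positive measure, pairwise intersecting in measure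
zero, whose union has measure `> 1 - ε`, together with a function `f : A → Q`. -/
structure EpsMixture (Q : Type*) (ε : ℝ) where
  A : Finset (Set ℝ)
  subset_Icc : ∀ w ∈ A, w ⊆ Set.Icc (0 : ℝ) 1
  measurableSet : ∀ w ∈ A, MeasurableSet w
  pos : ∀ w ∈ A, 0 < volume w
  almost_disjoint : ∀ w ∈ A, ∀ w' ∈ A, w ≠ w' → volume (w ∩ w') = 0
  large : ENNReal.ofReal (1 - ε) < volume (⋃₀ (A : Set (Set ℝ)))
  f : {w : Set ℝ // w ∈ A} → Q

/-- The `ε`-deficient finite-mixture termspace preorder `Termfin^ε(B_null,Q)`: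
`(A',f') ≤ (A,f)` iff for every `w' ∈ A'` there is `w ∈ A` with `μ(w' \ w) = 0` and
`f' w' ≤ f w`. -/
instance (Q : Type*) [LE Q] (ε : ℝ) : LE (EpsMixture Q ε) :=
  ⟨fun p q => ∀ w' : {w : Set ℝ // w ∈ p.A}, ∃ w : {w : Set ℝ // w ∈ q.A},
    volume ((w' : Set ℝ) \ w) = 0 ∧ p.f w' ≤ q.f w⟩

section Stmt12Aux

open Set ENNReal Filter

namespace Stmt12Aux

/-- Finite unions of rational open intervals. -/
def RSet (s : Finset (ℚ × ℚ)) : Set ℝ := ⋃ r ∈ s, Set.Ioo (r.1 : ℝ) (r.2 : ℝ)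

lemma isOpen_RSet (s : Finset (ℚ × ℚ)) : IsOpen (RSet s) :=
  isOpen_biUnion fun _ _ => isOpen_Ioo

lemma RSet_mono {s t : Finset (ℚ × ℚ)} (h : s ⊆ t) : RSet s ⊆ RSet t :=
  Set.biUnion_subset_biUnion_left h

lemma exists_rat_approx (w : Set ℝ) (hw : MeasurableSet w) (hfin : volume w ≠ ⊤)
    {η : ℝ} (hη : 0 < η) :
    ∃ s : Finset (ℚ × ℚ), volume ((w \ RSet s) ∪ (RSet s \ w)) ≤ ENNReal.ofReal η := by
  classical
  have h2 : (0 : ℝ≥0∞) < ENNReal.ofReal (η / 2) := ENNReal.ofReal_pos.mpr (by linarith)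
  obtain ⟨U, hwU, hUopen, hU⟩ := w.exists_isOpen_lt_add hfin h2.ne'
  have hUw : volume (U \ w) ≤ ENNReal.ofReal (η / 2) := by
    rw [measure_diff hwU hw.nullMeasurableSet hfin]
    rw [tsub_le_iff_left]
    exact hU.le
  obtain ⟨e, he⟩ := exists_surjective_nat (ℚ × ℚ)
  set sN : ℕ → Finset (ℚ × ℚ) := fun N =>
    ((Finset.range N).image e).filter (fun r => Set.Ioo (r.1 : ℝ) (r.2 : ℝ) ⊆ U) with hsN
  have hVsub : ∀ N, RSet (sN N) ⊆ U := by
    intro N x hx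
    obtain ⟨r, hr, hxr⟩ := Set.mem_iUnion₂.mp hx
    exact (Finset.mem_filter.mp hr).2 hxr
  have hUnion : U ⊆ ⋃ N, RSet (sN N) := by
    intro x hx
    obtain ⟨δ, hδ, hball⟩ := Metric.isOpen_iff.mp hUopen x hx
    obtain ⟨a, ha1, ha2⟩ := exists_rat_btwn (show x - δ < x by linarith)
    obtain ⟨b, hb1, hb2⟩ := exists_rat_btwn (show x < x + δ by linarith)
    obtain ⟨k, hk⟩ := he (a, b)
    have hIoo : Set.Ioo ((a : ℝ)) (b : ℝ) ⊆ U := by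
      intro y hy
      apply hball
      rw [Real.ball_eq_Ioo]
      exact ⟨lt_trans ha1 hy.1, lt_trans hy.2 hb2⟩
    have hmem : (a, b) ∈ sN (k + 1) := by
      refine Finset.mem_filter.mpr ⟨Finset.mem_image.mpr ⟨k, ?_, hk⟩, by simpa using hIoo⟩
      exact Finset.mem_range.mpr (Nat.lt_succ_self k)
    refine Set.mem_iUnion.2 ⟨k + 1, Set.mem_iUnion₂.mpr ⟨(a, b), hmem, ?_⟩⟩
    exact ⟨ha2, hb1⟩
  have hmono : Antitone (fun N => w \ RSet (sN N)) := by
    intro m n hmn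
    apply Set.diff_subset_diff_right
    apply RSet_mono
    exact Finset.filter_subset_filter _ (Finset.image_subset_image (Finset.range_subset_range.mpr hmn))
  have hInter : ⋂ N, (w \ RSet (sN N)) = ∅ := by
    ext x
    simp only [Set.mem_iInter, Set.mem_diff, Set.mem_empty_iff_false, iff_false, not_forall]
    by_contra h
    push_neg at h
    have hxw : x ∈ w := (h 0).1
    obtain ⟨N, hN⟩ := Set.mem_iUnion.mp (hUnion (hwU hxw))
    exact (h N).2 hN
  have htend := tendsto_measure_iInter_atTop (μ := volume)
    (fun N => (hw.diff (isOpen_RSet (sN N)).measurableSet).nullMeasurableSet) hmono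
    ⟨0, by exact ne_top_of_le_ne_top hfin (measure_mono Set.diff_subset)⟩
  rw [hInter, measure_empty] at htend
  rw [ENNReal.tendsto_atTop_zero] at htend
  obtain ⟨N, hN⟩ := htend (ENNReal.ofReal (η / 2)) h2
  refine ⟨sN N, ?_⟩
  calc volume ((w \ RSet (sN N)) ∪ (RSet (sN N) \ w))
      ≤ volume (w \ RSet (sN N)) + volume (RSet (sN N) \ w) := measure_union_le _ _
    _ ≤ ENNReal.ofReal (η / 2) + ENNReal.ofReal (η / 2) :=
        add_le_add (hN N le_rfl)
          (le_trans (measure_mono (Set.diff_subset_diff_left (hVsub N))) hUw)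
    _ = ENNReal.ofReal η := by
        rw [← ENNReal.ofReal_add (by linarith) (by linarith)]; norm_num


lemma pigeonhole {α β : Type*} [Countable β] {S : Set α} (hS : ¬S.Countable) (c : α → β) :
    ∃ b, ¬{p | p ∈ S ∧ c p = b}.Countable := by
  by_contra h
  push_neg at h
  exact hS ((Set.countable_iUnion h).mono
    (fun p hp => Set.mem_iUnion.2 ⟨c p, show p ∈ S ∧ c p = c p from ⟨hp, rfl⟩⟩))

lemma refine_one {α Q : Type*} [Preorder Q] (hQ : IsKnaster Q) {S : Set α}
    (hS : ¬S.Countable) (g : α → Q) :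
    ∃ S' ⊆ S, ¬S'.Countable ∧ ∀ p ∈ S', ∀ q ∈ S', ∃ z, z ≤ g p ∧ z ≤ g q := by
  by_cases hV : (g '' S).Countable
  · -- some fiber is uncountable
    have : ¬(⋃ v ∈ g '' S, {p ∈ S | g p = v}).Countable := by
      intro h
      exact hS (h.mono (fun p hp => Set.mem_biUnion (Set.mem_image_of_mem g hp) (show p ∈ S ∧ g p = g p from ⟨hp, rfl⟩)))
    obtain ⟨v, -, hv⟩ : ∃ v ∈ g '' S, ¬{p ∈ S | g p = v}.Countable := by
      by_contra h
      push_neg at h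
      exact this (Set.Countable.biUnion hV h)
    refine ⟨{p ∈ S | g p = v}, fun p hp => hp.1, hv, ?_⟩
    rintro p ⟨-, hp⟩ q ⟨-, hq⟩
    refine ⟨g p, le_refl _, ?_⟩
    have hp' : g p = v := hp
    have hq' : g q = v := hq
    rw [hp', hq']
  · obtain ⟨V', hV'sub, hV'unc, hV'comp⟩ := hQ (g '' S) hV
    refine ⟨{p ∈ S | g p ∈ V'}, fun p hp => hp.1, ?_, ?_⟩
    · intro h
      apply hV'unc
      have : V' ⊆ g '' {p ∈ S | g p ∈ V'} := by
        intro v hv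
        obtain ⟨p, hp, rfl⟩ := hV'sub hv
        exact ⟨p, ⟨hp, hv⟩, rfl⟩
      exact ((h.image g).mono this)
    · rintro p ⟨-, hp⟩ q ⟨-, hq⟩
      exact hV'comp _ hp _ hq

lemma refine_fin {α Q : Type*} [Preorder Q] (hQ : IsKnaster Q) (m : ℕ) (g : Fin m → α → Q)
    {S : Set α} (hS : ¬S.Countable) :
    ∃ S' ⊆ S, ¬S'.Countable ∧ ∀ i, ∀ p ∈ S', ∀ q ∈ S', ∃ z, z ≤ g i p ∧ z ≤ g i q := by
  induction m generalizing S with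
  | zero => exact ⟨S, subset_rfl, hS, fun i => i.elim0⟩
  | succ m ih =>
    obtain ⟨S1, hS1sub, hS1unc, hS1⟩ := refine_one hQ hS (g 0)
    obtain ⟨S', hS'sub, hS'unc, hS'⟩ := ih (fun i => g i.succ) hS1unc
    refine ⟨S', hS'sub.trans hS1sub, hS'unc, ?_⟩
    intro i
    refine Fin.cases ?_ ?_ i
    · intro p hp q hq
      exact hS1 p (hS'sub hp) q (hS'sub hq)
    · intro j p hp q hq
      exact hS' j p hp q hq


lemma key {Q : Type*} [Preorder Q] {ε : ℝ} (hε1 : ε < 1) {n : ℕ} {γ : ℝ} (hγ : 0 < γ)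
    (p q : EpsMixture Q ε)
    (wp wq : Fin n → Set ℝ)
    (hwp : ∀ i, wp i ∈ p.A) (hwq : ∀ i, wq i ∈ q.A)
    (hwpi : Function.Injective wp)
    (hwps : ∀ w ∈ p.A, ∃ i, wp i = w)
    (s : Fin n → Finset (ℚ × ℚ))
    (happ_p : ∀ i, volume ((wp i \ RSet (s i)) ∪ (RSet (s i) \ wp i))
      ≤ ENNReal.ofReal (γ / (2 * n + 2)))
    (happ_q : ∀ i, volume ((wq i \ RSet (s i)) ∪ (RSet (s i) \ wq i))
      ≤ ENNReal.ofReal (γ / (2 * n + 2)))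
    (hlarge : ENNReal.ofReal (1 - ε + γ) < volume (⋃₀ (p.A : Set (Set ℝ))))
    (hcompat : ∀ i, ∃ z : Q, z ≤ p.f ⟨wp i, hwp i⟩ ∧ z ≤ q.f ⟨wq i, hwq i⟩) :
    ∃ r : EpsMixture Q ε, r ≤ p ∧ r ≤ q := by
  classical
  set η : ℝ := γ / (2 * n + 2) with hη
  have hηpos : 0 < η := by positivity
  choose z hzp hzq using hcompat
  set v : Fin n → Set ℝ := fun i => wp i ∩ wq i with hv
  set I : Finset (Fin n) := Finset.univ.filter (fun i => volume (v i) ≠ 0) with hI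
  set Ar : Finset (Set ℝ) := I.image v with hAr
  -- key measure estimate
  have hsum : ∀ i, volume (wp i \ wq i) ≤ ENNReal.ofReal (2 * η) := by
    intro i
    have hsub : wp i \ wq i ⊆
        ((wp i \ RSet (s i)) ∪ (RSet (s i) \ wp i)) ∪
        ((wq i \ RSet (s i)) ∪ (RSet (s i) \ wq i)) := by
      intro x hx
      by_cases hxR : x ∈ RSet (s i)
      · exact Or.inr (Or.inr ⟨hxR, hx.2⟩)
      · exact Or.inl (Or.inl ⟨hx.1, hxR⟩)
    calc volume (wp i \ wq i) ≤ _ := measure_mono hsub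
      _ ≤ _ := measure_union_le _ _
      _ ≤ ENNReal.ofReal η + ENNReal.ofReal η := add_le_add (happ_p i) (happ_q i)
      _ = ENNReal.ofReal (2 * η) := by
          rw [← ENNReal.ofReal_add hηpos.le hηpos.le]; ring_nf
  have hUp : ⋃₀ (p.A : Set (Set ℝ)) = ⋃ i, wp i := by
    ext x
    simp only [Set.mem_sUnion, Finset.mem_coe, Set.mem_iUnion]
    constructor
    · rintro ⟨w, hw, hx⟩
      obtain ⟨i, rfl⟩ := hwps w hw
      exact ⟨i, hx⟩
    · rintro ⟨i, hx⟩
      exact ⟨wp i, hwp i, hx⟩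
  have hArU : ⋃₀ (Ar : Set (Set ℝ)) = ⋃ i ∈ I, v i := by
    rw [hAr, Finset.coe_image, Set.sUnion_image]
    rfl
  have hVIall : volume (⋃ i, v i) ≤ volume (⋃ i ∈ I, v i) := by
    have hsub : (⋃ i, v i) ⊆ (⋃ i ∈ I, v i) ∪ (⋃ i ∈ Finset.univ \ I, v i) := by
      intro x hx
      obtain ⟨i, hx⟩ := Set.mem_iUnion.mp hx
      by_cases hiI : i ∈ I
      · exact Or.inl (Set.mem_biUnion hiI hx)
      · exact Or.inr (Set.mem_biUnion (Finset.mem_sdiff.mpr ⟨Finset.mem_univ i, hiI⟩) hx)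
    have hnull : volume (⋃ i ∈ Finset.univ \ I, v i) = 0 := by
      refine le_antisymm ?_ zero_le
      calc volume (⋃ i ∈ Finset.univ \ I, v i) ≤ ∑ i ∈ Finset.univ \ I, volume (v i) :=
            measure_biUnion_finset_le _ _
        _ = 0 := Finset.sum_eq_zero (by
            intro i hi
            have := (Finset.mem_sdiff.mp hi).2
            simp only [hI, Finset.mem_filter, Finset.mem_univ, true_and, not_not] at this
            exact this)
    calc volume (⋃ i, v i) ≤ volume ((⋃ i ∈ I, v i) ∪ (⋃ i ∈ Finset.univ \ I, v i)) :=
          measure_mono hsub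
      _ ≤ volume (⋃ i ∈ I, v i) + volume (⋃ i ∈ Finset.univ \ I, v i) := measure_union_le _ _
      _ = volume (⋃ i ∈ I, v i) := by rw [hnull, add_zero]
  have hmain : volume (⋃ i, wp i) ≤ volume (⋃ i, v i) + ENNReal.ofReal (2 * n * η) := by
    have hsub : (⋃ i, wp i) ⊆ (⋃ i, v i) ∪ (⋃ i, wp i \ wq i) := by
      intro x hx
      obtain ⟨i, hx⟩ := Set.mem_iUnion.mp hx
      by_cases hxq : x ∈ wq i
      · exact Or.inl (Set.mem_iUnion.mpr ⟨i, hx, hxq⟩)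
      · exact Or.inr (Set.mem_iUnion.mpr ⟨i, hx, hxq⟩)
    calc volume (⋃ i, wp i) ≤ volume ((⋃ i, v i) ∪ (⋃ i, wp i \ wq i)) := measure_mono hsub
      _ ≤ volume (⋃ i, v i) + volume (⋃ i, wp i \ wq i) := measure_union_le _ _
      _ ≤ volume (⋃ i, v i) + ∑ i : Fin n, volume (wp i \ wq i) := by
          gcongr
          exact measure_iUnion_fintype_le _ _
      _ ≤ volume (⋃ i, v i) + ∑ _i : Fin n, ENNReal.ofReal (2 * η) := by
          gcongr with i
          exact hsum i
      _ = volume (⋃ i, v i) + n * ENNReal.ofReal (2 * η) := by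
          rw [Finset.sum_const, Finset.card_univ, Fintype.card_fin, nsmul_eq_mul]
      _ = volume (⋃ i, v i) + ENNReal.ofReal (2 * n * η) := by
          rw [← ENNReal.ofReal_natCast n, ← ENNReal.ofReal_mul (Nat.cast_nonneg n)]
          ring_nf
  have hlarge_r : ENNReal.ofReal (1 - ε) < volume (⋃₀ (Ar : Set (Set ℝ))) := by
    rw [hArU]
    have h2nη : 2 * n * η ≤ γ := by
      have h1 : (0:ℝ) < 2 * n + 2 := by positivity
      rw [hη, ← mul_div_assoc, div_le_iff₀ h1]
      have hn : (0:ℝ) ≤ n := Nat.cast_nonneg n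
      nlinarith
    have hchain : ENNReal.ofReal (1 - ε) + ENNReal.ofReal (2 * n * η)
        < volume (⋃ i ∈ I, v i) + ENNReal.ofReal (2 * n * η) := by
      calc ENNReal.ofReal (1 - ε) + ENNReal.ofReal (2 * n * η)
          = ENNReal.ofReal (1 - ε + 2 * n * η) := by
            rw [← ENNReal.ofReal_add (by linarith) (by positivity)]
        _ ≤ ENNReal.ofReal (1 - ε + γ) := by
            apply ENNReal.ofReal_le_ofReal; linarith
        _ < volume (⋃₀ (p.A : Set (Set ℝ))) := hlarge
        _ = volume (⋃ i, wp i) := by rw [hUp]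
        _ ≤ volume (⋃ i, v i) + ENNReal.ofReal (2 * n * η) := hmain
        _ ≤ volume (⋃ i ∈ I, v i) + ENNReal.ofReal (2 * n * η) := by gcongr
    exact (ENNReal.add_lt_add_iff_right ENNReal.ofReal_ne_top).mp hchain
  refine ⟨⟨Ar, ?_, ?_, ?_, ?_, hlarge_r, fun v' => z (Finset.mem_image.mp v'.2).choose⟩, ?_, ?_⟩
  · -- subset_Icc
    intro w hw
    obtain ⟨i, hi, rfl⟩ := Finset.mem_image.mp hw
    exact fun x hx => p.subset_Icc _ (hwp i) hx.1
  · -- measurable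
    intro w hw
    obtain ⟨i, hi, rfl⟩ := Finset.mem_image.mp hw
    exact (p.measurableSet _ (hwp i)).inter (q.measurableSet _ (hwq i))
  · -- pos
    intro w hw
    obtain ⟨i, hi, rfl⟩ := Finset.mem_image.mp hw
    have := (Finset.mem_filter.mp hi).2
    exact pos_iff_ne_zero.mpr this
  · -- almost disjoint
    intro w hw w' hw' hne
    obtain ⟨i, hi, rfl⟩ := Finset.mem_image.mp hw
    obtain ⟨j, hj, rfl⟩ := Finset.mem_image.mp hw'
    have hij : i ≠ j := fun h => hne (by rw [h])
    have hwpij : wp i ≠ wp j := fun h => hij (hwpi h)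
    refine le_antisymm ?_ zero_le
    calc volume (v i ∩ v j) ≤ volume (wp i ∩ wp j) := by
          apply measure_mono
          exact Set.inter_subset_inter Set.inter_subset_left Set.inter_subset_left
      _ = 0 := p.almost_disjoint _ (hwp i) _ (hwp j) hwpij
  · -- r ≤ p
    intro v'
    have hspec := (Finset.mem_image.mp v'.2).choose_spec
    set i := (Finset.mem_image.mp v'.2).choose
    refine ⟨⟨wp i, hwp i⟩, ?_, hzp i⟩
    have : (v' : Set ℝ) = v i := hspec.2.symm
    rw [this]
    have : v i \ wp i = ∅ := Set.diff_eq_empty.mpr Set.inter_subset_left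
    rw [this, measure_empty]
  · -- r ≤ q
    intro v'
    have hspec := (Finset.mem_image.mp v'.2).choose_spec
    set i := (Finset.mem_image.mp v'.2).choose
    refine ⟨⟨wq i, hwq i⟩, ?_, hzq i⟩
    have : (v' : Set ℝ) = v i := hspec.2.symm
    rw [this]
    have : v i \ wq i = ∅ := Set.diff_eq_empty.mpr Set.inter_subset_right
    rw [this, measure_empty]


/-- The union of pieces of a mixture has finite volume. -/
lemma sUnion_ne_top {Q : Type*} {ε : ℝ} (p : EpsMixture Q ε) :
    volume (⋃₀ (p.A : Set (Set ℝ))) ≠ ⊤ := by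
  have h : ⋃₀ (p.A : Set (Set ℝ)) ⊆ Set.Icc (0 : ℝ) 1 :=
    Set.sUnion_subset fun w hw => p.subset_Icc w hw
  refine ne_top_of_le_ne_top ?_ (measure_mono h)
  rw [Real.volume_Icc]
  exact ENNReal.ofReal_ne_top

lemma exists_gamma {Q : Type*} {ε : ℝ} (hε1 : ε < 1) (p : EpsMixture Q ε) :
    ∃ γ : ℚ, 0 < γ ∧ ENNReal.ofReal (1 - ε + γ) < volume (⋃₀ (p.A : Set (Set ℝ))) := by
  have hfin := sUnion_ne_top p
  have h1 : 1 - ε < (volume (⋃₀ (p.A : Set (Set ℝ)))).toReal :=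
    (ENNReal.ofReal_lt_iff_lt_toReal (by linarith) hfin).mp p.large
  obtain ⟨γ, hγ0, hγ1⟩ := exists_rat_btwn
    (show (0:ℝ) < (volume (⋃₀ (p.A : Set (Set ℝ)))).toReal - (1 - ε) by linarith)
  refine ⟨γ, by exact_mod_cast hγ0, ?_⟩
  rw [ENNReal.ofReal_lt_iff_lt_toReal (by linarith) hfin]
  linarith

/-- Enumeration of the pieces of a mixture with `n` pieces. -/
noncomputable def enum {Q : Type*} {ε : ℝ} (n : ℕ) (p : EpsMixture Q ε)
    (h : p.A.card = n) (i : Fin n) : {w : Set ℝ // w ∈ p.A} :=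
  p.A.equivFin.symm (Fin.cast h.symm i)

lemma enum_inj {Q : Type*} {ε : ℝ} (n : ℕ) (p : EpsMixture Q ε) (h : p.A.card = n) :
    Function.Injective (fun i => (enum n p h i : Set ℝ)) := by
  intro i j hij
  have h1 : enum n p h i = enum n p h j := Subtype.ext hij
  have h2 : Fin.cast h.symm i = Fin.cast h.symm j := p.A.equivFin.symm.injective h1
  have h3 := congrArg Fin.val h2
  simp only [Fin.coe_cast] at h3
  exact Fin.ext h3

lemma enum_surj {Q : Type*} {ε : ℝ} (n : ℕ) (p : EpsMixture Q ε) (h : p.A.card = n) :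
    ∀ w ∈ p.A, ∃ i, (enum n p h i : Set ℝ) = w := by
  intro w hw
  refine ⟨Fin.cast h (p.A.equivFin ⟨w, hw⟩), ?_⟩
  simp [enum, Fin.cast_cast]

/-- The value of a mixture on its `i`-th piece (with a junk default). -/
noncomputable def gfun {Q : Type*} {ε : ℝ} (q0 : Q) (n : ℕ) (i : Fin n)
    (p : EpsMixture Q ε) : Q :=
  if h : p.A.card = n then p.f (enum n p h i) else q0

end Stmt12Aux

end Stmt12Aux

open Stmt12Aux in
/-- If `Q` is a Knaster poset and `0 < ε < 1`, then the `ε`-deficient finite-mixture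
termspace preorder `Termfin^ε(B_null,Q)` over the random algebra is Knaster as well. -/
theorem stmt12 (Q : Type*) [PartialOrder Q] (ε : ℝ) (hε0 : 0 < ε) (hε1 : ε < 1)
    (hQ : IsKnaster Q) : IsKnaster (EpsMixture Q ε) := by
  classical
  intro T hT
  -- Q is nonempty
  obtain ⟨p₀, hp₀⟩ : T.Nonempty := by
    rcases T.eq_empty_or_nonempty with h | h
    · exact absurd (h ▸ Set.countable_empty) hT
    · exact h
  have hA₀ : p₀.A.Nonempty := by
    rcases p₀.A.eq_empty_or_nonempty with h | h
    · exfalso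
      have := p₀.large
      rw [h] at this
      simp only [Finset.coe_empty, Set.sUnion_empty, measure_empty] at this
      exact absurd this (by simp [ENNReal.ofReal_pos.mpr (by linarith : (0:ℝ) < 1 - ε)])
    · exact h
  have hQne : Nonempty Q := ⟨p₀.f ⟨hA₀.choose, hA₀.choose_spec⟩⟩
  obtain ⟨q0⟩ := hQne
  -- choose γ for each mixture
  choose gam hgam0 hgam1 using fun p : EpsMixture Q ε => exists_gamma hε1 p
  -- first pigeonhole: fix (card, γ)
  obtain ⟨⟨n, γ0⟩, hT1⟩ := pigeonhole hT (fun p => (p.A.card, gam p))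
  set T1 := {p | p ∈ T ∧ (p.A.card, gam p) = (n, γ0)} with hT1def
  have hT1card : ∀ p ∈ T1, p.A.card = n := fun p hp => congrArg Prod.fst hp.2
  have hT1gam : ∀ p ∈ T1, gam p = γ0 := fun p hp => congrArg Prod.snd hp.2
  obtain ⟨p₁, hp₁⟩ : T1.Nonempty := by
    rcases T1.eq_empty_or_nonempty with h | h
    · exact absurd (h ▸ Set.countable_empty) hT1
    · exact h
  have hγ0 : 0 < γ0 := hT1gam p₁ hp₁ ▸ hgam0 p₁
  set η : ℝ := (γ0 : ℝ) / (2 * n + 2) with hηdef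
  have hηpos : 0 < η := by positivity
  -- choose rational approximations
  have happrox : ∀ (p : EpsMixture Q ε) (w : Set ℝ), ∃ s : Finset (ℚ × ℚ),
      w ∈ p.A → volume ((w \ RSet s) ∪ (RSet s \ w)) ≤ ENNReal.ofReal η := by
    intro p w
    by_cases h : w ∈ p.A
    · obtain ⟨s, hs⟩ := exists_rat_approx w (p.measurableSet w h)
        (by
          refine ne_top_of_le_ne_top ?_ (measure_mono (p.subset_Icc w h))
          rw [Real.volume_Icc]; exact ENNReal.ofReal_ne_top) hηpos
      exact ⟨s, fun _ => hs⟩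
    · exact ⟨∅, fun h' => absurd h' h⟩
  choose Sfun hSfun using happrox
  -- second pigeonhole: fix the tuple of approximations
  obtain ⟨L0, hT2⟩ := pigeonhole hT1 (fun p =>
    if h : p.A.card = n then List.ofFn (fun i : Fin n => Sfun p (enum n p h i : Set ℝ))
    else ([] : List (Finset (ℚ × ℚ))))
  set T2 := {p | p ∈ T1 ∧ _ = L0} with hT2def
  have hT2sub : T2 ⊆ T1 := fun p hp => hp.1
  have hT2tuple : ∀ p ∈ T2, ∀ q ∈ T2, ∀ (hp : p.A.card = n) (hq : q.A.card = n) (i : Fin n),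
      Sfun p (enum n p hp i : Set ℝ) = Sfun q (enum n q hq i : Set ℝ) := by
    intro p hp q hq hpn hqn i
    have h1 := hp.2
    have h2 := hq.2
    rw [dif_pos hpn] at h1
    rw [dif_pos hqn] at h2
    have := h1.trans h2.symm
    exact congrFun (List.ofFn_injective this) i
  -- Knaster refinement
  obtain ⟨T', hT'sub, hT'unc, hT'comp⟩ := refine_fin hQ n (fun i => gfun q0 n i) hT2
  refine ⟨T', fun p hp => ((hT2sub (hT'sub hp)).1 : p ∈ T), hT'unc, ?_⟩
  intro p hp q hq
  have hpn : p.A.card = n := hT1card p (hT2sub (hT'sub hp))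
  have hqn : q.A.card = n := hT1card q (hT2sub (hT'sub hq))
  have hplarge : ENNReal.ofReal (1 - ε + (γ0 : ℝ)) < volume (⋃₀ (p.A : Set (Set ℝ))) := by
    have := hgam1 p
    rwa [hT1gam p (hT2sub (hT'sub hp))] at this
  refine key hε1 (by exact_mod_cast hγ0 : (0:ℝ) < (γ0:ℝ)) p q
    (fun i => (enum n p hpn i : Set ℝ)) (fun i => (enum n q hqn i : Set ℝ))
    (fun i => (enum n p hpn i).2) (fun i => (enum n q hqn i).2)
    (enum_inj n p hpn) (enum_surj n p hpn)
    (fun i => Sfun p (enum n p hpn i : Set ℝ)) ?_ ?_ hplarge ?_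
  · intro i
    exact hSfun p _ (enum n p hpn i).2
  · intro i
    have heq := hT2tuple p (hT'sub hp) q (hT'sub hq) hpn hqn i
    show volume (((enum n q hqn i : Set ℝ)) \ RSet (Sfun p (enum n p hpn i : Set ℝ))
        ∪ (RSet (Sfun p (enum n p hpn i : Set ℝ)) \ (enum n q hqn i : Set ℝ)))
      ≤ ENNReal.ofReal ((γ0 : ℝ) / (2 * n + 2))
    rw [heq]
    exact hSfun q _ (enum n q hqn i).2
  · intro i
    obtain ⟨z, hz1, hz2⟩ := hT'comp i p hp q hq
    rw [gfun, dif_pos hpn] at hz1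
    rw [gfun, dif_pos hqn] at hz2
    exact ⟨z, hz1, hz2⟩
end
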